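/- arXiv:1508.02152 — 3 statements merged into one kernel-verified Lean document; each statement's English description precedes it below -/
import Mathlib

section
/- Let f be a homeomorphism of the open annulus 𝔸 isotopic to the identity, and let γ and γ' be two disjoint f-free essential Jordan curves in 𝔸. Suppose γ is attracting (f(γ) ⊆ U_γ^S) and γ' is repulsing (f⁻¹(γ') ⊆ U_{γ'}^S). Then the maximal f-invariant subset of the closed annulus delimited by γ and γ' is a connected set. -/
open Set Function Topology

noncomputable section

/-- The open annulus `𝔸 = 𝕋¹ × ℝ`. -/
abbrev OpenAnn := AddCircle (1 : ℝ) × ℝ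

/-- The universal covering `π : ℝ² → 𝔸`. -/
def projA : ℝ × ℝ → OpenAnn := fun p => ((p.1 : AddCircle (1 : ℝ)), p.2)

/-- The deck transformation `T(x,y) = (x+1, y)`. -/
def deckT : Equiv.Perm (ℝ × ℝ) where
  toFun p := (p.1 + 1, p.2)
  invFun p := (p.1 - 1, p.2)
  left_inv p := by simp
  right_inv p := by simp

/-- `f` is isotopic to the identity. -/
def IsotopicToIdA (f : OpenAnn → OpenAnn) : Prop :=
  ∃ H : ℝ × OpenAnn → OpenAnn, Continuous H ∧ (∀ z, H (0, z) = z) ∧ (∀ z, H (1, z) = f z) ∧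
    ∀ t : ℝ, IsHomeomorph fun z => H (t, z)

/-- The set `{ρ_n(z) : z ∈ K, fⁿ(z) ∈ K}`, viewed inside `ℝ̄ = EReal`. -/
def rhoPts (ftil : Equiv.Perm (ℝ × ℝ)) (n : ℕ) (K : Set OpenAnn) : Set EReal :=
  {x | ∃ zt : ℝ × ℝ, projA zt ∈ K ∧ projA ((ftil ^ n) zt) ∈ K ∧
    x = (((((ftil ^ n) zt).1 - zt.1) / n : ℝ) : EReal)}

/-- The rotation set `ρ_K(I)` of a set `K ⊆ 𝔸`. -/
def rhoK (ftil : Equiv.Perm (ℝ × ℝ)) (K : Set OpenAnn) : Set EReal :=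
  ⋂ (m : ℕ), ⋂ (_ : 1 ≤ m), closure (⋃ (n : ℕ), ⋃ (_ : m ≤ n), rhoPts ftil n K)

/-- The rotation set `ρ_ann(I)` of the open annulus. -/
def rhoAnn (ftil : Equiv.Perm (ℝ × ℝ)) : Set EReal :=
  closure (⋃ (K : Set OpenAnn), ⋃ (_ : IsCompact K), rhoK ftil K)

/-- The maximal `f`-invariant subset `Θ(E) = ⋂_{n ∈ ℤ} fⁿ(E)`. -/
def Theta (f : Equiv.Perm OpenAnn) (E : Set OpenAnn) : Set OpenAnn := ⋂ n : ℤ, (f ^ n) '' E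

/-- `γ` is a Jordan curve in the annulus. -/
def IsJordanCurve (γ : Set OpenAnn) : Prop :=
  ∃ e : AddCircle (1 : ℝ) → OpenAnn, Continuous e ∧ Injective e ∧ γ = range e

/-- A set is unbounded towards the upper end of the annulus. -/
def UnbAbove (C : Set OpenAnn) : Prop := ¬ BddAbove (Prod.snd '' C)

/-- A set is unbounded towards the lower end of the annulus. -/
def UnbBelow (C : Set OpenAnn) : Prop := ¬ BddBelow (Prod.snd '' C)

/-- `γ` is an essential Jordan curve: its complement has exactly two unbounded connected
components, the upper one `UN = U_γ^N` and the lower one `US = U_γ^S`. -/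
def IsEssential (γ UN US : Set OpenAnn) : Prop :=
  IsJordanCurve γ ∧
  (∃ x ∈ γᶜ, UN = connectedComponentIn γᶜ x) ∧
  (∃ x ∈ γᶜ, US = connectedComponentIn γᶜ x) ∧
  UnbAbove UN ∧ UnbBelow US ∧ UN ≠ US ∧
  ∀ C, (∃ x ∈ γᶜ, C = connectedComponentIn γᶜ x) → (UnbAbove C ∨ UnbBelow C) →
    C = UN ∨ C = US

namespace AnnAux


instance factOne : Fact ((0:ℝ) < 1) := ⟨one_pos⟩

instance : LocallyConnectedSpace (AddCircle (1:ℝ)) := by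
  rw [locallyConnectedSpace_iff_connected_subsets]
  intro x U hU
  obtain ⟨r, rfl⟩ := Quotient.exists_rep x
  have hcont : Continuous (QuotientAddGroup.mk : ℝ → AddCircle (1:ℝ)) :=
    QuotientAddGroup.continuous_mk
  have hpre : (QuotientAddGroup.mk : ℝ → AddCircle (1:ℝ)) ⁻¹' U ∈ 𝓝 r :=
    hcont.continuousAt.preimage_mem_nhds hU
  obtain ⟨ε, hε, hball⟩ := Metric.mem_nhds_iff.mp hpre
  refine ⟨(QuotientAddGroup.mk : ℝ → AddCircle (1:ℝ)) '' Ioo (r - ε) (r + ε), ?_, ?_, ?_⟩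
  · exact (QuotientAddGroup.isOpenMap_coe _ isOpen_Ioo).mem_nhds
      ⟨r, by constructor <;> [linarith; linarith], rfl⟩
  · exact isPreconnected_Ioo.image _ hcont.continuousOn
  · rw [image_subset_iff]
    intro y hy
    exact hball (by simpa [Real.ball_eq_Ioo] using hy)

instance : LocallyConnectedSpace OpenAnn := by
  rw [locallyConnectedSpace_iff_connected_subsets]
  rintro ⟨a, b⟩ U hU
  obtain ⟨u, hu, v, hv, huv⟩ := mem_nhds_prod_iff.mp hU
  obtain ⟨u', hu', hu'p, hu'sub⟩ := locallyConnectedSpace_iff_connected_subsets.mp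
    (inferInstance : LocallyConnectedSpace (AddCircle (1:ℝ))) a u hu
  obtain ⟨v', hv', hv'p, hv'sub⟩ := locallyConnectedSpace_iff_connected_subsets.mp
    (inferInstance : LocallyConnectedSpace ℝ) b v hv
  exact ⟨u' ×ˢ v', prod_mem_nhds hu' hv', hu'p.prod hv'p,
    (prod_mono hu'sub hv'sub).trans huv⟩

/-! ### Tails -/

def TN (c : ℝ) : Set OpenAnn := univ ×ˢ Ioi c
def TS (c : ℝ) : Set OpenAnn := univ ×ˢ Iio c

lemma mem_TN {c : ℝ} {z : OpenAnn} : z ∈ TN c ↔ c < z.2 := by simp [TN]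
lemma mem_TS {c : ℝ} {z : OpenAnn} : z ∈ TS c ↔ z.2 < c := by simp [TS]

lemma isOpen_TN (c : ℝ) : IsOpen (TN c) := isOpen_univ.prod isOpen_Ioi
lemma isOpen_TS (c : ℝ) : IsOpen (TS c) := isOpen_univ.prod isOpen_Iio

lemma preconnected_TN (c : ℝ) : IsPreconnected (TN c) :=
  isPreconnected_univ.prod isPreconnected_Ioi
lemma preconnected_TS (c : ℝ) : IsPreconnected (TS c) :=
  isPreconnected_univ.prod isPreconnected_Iio

lemma nonempty_TN (c : ℝ) : (TN c).Nonempty := ⟨(0, c+1), mem_TN.mpr (by show c < c+1; linarith)⟩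
lemma nonempty_TS (c : ℝ) : (TS c).Nonempty := ⟨(0, c-1), mem_TS.mpr (by show c-1 < c; linarith)⟩

lemma TN_mono {c d : ℝ} (h : c ≤ d) : TN d ⊆ TN c := fun z hz => mem_TN.mpr (lt_of_le_of_lt h (mem_TN.mp hz))
lemma TS_mono {c d : ℝ} (h : c ≤ d) : TS c ⊆ TS d := fun z hz => mem_TS.mpr (lt_of_lt_of_le (mem_TS.mp hz) h)

/-! ### Boundedness -/

def Bnd (S : Set OpenAnn) : Prop := ∃ c, ∀ z ∈ S, |z.2| ≤ c

lemma unbAbove_iff {S : Set OpenAnn} : UnbAbove S ↔ ∀ c, ∃ z ∈ S, c < z.2 := by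
  unfold UnbAbove
  rw [not_bddAbove_iff]
  constructor
  · intro h c
    obtain ⟨y, ⟨z, hz, rfl⟩, hy⟩ := h c
    exact ⟨z, hz, hy⟩
  · intro h c
    obtain ⟨z, hz, hy⟩ := h c
    exact ⟨z.2, ⟨z, hz, rfl⟩, hy⟩

lemma unbBelow_iff {S : Set OpenAnn} : UnbBelow S ↔ ∀ c, ∃ z ∈ S, z.2 < c := by
  unfold UnbBelow
  rw [not_bddBelow_iff]
  constructor
  · intro h c
    obtain ⟨y, ⟨z, hz, rfl⟩, hy⟩ := h c
    exact ⟨z, hz, hy⟩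
  · intro h c
    obtain ⟨z, hz, hy⟩ := h c
    exact ⟨z.2, ⟨z, hz, rfl⟩, hy⟩

lemma unbAbove_nonempty {S : Set OpenAnn} (h : UnbAbove S) : S.Nonempty := by
  obtain ⟨z, hz, -⟩ := unbAbove_iff.mp h 0; exact ⟨z, hz⟩

lemma unbBelow_nonempty {S : Set OpenAnn} (h : UnbBelow S) : S.Nonempty := by
  obtain ⟨z, hz, -⟩ := unbBelow_iff.mp h 0; exact ⟨z, hz⟩

lemma unbAbove_mono {S T : Set OpenAnn} (hST : S ⊆ T) (h : UnbAbove S) : UnbAbove T := by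
  rw [unbAbove_iff] at h ⊢
  exact fun c => (h c).imp fun z ⟨hz, hy⟩ => ⟨hST hz, hy⟩

lemma unbBelow_mono {S T : Set OpenAnn} (hST : S ⊆ T) (h : UnbBelow S) : UnbBelow T := by
  rw [unbBelow_iff] at h ⊢
  exact fun c => (h c).imp fun z ⟨hz, hy⟩ => ⟨hST hz, hy⟩

lemma unbAbove_TN (c : ℝ) : UnbAbove (TN c) := by
  rw [unbAbove_iff]
  intro d
  refine ⟨(0, max c d + 1), mem_TN.mpr ?_, ?_⟩
  · show c < max c d + 1; have := le_max_left c d; linarith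
  · show d < (0, max c d + 1).2; have := le_max_right c d
    show d < max c d + 1; linarith

lemma unbBelow_TS (c : ℝ) : UnbBelow (TS c) := by
  rw [unbBelow_iff]
  intro d
  refine ⟨(0, min c d - 1), mem_TS.mpr ?_, ?_⟩
  · show min c d - 1 < c; have := min_le_left c d; linarith
  · show (0, min c d - 1).2 < d; have := min_le_right c d
    show min c d - 1 < d; linarith

lemma Bnd.not_unbAbove {S : Set OpenAnn} (h : Bnd S) : ¬ UnbAbove S := by
  obtain ⟨c, hc⟩ := h
  intro hS
  obtain ⟨z, hz, hy⟩ := unbAbove_iff.mp hS c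
  have := hc z hz
  have := abs_le.mp this
  linarith [this.2]

lemma Bnd.not_unbBelow {S : Set OpenAnn} (h : Bnd S) : ¬ UnbBelow S := by
  obtain ⟨c, hc⟩ := h
  intro hS
  obtain ⟨z, hz, hy⟩ := unbBelow_iff.mp hS (-c)
  have := abs_le.mp (hc z hz)
  linarith [this.1]

lemma bnd_of_not_unb {S : Set OpenAnn} (ha : ¬ UnbAbove S) (hb : ¬ UnbBelow S) : Bnd S := by
  unfold UnbAbove at ha; unfold UnbBelow at hb
  rw [not_not] at ha hb
  obtain ⟨u, hu⟩ := ha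
  obtain ⟨l, hl⟩ := hb
  refine ⟨max |u| |l|, fun z hz => ?_⟩
  have h1 : z.2 ≤ u := hu ⟨z, hz, rfl⟩
  have h2 : l ≤ z.2 := hl ⟨z, hz, rfl⟩
  rw [abs_le]
  constructor
  · have := neg_abs_le l; have := le_max_right |u| |l|; linarith
  · have := le_abs_self u; have := le_max_left |u| |l|; linarith

lemma Bnd.mono {S T : Set OpenAnn} (hST : S ⊆ T) (h : Bnd T) : Bnd S := by
  obtain ⟨c, hc⟩ := h; exact ⟨c, fun z hz => hc z (hST hz)⟩

lemma bnd_of_isCompact {S : Set OpenAnn} (h : IsCompact S) : Bnd S := by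
  rcases S.eq_empty_or_nonempty with rfl | hne
  · exact ⟨0, by simp⟩
  have himg : IsCompact (Prod.snd '' S) := h.image continuous_snd
  apply bnd_of_not_unb
  · unfold UnbAbove; rw [not_not]; exact himg.bddAbove
  · unfold UnbBelow; rw [not_not]; exact himg.bddBelow

lemma Bnd.closure {S : Set OpenAnn} (h : Bnd S) : Bnd (closure S) := by
  obtain ⟨c, hc⟩ := h
  refine ⟨c, fun z hz => ?_⟩
  have hsub : S ⊆ univ ×ˢ Icc (-c) c := by
    intro w hw
    simp only [mem_prod, mem_univ, mem_Icc, true_and]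
    exact abs_le.mp (hc w hw)
  have hcl : IsClosed ((univ : Set (AddCircle (1:ℝ))) ×ˢ Icc (-c) c) :=
    isClosed_univ.prod isClosed_Icc
  have := closure_minimal hsub hcl hz
  simp only [mem_prod, mem_univ, mem_Icc, true_and] at this
  exact abs_le.mpr this

lemma isCompact_of_bnd_closed {S : Set OpenAnn} (hb : Bnd S) (hc : IsClosed S) :
    IsCompact S := by
  obtain ⟨c, hbc⟩ := hb
  have hKc : IsCompact ((univ : Set (AddCircle (1:ℝ))) ×ˢ Icc (-c) c) :=
    isCompact_univ.prod isCompact_Icc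
  refine hKc.of_isClosed_subset hc fun z hz => ?_
  simp only [mem_prod, mem_univ, mem_Icc, true_and]
  exact abs_le.mp (hbc z hz)




/-! ### Components of the complement of a closed set -/

def IsCompIn (K C : Set OpenAnn) : Prop := ∃ x ∈ Kᶜ, C = connectedComponentIn Kᶜ x

variable {K : Set OpenAnn}

lemma IsCompIn.isOpen (hK : IsClosed K) {C : Set OpenAnn} (hC : IsCompIn K C) : IsOpen C := by
  obtain ⟨x, -, rfl⟩ := hC
  exact hK.isOpen_compl.connectedComponentIn

lemma IsCompIn.preconnected {C : Set OpenAnn} (hC : IsCompIn K C) : IsPreconnected C := by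
  obtain ⟨x, -, rfl⟩ := hC
  exact isPreconnected_connectedComponentIn

lemma IsCompIn.subset_compl {C : Set OpenAnn} (hC : IsCompIn K C) : C ⊆ Kᶜ := by
  obtain ⟨x, -, rfl⟩ := hC
  exact connectedComponentIn_subset _ _

lemma IsCompIn.eq_of_mem {C : Set OpenAnn} (hC : IsCompIn K C) {z : OpenAnn} (hz : z ∈ C) :
    C = connectedComponentIn Kᶜ z := by
  obtain ⟨x, -, rfl⟩ := hC
  exact connectedComponentIn_eq hz

lemma isCompIn_of_mem {z : OpenAnn} (hz : z ∈ Kᶜ) : IsCompIn K (connectedComponentIn Kᶜ z) :=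
  ⟨z, hz, rfl⟩

lemma IsCompIn.eq_or_disjoint {C D : Set OpenAnn} (hC : IsCompIn K C) (hD : IsCompIn K D) :
    C = D ∨ C ∩ D = ∅ := by
  rcases (C ∩ D).eq_empty_or_nonempty with h | ⟨z, hzC, hzD⟩
  · exact Or.inr h
  · exact Or.inl ((hC.eq_of_mem hzC).trans (hD.eq_of_mem hzD).symm)

lemma preconn_subset_comp {S C : Set OpenAnn} (hS : IsPreconnected S) (hSK : S ⊆ Kᶜ)
    (hC : IsCompIn K C) {z : OpenAnn} (hz : z ∈ S ∩ C) : S ⊆ C := by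
  rw [hC.eq_of_mem hz.2]
  exact hS.subset_connectedComponentIn hz.1 hSK

lemma IsCompIn.closure_subset (hK : IsClosed K) {C : Set OpenAnn} (hC : IsCompIn K C) :
    closure C ⊆ C ∪ K := by
  intro y hy
  by_cases hyK : y ∈ K
  · exact Or.inr hyK
  · left
    have hyc : y ∈ Kᶜ := hyK
    have hDopen : IsOpen (connectedComponentIn Kᶜ y) := hK.isOpen_compl.connectedComponentIn
    have hyD : y ∈ connectedComponentIn Kᶜ y := mem_connectedComponentIn hyc
    obtain ⟨w, hwD, hwC⟩ := mem_closure_iff.mp hy _ hDopen hyD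
    have h1 : connectedComponentIn Kᶜ y = connectedComponentIn Kᶜ w := connectedComponentIn_eq hwD
    have h2 : C = connectedComponentIn Kᶜ w := hC.eq_of_mem hwC
    rw [h2, ← h1]
    exact hyD

lemma IsCompIn.frontier_subset (hK : IsClosed K) {C : Set OpenAnn} (hC : IsCompIn K C) :
    frontier C ⊆ K := by
  intro y hy
  rw [frontier, (hC.isOpen hK).interior_eq] at hy
  rcases hC.closure_subset hK hy.1 with h | h
  · exact absurd h hy.2
  · exact h

lemma frontier_nonempty_of_ne {C : Set OpenAnn} (hCo : IsOpen C) (hne : C.Nonempty)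
    (hnuniv : C ≠ univ) : (frontier C).Nonempty := by
  by_contra h
  rw [not_nonempty_iff_eq_empty] at h
  have hfz : frontier C = closure C \ C := by rw [frontier, hCo.interior_eq]
  have hclopen : IsClopen C := by
    constructor
    · have hsub : closure C ⊆ C := by
        intro z hz
        by_contra hzC
        have hzf : z ∈ frontier C := by rw [hfz]; exact ⟨hz, hzC⟩
        rw [h] at hzf
        exact hzf
      exact isClosed_of_closure_subset hsub
    · exact hCo
  rcases isClopen_iff.mp hclopen with h' | h'
  · exact absurd h' (nonempty_iff_ne_empty.mp hne)
  · exact hnuniv h'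

/-- A tail above the bounded closed set `K` is contained in any component unbounded above. -/
lemma TN_subset_comp {C : Set OpenAnn} (hC : IsCompIn K C) (hCu : UnbAbove C)
    {c : ℝ} (hc : ∀ z ∈ K, z.2 < c) : TN c ⊆ C := by
  have hTK : TN c ⊆ Kᶜ := fun z hz hzK => absurd (hc z hzK) (not_lt.mpr (le_of_lt (mem_TN.mp hz)))
  obtain ⟨z, hzC, hzc⟩ := unbAbove_iff.mp hCu c
  exact preconn_subset_comp (preconnected_TN c) hTK hC ⟨mem_TN.mpr hzc, hzC⟩

lemma TS_subset_comp {C : Set OpenAnn} (hC : IsCompIn K C) (hCu : UnbBelow C)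
    {c : ℝ} (hc : ∀ z ∈ K, c < z.2) : TS c ⊆ C := by
  have hTK : TS c ⊆ Kᶜ := fun z hz hzK => absurd (hc z hzK) (not_lt.mpr (le_of_lt (mem_TS.mp hz)))
  obtain ⟨z, hzC, hzc⟩ := unbBelow_iff.mp hCu c
  exact preconn_subset_comp (preconnected_TS c) hTK hC ⟨mem_TS.mpr hzc, hzC⟩

/-- Uniqueness of the component unbounded above. -/
lemma comp_unbAbove_unique (hKb : Bnd K) {C D : Set OpenAnn} (hC : IsCompIn K C)
    (hD : IsCompIn K D) (hCu : UnbAbove C) (hDu : UnbAbove D) : C = D := by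
  obtain ⟨c, hc⟩ := hKb
  have hc' : ∀ z ∈ K, z.2 < c + 1 := fun z hz => by
    have := abs_le.mp (hc z hz); linarith [this.2]
  rcases hC.eq_or_disjoint hD with h | h
  · exact h
  · exfalso
    obtain ⟨z, hz⟩ := nonempty_TN (c+1)
    have h1 : z ∈ C := TN_subset_comp hC hCu hc' hz
    have h2 : z ∈ D := TN_subset_comp hD hDu hc' hz
    exact absurd (h ▸ (⟨h1, h2⟩ : z ∈ C ∩ D)) (notMem_empty z)

lemma comp_unbBelow_unique (hKb : Bnd K) {C D : Set OpenAnn} (hC : IsCompIn K C)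
    (hD : IsCompIn K D) (hCu : UnbBelow C) (hDu : UnbBelow D) : C = D := by
  obtain ⟨c, hc⟩ := hKb
  have hc' : ∀ z ∈ K, -(c+1) < z.2 := fun z hz => by
    have := abs_le.mp (hc z hz); linarith [this.1]
  rcases hC.eq_or_disjoint hD with h | h
  · exact h
  · exfalso
    obtain ⟨z, hz⟩ := nonempty_TS (-(c+1))
    have h1 : z ∈ C := TS_subset_comp hC hCu hc' hz
    have h2 : z ∈ D := TS_subset_comp hD hDu hc' hz
    exact absurd (h ▸ (⟨h1, h2⟩ : z ∈ C ∩ D)) (notMem_empty z)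

/-- A nonempty preconnected unbounded-above set disjoint from `K` lies in the unique
unbounded-above component. -/
lemma subset_unbAbove_comp (hKb : Bnd K) {S C : Set OpenAnn} (hS : IsPreconnected S)
    (hSK : S ⊆ Kᶜ) (hSu : UnbAbove S) (hC : IsCompIn K C) (hCu : UnbAbove C) : S ⊆ C := by
  obtain ⟨z, hz⟩ := unbAbove_nonempty hSu
  have hzK : z ∈ Kᶜ := hSK hz
  set D := connectedComponentIn Kᶜ z with hD
  have hDcomp : IsCompIn K D := isCompIn_of_mem hzK
  have hSD : S ⊆ D := hS.subset_connectedComponentIn hz hSK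
  have hDu : UnbAbove D := unbAbove_mono hSD hSu
  rw [comp_unbAbove_unique hKb hDcomp hC hDu hCu] at hSD
  exact hSD

lemma subset_unbBelow_comp (hKb : Bnd K) {S C : Set OpenAnn} (hS : IsPreconnected S)
    (hSK : S ⊆ Kᶜ) (hSu : UnbBelow S) (hC : IsCompIn K C) (hCu : UnbBelow C) : S ⊆ C := by
  obtain ⟨z, hz⟩ := unbBelow_nonempty hSu
  have hzK : z ∈ Kᶜ := hSK hz
  set D := connectedComponentIn Kᶜ z with hD
  have hDcomp : IsCompIn K D := isCompIn_of_mem hzK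
  have hSD : S ⊆ D := hS.subset_connectedComponentIn hz hSK
  have hDu : UnbBelow D := unbBelow_mono hSD hSu
  rw [comp_unbBelow_unique hKb hDcomp hC hDu hCu] at hSD
  exact hSD

/-- "Newman" lemma: the complement of a component of the complement of a closed preconnected
nonempty set is preconnected. -/
lemma preconnected_compl_comp (hK : IsClosed K) (hKp : IsPreconnected K) (hKn : K.Nonempty)
    {U : Set OpenAnn} (hU : IsCompIn K U) : IsPreconnected Uᶜ := by
  have hUo : IsOpen U := hU.isOpen hK
  rw [isPreconnected_iff_subset_of_fully_disjoint_closed hUo.isClosed_compl]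
  intro u v hu hv hcover hdisj
  have hKU : K ⊆ Uᶜ := fun z hz hzU => hU.subset_compl hzU hz
  have hKuv : K ⊆ u ∨ K ⊆ v := by
    rcases isPreconnected_iff_subset_of_disjoint_closed.mp hKp u v hu hv (hKU.trans hcover)
      (by rw [disjoint_iff_inter_eq_empty] at hdisj; rw [hdisj]; exact inter_empty K) with h | h
    · exact Or.inl h
    · exact Or.inr h
  -- symmetric claim
  have main : ∀ u' v' : Set OpenAnn, IsClosed u' → IsClosed v' → Uᶜ ⊆ u' ∪ v' →
      Disjoint u' v' → K ⊆ u' → Uᶜ ⊆ u' := by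
    intro u' v' hu' hv' hcover' hdisj' hKu'
    have hQ : Uᶜ ∩ v' = (closure U)ᶜ ∩ u'ᶜ := by
      apply Subset.antisymm
      · rintro x ⟨hxU, hxv⟩
        have hxu : x ∉ u' := fun hxu => hdisj'.ne_of_mem hxu hxv rfl
        refine ⟨fun hxcl => ?_, hxu⟩
        rcases hU.closure_subset hK hxcl with h | h
        · exact hxU h
        · exact hxu (hKu' h)
      · rintro x ⟨hxcl, hxu⟩
        have hxU : x ∈ Uᶜ := fun hxU => hxcl (subset_closure hxU)
        rcases hcover' hxU with h | h
        · exact absurd h hxu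
        · exact ⟨hxU, h⟩
    have hQopen : IsOpen (Uᶜ ∩ v') := by rw [hQ]; exact isClosed_closure.isOpen_compl.inter hu'.isOpen_compl
    have hQclosed : IsClosed (Uᶜ ∩ v') := hUo.isClosed_compl.inter hv'
    rcases isClopen_iff.mp ⟨hQclosed, hQopen⟩ with h | h
    · intro x hxU
      rcases hcover' hxU with hx | hx
      · exact hx
      · exact absurd (h ▸ (⟨hxU, hx⟩ : x ∈ Uᶜ ∩ v')) (notMem_empty x)
    · exfalso
      obtain ⟨z, hz⟩ := hKn
      have : z ∈ Uᶜ ∩ v' := h ▸ mem_univ z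
      exact hdisj'.ne_of_mem (hKu' hz) this.2 rfl
  rcases hKuv with h | h
  · exact Or.inl (main u v hu hv hcover hdisj h)
  · exact Or.inr (main v u hv hu (by rwa [union_comm]) hdisj.symm h)

/-- Decreasing intersection of compact preconnected sets is preconnected. -/
lemma preconnected_iInter_of_anti {X : Type*} [TopologicalSpace X] [T2Space X]
    {K : ℕ → Set X} (hc : ∀ n, IsCompact (K n)) (hp : ∀ n, IsPreconnected (K n))
    (ha : ∀ n, K (n+1) ⊆ K n) : IsPreconnected (⋂ n, K n) := by
  have hanti : Antitone K := antitone_nat_of_succ_le ha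
  set Θ := ⋂ n, K n with hΘ
  have hΘc : IsCompact Θ := (hc 0).of_isClosed_subset
    (isClosed_iInter fun n => (hc n).isClosed) (iInter_subset K 0)
  intro u v hu hv hcover ⟨a, haΘ, hau⟩ ⟨b, hbΘ, hbv⟩
  by_contra hemp
  rw [not_nonempty_iff_eq_empty] at hemp
  set A := Θ ∩ vᶜ with hA
  set B := Θ ∩ uᶜ with hB
  have haA : a ∈ A := ⟨haΘ, fun hav =>
    absurd (hemp ▸ (⟨haΘ, hau, hav⟩ : a ∈ Θ ∩ (u ∩ v))) (notMem_empty a)⟩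
  have hbB : b ∈ B := ⟨hbΘ, fun hbu =>
    absurd (hemp ▸ (⟨hbΘ, hbu, hbv⟩ : b ∈ Θ ∩ (u ∩ v))) (notMem_empty b)⟩
  have hAc : IsCompact A := hΘc.inter_right hv.isClosed_compl
  have hBc : IsCompact B := hΘc.inter_right hu.isClosed_compl
  have hABdisj : Disjoint A B := by
    rw [disjoint_left]
    rintro z ⟨hzΘ, hzv⟩ ⟨-, hzu⟩
    rcases hcover hzΘ with h | h
    · exact hzu h
    · exact hzv h
  obtain ⟨U, V, hUo, hVo, hAU, hBV, hUV⟩ :=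
    SeparatedNhds.of_isCompact_isCompact hAc hBc hABdisj
  have hΘUV : Θ ⊆ U ∪ V := by
    intro z hz
    by_cases hzv : z ∈ v
    · right
      refine hBV ⟨hz, fun hzu => ?_⟩
      exact absurd (hemp ▸ (⟨hz, hzu, hzv⟩ : z ∈ Θ ∩ (u ∩ v))) (notMem_empty z)
    · left
      exact hAU ⟨hz, hzv⟩
  have hN : ∃ N, K N ⊆ U ∪ V := by
    by_contra hno
    push_neg at hno
    have hLn : ∀ n, (K n ∩ (U ∪ V)ᶜ).Nonempty := by
      intro n
      obtain ⟨z, hz, hz'⟩ := not_subset.mp (hno n)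
      exact ⟨z, hz, hz'⟩
    have hdir : Directed (fun x1 x2 : Set X => x1 ⊇ x2) (fun n => K n ∩ (U ∪ V)ᶜ) := by
      intro m n
      refine ⟨max m n, inter_subset_inter_left _ (hanti (le_max_left m n)),
        inter_subset_inter_left _ (hanti (le_max_right m n))⟩
    have hne := IsCompact.nonempty_iInter_of_directed_nonempty_isCompact_isClosed _ hdir hLn
      (fun n => (hc n).inter_right (hUo.union hVo).isClosed_compl)
      (fun n => (hc n).isClosed.inter (hUo.union hVo).isClosed_compl)
    obtain ⟨z, hz⟩ := hne
    rw [← iInter_inter] at hz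
    exact hz.2 (hΘUV hz.1)
  obtain ⟨N, hKN⟩ := hN
  have hΘK : Θ ⊆ K N := iInter_subset K N
  obtain ⟨x, -, hxU, hxV⟩ := hp N U V hUo hVo hKN ⟨a, hΘK haΘ, hAU haA⟩ ⟨b, hΘK hbΘ, hBV hbB⟩
  exact hUV.ne_of_mem hxU hxV rfl



/-- The closed region between the two curves is preconnected. -/
lemma preconnected_between {γ γ' UN US' : Set OpenAnn}
    (hγcl : IsClosed γ) (hγp : IsPreconnected γ) (hγn : γ.Nonempty)
    (hγ'cl : IsClosed γ') (hγ'p : IsPreconnected γ') (hγ'n : γ'.Nonempty)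
    (hUNo : IsOpen UN) (hUS'o : IsOpen US')
    (hclUN : closure UN ⊆ UN ∪ γ) (hclUS' : closure US' ⊆ US' ∪ γ')
    (hUNUS' : UN ∩ US' = ∅) (hγUN : γ ∩ UN = ∅) (hγUS' : γ ∩ US' = ∅)
    (hγ'UN : γ' ∩ UN = ∅) (hγ'US' : γ' ∩ US' = ∅) (hγγ' : γ ∩ γ' = ∅) :
    IsPreconnected (UN ∪ US')ᶜ := by
  set B := (UN ∪ US')ᶜ with hBdef
  have hBcl : IsClosed B := (hUNo.union hUS'o).isClosed_compl
  have hUNγcl : IsClosed (UN ∪ γ) := by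
    apply isClosed_of_closure_subset
    rw [closure_union, hγcl.closure_eq]
    exact union_subset hclUN subset_union_right
  have hUS'γ'cl : IsClosed (US' ∪ γ') := by
    apply isClosed_of_closure_subset
    rw [closure_union, hγ'cl.closure_eq]
    exact union_subset hclUS' subset_union_right
  have hγB : γ ⊆ B := by
    intro z hz
    rintro (h | h)
    · exact absurd (hγUN ▸ (⟨hz, h⟩ : z ∈ γ ∩ UN)) (notMem_empty z)
    · exact absurd (hγUS' ▸ (⟨hz, h⟩ : z ∈ γ ∩ US')) (notMem_empty z)
  have hγ'B : γ' ⊆ B := by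
    intro z hz
    rintro (h | h)
    · exact absurd (hγ'UN ▸ (⟨hz, h⟩ : z ∈ γ' ∩ UN)) (notMem_empty z)
    · exact absurd (hγ'US' ▸ (⟨hz, h⟩ : z ∈ γ' ∩ US')) (notMem_empty z)
  rw [isPreconnected_iff_subset_of_fully_disjoint_closed hBcl]
  intro u v hu hv hcover hdisj
  -- same-side case
  have hsame : ∀ u' v' : Set OpenAnn, IsClosed u' → IsClosed v' → B ⊆ u' ∪ v' →
      Disjoint u' v' → γ ⊆ u' → γ' ⊆ u' → B ⊆ u' := by
    intro u' v' hu' hv' hcover' hdisj' hγu hγ'u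
    have hQr : B ∩ v' = (UN ∪ γ)ᶜ ∩ ((US' ∪ γ')ᶜ ∩ u'ᶜ) := by
      apply Subset.antisymm
      · rintro x ⟨hxB, hxv⟩
        have hxu : x ∉ u' := fun hxu => hdisj'.ne_of_mem hxu hxv rfl
        have hxUN : x ∉ UN := fun h => hxB (Or.inl h)
        have hxUS' : x ∉ US' := fun h => hxB (Or.inr h)
        have hxγ : x ∉ γ := fun h => hxu (hγu h)
        have hxγ' : x ∉ γ' := fun h => hxu (hγ'u h)
        exact ⟨fun h => h.elim hxUN hxγ, fun h => h.elim hxUS' hxγ', hxu⟩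
      · rintro x ⟨hx1, hx2, hxu⟩
        have hxB : x ∈ B := fun h => h.elim (fun h' => hx1 (Or.inl h')) (fun h' => hx2 (Or.inl h'))
        rcases hcover' hxB with h | h
        · exact absurd h hxu
        · exact ⟨hxB, h⟩
    have hQopen : IsOpen (B ∩ v') := by
      rw [hQr]
      exact hUNγcl.isOpen_compl.inter (hUS'γ'cl.isOpen_compl.inter hu'.isOpen_compl)
    have hQclosed : IsClosed (B ∩ v') := hBcl.inter hv'
    rcases isClopen_iff.mp ⟨hQclosed, hQopen⟩ with h | h
    · intro x hxB
      rcases hcover' hxB with hx | hx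
      · exact hx
      · exact absurd (h ▸ (⟨hxB, hx⟩ : x ∈ B ∩ v')) (notMem_empty x)
    · exfalso
      obtain ⟨z, hz⟩ := hγn
      have hzQ : z ∈ B ∩ v' := h ▸ mem_univ z
      exact hdisj'.ne_of_mem (hγu hz) hzQ.2 rfl
  -- mixed case is impossible
  have hmix : ∀ u' v' : Set OpenAnn, IsClosed u' → IsClosed v' → B ⊆ u' ∪ v' →
      Disjoint u' v' → γ ⊆ u' → γ' ⊆ v' → False := by
    intro u' v' hu' hv' hcover' hdisj' hγu hγ'v
    set S := (UN ∪ γ) ∪ (B ∩ u') with hSdef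
    set T := (US' ∪ γ') ∪ (B ∩ v') with hTdef
    have hSTcover : ∀ z : OpenAnn, z ∈ S ∨ z ∈ T := by
      intro z
      by_cases hUN : z ∈ UN
      · exact Or.inl (Or.inl (Or.inl hUN))
      by_cases hUS' : z ∈ US'
      · exact Or.inr (Or.inl (Or.inl hUS'))
      have hzB : z ∈ B := fun h => h.elim hUN hUS'
      rcases hcover' hzB with h | h
      · exact Or.inl (Or.inr ⟨hzB, h⟩)
      · exact Or.inr (Or.inr ⟨hzB, h⟩)
    have hSTdisj : ∀ z : OpenAnn, z ∈ S → z ∈ T → False := by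
      rintro z (hS | hS) (hT | hT)
      · rcases hS with h1 | h1 <;> rcases hT with h2 | h2
        · exact absurd (hUNUS' ▸ (⟨h1, h2⟩ : z ∈ UN ∩ US')) (notMem_empty z)
        · exact absurd (hγ'UN ▸ (⟨h2, h1⟩ : z ∈ γ' ∩ UN)) (notMem_empty z)
        · exact absurd (hγUS' ▸ (⟨h1, h2⟩ : z ∈ γ ∩ US')) (notMem_empty z)
        · exact absurd (hγγ' ▸ (⟨h1, h2⟩ : z ∈ γ ∩ γ')) (notMem_empty z)
      · rcases hS with h1 | h1
        · exact hT.1 (Or.inl h1)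
        · exact hdisj'.ne_of_mem (hγu h1) hT.2 rfl
      · rcases hT with h2 | h2
        · exact hS.1 (Or.inr h2)
        · exact hdisj'.ne_of_mem hS.2 (hγ'v h2) rfl
      · exact hdisj'.ne_of_mem hS.2 hT.2 rfl
    have hScl : IsClosed S := hUNγcl.union (hBcl.inter hu')
    have hTcl : IsClosed T := hUS'γ'cl.union (hBcl.inter hv')
    have hSeq : S = Tᶜ := by
      ext z
      constructor
      · exact fun hz hzT => hSTdisj z hz hzT
      · intro hz
        rcases hSTcover z with h | h
        · exact h
        · exact absurd h hz
    have hSclopen : IsClopen S := ⟨hScl, hSeq ▸ hTcl.isOpen_compl⟩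
    rcases isClopen_iff.mp hSclopen with h | h
    · obtain ⟨z, hz⟩ := hγn
      exact absurd (h ▸ (Or.inl (Or.inr hz) : z ∈ S)) (notMem_empty z)
    · obtain ⟨z, hz⟩ := hγ'n
      exact hSTdisj z (h ▸ mem_univ z) (Or.inl (Or.inr hz))
  have hγuv : γ ⊆ u ∨ γ ⊆ v := by
    apply isPreconnected_iff_subset_of_disjoint_closed.mp hγp u v hu hv (hγB.trans hcover)
    rw [disjoint_iff_inter_eq_empty] at hdisj
    rw [hdisj, inter_empty]
  have hγ'uv : γ' ⊆ u ∨ γ' ⊆ v := by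
    apply isPreconnected_iff_subset_of_disjoint_closed.mp hγ'p u v hu hv (hγ'B.trans hcover)
    rw [disjoint_iff_inter_eq_empty] at hdisj
    rw [hdisj, inter_empty]
  rcases hγuv with hγu | hγv
  · rcases hγ'uv with hγ'u | hγ'v
    · exact Or.inl (hsame u v hu hv hcover hdisj hγu hγ'u)
    · exact (hmix u v hu hv hcover hdisj hγu hγ'v).elim
  · rcases hγ'uv with hγ'u | hγ'v
    · exact (hmix v u hv hu (by rwa [union_comm]) hdisj.symm hγv hγ'u).elim
    · exact Or.inr (hsame v u hv hu (by rwa [union_comm]) hdisj.symm hγv hγ'v)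



/-! ### End behaviour of homeomorphisms of the annulus -/

def UpQ (g : OpenAnn → OpenAnn) : Prop := ∀ M, ∃ N, ∀ z ∈ TN N, g z ∈ TN M
def DnQ (g : OpenAnn → OpenAnn) : Prop := ∀ M, ∃ N, ∀ z ∈ TS N, g z ∈ TS M

lemma UpQ.unbAbove {g : OpenAnn → OpenAnn} (hg : UpQ g) {S : Set OpenAnn}
    (hS : UnbAbove S) : UnbAbove (g '' S) := by
  rw [unbAbove_iff]
  intro M
  obtain ⟨N, hN⟩ := hg M
  obtain ⟨z, hzS, hz⟩ := unbAbove_iff.mp hS N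
  exact ⟨g z, mem_image_of_mem g hzS, mem_TN.mp (hN z (mem_TN.mpr hz))⟩

lemma DnQ.unbBelow {g : OpenAnn → OpenAnn} (hg : DnQ g) {S : Set OpenAnn}
    (hS : UnbBelow S) : UnbBelow (g '' S) := by
  rw [unbBelow_iff]
  intro M
  obtain ⟨N, hN⟩ := hg M
  obtain ⟨z, hzS, hz⟩ := unbBelow_iff.mp hS N
  exact ⟨g z, mem_image_of_mem g hzS, mem_TS.mp (hN z (mem_TS.mpr hz))⟩

/-- Dichotomy: a homeomorphism sends a sufficiently high tail either high or low. -/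
lemma dichotN (G : OpenAnn ≃ₜ OpenAnn) {M : ℝ} (hM : 0 < M) :
    ∃ N, 0 < N ∧ ((∀ z ∈ TN N, G z ∈ TN M) ∨ (∀ z ∈ TN N, G z ∈ TS (-M))) := by
  have hband : IsCompact ((univ : Set (AddCircle (1:ℝ))) ×ˢ Icc (-M) M) :=
    isCompact_univ.prod isCompact_Icc
  obtain ⟨c, hc⟩ := bnd_of_isCompact (hband.image G.symm.continuous)
  refine ⟨max c 0 + 1, by positivity, ?_⟩
  have hout : ∀ z ∈ TN (max c 0 + 1), G z ∈ TN M ∪ TS (-M) := by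
    intro z hz
    have hz2 : max c 0 + 1 < z.2 := mem_TN.mp hz
    have hnot : G z ∉ (univ : Set (AddCircle (1:ℝ))) ×ˢ Icc (-M) M := by
      intro hmem
      have hzim : z ∈ ⇑G.symm '' ((univ : Set (AddCircle (1:ℝ))) ×ˢ Icc (-M) M) :=
        ⟨G z, hmem, G.symm_apply_apply z⟩
      have h1 := abs_le.mp (hc z hzim)
      have hcc := le_max_left c 0
      linarith [h1.2]
    simp only [mem_prod, mem_univ, mem_Icc, true_and, not_and_or, not_le] at hnot
    rcases hnot with h | h
    · exact Or.inr (mem_TS.mpr h)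
    · exact Or.inl (mem_TN.mpr h)
  have hpre : IsPreconnected (⇑G '' TN (max c 0 + 1)) :=
    (preconnected_TN _).image _ G.continuous.continuousOn
  have hsub : ⇑G '' TN (max c 0 + 1) ⊆ TN M ∪ TS (-M) := by
    rintro - ⟨z, hz, rfl⟩
    exact hout z hz
  have hdisj : Disjoint (TN M) (TS (-M)) := by
    rw [disjoint_left]
    intro z hz1 hz2
    have := mem_TN.mp hz1
    have := mem_TS.mp hz2
    linarith
  rcases hpre.subset_or_subset (isOpen_TN M) (isOpen_TS (-M)) hdisj hsub with h | h
  · exact Or.inl fun z hz => h (mem_image_of_mem _ hz)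
  · exact Or.inr fun z hz => h (mem_image_of_mem _ hz)

lemma dichotS (G : OpenAnn ≃ₜ OpenAnn) {M : ℝ} (hM : M < 0) :
    ∃ N, N < 0 ∧ ((∀ z ∈ TS N, G z ∈ TS M) ∨ (∀ z ∈ TS N, G z ∈ TN (-M))) := by
  have hband : IsCompact ((univ : Set (AddCircle (1:ℝ))) ×ˢ Icc M (-M)) :=
    isCompact_univ.prod isCompact_Icc
  obtain ⟨c, hc⟩ := bnd_of_isCompact (hband.image G.symm.continuous)
  have hpos : (0:ℝ) < max c 0 + 1 := by positivity
  refine ⟨-(max c 0 + 1), by linarith, ?_⟩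
  have hout : ∀ z ∈ TS (-(max c 0 + 1)), G z ∈ TS M ∪ TN (-M) := by
    intro z hz
    have hz2 : z.2 < -(max c 0 + 1) := mem_TS.mp hz
    have hnot : G z ∉ (univ : Set (AddCircle (1:ℝ))) ×ˢ Icc M (-M) := by
      intro hmem
      have hzim : z ∈ ⇑G.symm '' ((univ : Set (AddCircle (1:ℝ))) ×ˢ Icc M (-M)) :=
        ⟨G z, hmem, G.symm_apply_apply z⟩
      have h1 := abs_le.mp (hc z hzim)
      have hcc := le_max_left c 0
      linarith [h1.1]
    simp only [mem_prod, mem_univ, mem_Icc, true_and, not_and_or, not_le] at hnot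
    rcases hnot with h | h
    · exact Or.inl (mem_TS.mpr h)
    · exact Or.inr (mem_TN.mpr h)
  have hpre : IsPreconnected (⇑G '' TS (-(max c 0 + 1))) :=
    (preconnected_TS _).image _ G.continuous.continuousOn
  have hsub : ⇑G '' TS (-(max c 0 + 1)) ⊆ TS M ∪ TN (-M) := by
    rintro - ⟨z, hz, rfl⟩
    exact hout z hz
  have hdisj : Disjoint (TS M) (TN (-M)) := by
    rw [disjoint_left]
    intro z hz1 hz2
    have := mem_TS.mp hz1
    have := mem_TN.mp hz2
    linarith
  rcases hpre.subset_or_subset (isOpen_TS M) (isOpen_TN (-M)) hdisj hsub with h | h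
  · exact Or.inl fun z hz => h (mem_image_of_mem _ hz)
  · exact Or.inr fun z hz => h (mem_image_of_mem _ hz)

/-- From the isotopy to the identity: `f` reaches the high tail from above the core and
the low tail from below the core. -/
lemma isotopy_tails (f : Equiv.Perm OpenAnn) (hfI : IsotopicToIdA ⇑f) :
    ∃ R, 0 < R ∧ (∀ z ∈ TN R, ∃ w, 0 < w.2 ∧ f w = z) ∧
      (∀ z ∈ TS (-R), ∃ w, w.2 < 0 ∧ f w = z) := by
  obtain ⟨H, Hc, H0, H1, Hh⟩ := hfI
  have hcore : IsCompact (H '' ((Icc (0:ℝ) 1) ×ˢ ((univ : Set (AddCircle (1:ℝ))) ×ˢ {(0:ℝ)}))) :=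
    (isCompact_Icc.prod (isCompact_univ.prod isCompact_singleton)).image Hc
  obtain ⟨c, hc⟩ := bnd_of_isCompact hcore
  set R := max c 0 + 1 with hRdef
  have hR0 : 0 < R := by positivity
  have hcR : c < R := by have := le_max_left c 0; simp only [hRdef]; linarith
  have hcoreim : ∀ t ∈ Icc (0:ℝ) 1, ∀ w : OpenAnn, w.2 = 0 → |(H (t, w)).2| ≤ c := by
    intro t ht w hw
    exact hc _ ⟨(t, w), ⟨ht, ⟨mem_univ _, hw⟩⟩, rfl⟩
  -- dichotomy for each t ∈ [0,1]
  have hdich : ∀ t ∈ Icc (0:ℝ) 1,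
      (∀ z ∈ TN R, ∃ w, 0 < w.2 ∧ H (t, w) = z) ∨
      (∀ z ∈ TN R, ∃ w, w.2 < 0 ∧ H (t, w) = z) := by
    intro t ht
    have hbij := (Hh t).bijective
    have hopen := (Hh t).isOpenMap
    have h1 : TN R ⊆ ((fun z => H (t, z)) '' TN 0) ∪ ((fun z => H (t, z)) '' TS 0) := by
      intro z hz
      obtain ⟨w, hw⟩ := hbij.2 z
      rcases lt_trichotomy w.2 0 with h | h | h
      · exact Or.inr ⟨w, mem_TS.mpr h, hw⟩
      · exfalso
        have hw' : H (t, w) = z := hw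
        have h2 := abs_le.mp (hcoreim t ht w h)
        rw [hw'] at h2
        have h3 := mem_TN.mp hz
        linarith [h2.2]
      · exact Or.inl ⟨w, mem_TN.mpr h, hw⟩
    have hdisj : Disjoint ((fun z => H (t, z)) '' TN 0) ((fun z => H (t, z)) '' TS 0) := by
      rw [disjoint_left]
      rintro - ⟨w, hw, rfl⟩ ⟨w', hw', heq⟩
      have hww : w' = w := hbij.1 heq
      rw [hww] at hw'
      have := mem_TN.mp hw
      have := mem_TS.mp hw'
      linarith
    rcases (preconnected_TN R).subset_or_subset
        (hopen _ (isOpen_TN 0)) (hopen _ (isOpen_TS 0)) hdisj h1 with h | h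
    · left
      intro z hz
      obtain ⟨w, hw, hweq⟩ := h hz
      exact ⟨w, mem_TN.mp hw, hweq⟩
    · right
      intro z hz
      obtain ⟨w, hw, hweq⟩ := h hz
      exact ⟨w, mem_TS.mp hw, hweq⟩
  set Sp := {t | t ∈ Icc (0:ℝ) 1 ∧ ∀ z ∈ TN R, ∃ w, 0 < w.2 ∧ H (t, w) = z} with hSpdef
  set Sm := {t | t ∈ Icc (0:ℝ) 1 ∧ ∀ z ∈ TN R, ∃ w, w.2 < 0 ∧ H (t, w) = z} with hSmdef
  have hdisjPM : Sp ∩ Sm = ∅ := by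
    rw [eq_empty_iff_forall_notMem]
    rintro t ⟨⟨ht, hp⟩, ⟨-, hm⟩⟩
    obtain ⟨z, hz⟩ := nonempty_TN R
    obtain ⟨w, hw, hweq⟩ := hp z hz
    obtain ⟨w', hw', hweq'⟩ := hm z hz
    have hww : w' = w := (Hh t).bijective.1 (hweq'.trans hweq.symm)
    rw [hww] at hw'
    linarith
  have hpoint : ((0 : AddCircle (1:ℝ)), R + 1) ∈ TN R := mem_TN.mpr (by show R < R+1; linarith)
  have hclSp : IsClosed Sp := by
    apply IsSeqClosed.isClosed
    intro tn s htn hs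
    have hsI : s ∈ Icc (0:ℝ) 1 := isClosed_Icc.isSeqClosed (fun n => (htn n).1) hs
    rcases hdich s hsI with h | h
    · exact ⟨hsI, h⟩
    · exfalso
      obtain ⟨w, hw, hweq⟩ := h _ hpoint
      have hφ : Continuous fun t => H (t, w) := Hc.comp (continuous_id.prodMk continuous_const)
      have hev : ∀ᶠ n in Filter.atTop, H (tn n, w) ∈ TN R := by
        have : Filter.Tendsto (fun n => H (tn n, w)) Filter.atTop (𝓝 (H (s, w))) :=
          ((hφ.tendsto s).comp hs)
        rw [hweq] at this
        exact this.eventually ((isOpen_TN R).mem_nhds hpoint)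
      obtain ⟨n, hn⟩ := hev.exists
      obtain ⟨w', hw', hweq'⟩ := (htn n).2 _ hn
      have hww : w' = w := (Hh (tn n)).bijective.1 hweq'
      rw [hww] at hw'
      linarith
  have hclSm : IsClosed Sm := by
    apply IsSeqClosed.isClosed
    intro tn s htn hs
    have hsI : s ∈ Icc (0:ℝ) 1 := isClosed_Icc.isSeqClosed (fun n => (htn n).1) hs
    rcases hdich s hsI with h | h
    · exfalso
      obtain ⟨w, hw, hweq⟩ := h _ hpoint
      have hφ : Continuous fun t => H (t, w) := Hc.comp (continuous_id.prodMk continuous_const)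
      have hev : ∀ᶠ n in Filter.atTop, H (tn n, w) ∈ TN R := by
        have : Filter.Tendsto (fun n => H (tn n, w)) Filter.atTop (𝓝 (H (s, w))) :=
          ((hφ.tendsto s).comp hs)
        rw [hweq] at this
        exact this.eventually ((isOpen_TN R).mem_nhds hpoint)
      obtain ⟨n, hn⟩ := hev.exists
      obtain ⟨w', hw', hweq'⟩ := (htn n).2 _ hn
      have hww : w' = w := (Hh (tn n)).bijective.1 hweq'
      rw [hww] at hw'
      linarith
    · exact ⟨hsI, h⟩
  have hIccsub : Icc (0:ℝ) 1 ⊆ Sp ∪ Sm := by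
    intro t ht
    rcases hdich t ht with h | h
    · exact Or.inl ⟨ht, h⟩
    · exact Or.inr ⟨ht, h⟩
  have h0Sp : (0:ℝ) ∈ Sp := by
    refine ⟨⟨le_refl 0, zero_le_one⟩, fun z hz => ⟨z, ?_, H0 z⟩⟩
    have := mem_TN.mp hz
    linarith
  have hIccSp : Icc (0:ℝ) 1 ⊆ Sp := by
    rcases isPreconnected_iff_subset_of_disjoint_closed.mp isPreconnected_Icc Sp Sm hclSp hclSm
        hIccsub (by rw [hdisjPM, inter_empty]) with h | h
    · exact h
    · exfalso
      have hmem : (0:ℝ) ∈ Sp ∩ Sm := ⟨h0Sp, h ⟨le_refl 0, zero_le_one⟩⟩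
      rw [hdisjPM] at hmem
      exact hmem
  have h1Sp : (1:ℝ) ∈ Sp := hIccSp ⟨zero_le_one, le_refl 1⟩
  -- mirrored: the low tail
  have hdichS : ∀ t ∈ Icc (0:ℝ) 1,
      (∀ z ∈ TS (-R), ∃ w, w.2 < 0 ∧ H (t, w) = z) ∨
      (∀ z ∈ TS (-R), ∃ w, 0 < w.2 ∧ H (t, w) = z) := by
    intro t ht
    have hbij := (Hh t).bijective
    have hopen := (Hh t).isOpenMap
    have h1 : TS (-R) ⊆ ((fun z => H (t, z)) '' TS 0) ∪ ((fun z => H (t, z)) '' TN 0) := by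
      intro z hz
      obtain ⟨w, hw⟩ := hbij.2 z
      rcases lt_trichotomy w.2 0 with h | h | h
      · exact Or.inl ⟨w, mem_TS.mpr h, hw⟩
      · exfalso
        have hw' : H (t, w) = z := hw
        have h2 := abs_le.mp (hcoreim t ht w h)
        rw [hw'] at h2
        have h3 := mem_TS.mp hz
        linarith [h2.1]
      · exact Or.inr ⟨w, mem_TN.mpr h, hw⟩
    have hdisj : Disjoint ((fun z => H (t, z)) '' TS 0) ((fun z => H (t, z)) '' TN 0) := by
      rw [disjoint_left]
      rintro - ⟨w, hw, rfl⟩ ⟨w', hw', heq⟩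
      have hww : w' = w := hbij.1 heq
      rw [hww] at hw'
      have := mem_TS.mp hw
      have := mem_TN.mp hw'
      linarith
    rcases (preconnected_TS (-R)).subset_or_subset
        (hopen _ (isOpen_TS 0)) (hopen _ (isOpen_TN 0)) hdisj h1 with h | h
    · left
      intro z hz
      obtain ⟨w, hw, hweq⟩ := h hz
      exact ⟨w, mem_TS.mp hw, hweq⟩
    · right
      intro z hz
      obtain ⟨w, hw, hweq⟩ := h hz
      exact ⟨w, mem_TN.mp hw, hweq⟩
  set Tp := {t | t ∈ Icc (0:ℝ) 1 ∧ ∀ z ∈ TS (-R), ∃ w, w.2 < 0 ∧ H (t, w) = z} with hTpdef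
  set Tm := {t | t ∈ Icc (0:ℝ) 1 ∧ ∀ z ∈ TS (-R), ∃ w, 0 < w.2 ∧ H (t, w) = z} with hTmdef
  have hdisjT : Tp ∩ Tm = ∅ := by
    rw [eq_empty_iff_forall_notMem]
    rintro t ⟨⟨ht, hp⟩, ⟨-, hm⟩⟩
    obtain ⟨z, hz⟩ := nonempty_TS (-R)
    obtain ⟨w, hw, hweq⟩ := hp z hz
    obtain ⟨w', hw', hweq'⟩ := hm z hz
    have hww : w' = w := (Hh t).bijective.1 (hweq'.trans hweq.symm)
    rw [hww] at hw'
    linarith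
  have hpointS : ((0 : AddCircle (1:ℝ)), -(R + 1)) ∈ TS (-R) :=
    mem_TS.mpr (by show -(R+1) < -R; linarith)
  have hclTp : IsClosed Tp := by
    apply IsSeqClosed.isClosed
    intro tn s htn hs
    have hsI : s ∈ Icc (0:ℝ) 1 := isClosed_Icc.isSeqClosed (fun n => (htn n).1) hs
    rcases hdichS s hsI with h | h
    · exact ⟨hsI, h⟩
    · exfalso
      obtain ⟨w, hw, hweq⟩ := h _ hpointS
      have hφ : Continuous fun t => H (t, w) := Hc.comp (continuous_id.prodMk continuous_const)
      have hev : ∀ᶠ n in Filter.atTop, H (tn n, w) ∈ TS (-R) := by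
        have : Filter.Tendsto (fun n => H (tn n, w)) Filter.atTop (𝓝 (H (s, w))) :=
          ((hφ.tendsto s).comp hs)
        rw [hweq] at this
        exact this.eventually ((isOpen_TS (-R)).mem_nhds hpointS)
      obtain ⟨n, hn⟩ := hev.exists
      obtain ⟨w', hw', hweq'⟩ := (htn n).2 _ hn
      have hww : w' = w := (Hh (tn n)).bijective.1 hweq'
      rw [hww] at hw'
      linarith
  have hclTm : IsClosed Tm := by
    apply IsSeqClosed.isClosed
    intro tn s htn hs
    have hsI : s ∈ Icc (0:ℝ) 1 := isClosed_Icc.isSeqClosed (fun n => (htn n).1) hs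
    rcases hdichS s hsI with h | h
    · exfalso
      obtain ⟨w, hw, hweq⟩ := h _ hpointS
      have hφ : Continuous fun t => H (t, w) := Hc.comp (continuous_id.prodMk continuous_const)
      have hev : ∀ᶠ n in Filter.atTop, H (tn n, w) ∈ TS (-R) := by
        have : Filter.Tendsto (fun n => H (tn n, w)) Filter.atTop (𝓝 (H (s, w))) :=
          ((hφ.tendsto s).comp hs)
        rw [hweq] at this
        exact this.eventually ((isOpen_TS (-R)).mem_nhds hpointS)
      obtain ⟨n, hn⟩ := hev.exists
      obtain ⟨w', hw', hweq'⟩ := (htn n).2 _ hn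
      have hww : w' = w := (Hh (tn n)).bijective.1 hweq'
      rw [hww] at hw'
      linarith
    · exact ⟨hsI, h⟩
  have hIccsubT : Icc (0:ℝ) 1 ⊆ Tp ∪ Tm := by
    intro t ht
    rcases hdichS t ht with h | h
    · exact Or.inl ⟨ht, h⟩
    · exact Or.inr ⟨ht, h⟩
  have h0Tp : (0:ℝ) ∈ Tp := by
    refine ⟨⟨le_refl 0, zero_le_one⟩, fun z hz => ⟨z, ?_, H0 z⟩⟩
    have := mem_TS.mp hz
    linarith
  have hIccTp : Icc (0:ℝ) 1 ⊆ Tp := by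
    rcases isPreconnected_iff_subset_of_disjoint_closed.mp isPreconnected_Icc Tp Tm hclTp hclTm
        hIccsubT (by rw [hdisjT, inter_empty]) with h | h
    · exact h
    · exfalso
      have hmem : (0:ℝ) ∈ Tp ∩ Tm := ⟨h0Tp, h ⟨le_refl 0, zero_le_one⟩⟩
      rw [hdisjT] at hmem
      exact hmem
  have h1Tp : (1:ℝ) ∈ Tp := hIccTp ⟨zero_le_one, le_refl 1⟩
  refine ⟨R, hR0, ?_, ?_⟩
  · intro z hz
    obtain ⟨w, hw, hweq⟩ := h1Sp.2 z hz
    exact ⟨w, hw, by rw [← H1 w]; exact hweq⟩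
  · intro z hz
    obtain ⟨w, hw, hweq⟩ := h1Tp.2 z hz
    exact ⟨w, hw, by rw [← H1 w]; exact hweq⟩



/-- Every homeomorphism of the annulus isotopic to the identity preserves both ends,
quantitatively. -/
lemma ends_quant (f : Equiv.Perm OpenAnn) (hfc : Continuous ⇑f) (hfc' : Continuous ⇑f.symm)
    (hfI : IsotopicToIdA ⇑f) : UpQ ⇑f ∧ DnQ ⇑f ∧ UpQ ⇑f.symm ∧ DnQ ⇑f.symm := by
  set G : OpenAnn ≃ₜ OpenAnn := ⟨f, hfc, hfc'⟩ with hGdef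
  obtain ⟨R, hR0, hupt, hdnt⟩ := isotopy_tails f hfI
  have hGcoe : ∀ z, G z = f z := fun z => rfl
  have hGscoe : ∀ z, G.symm z = f.symm z := fun z => rfl
  refine ⟨?_, ?_, ?_, ?_⟩
  -- UpQ f
  · intro M
    have hM0 : 0 < max M R := lt_of_lt_of_le hR0 (le_max_right M R)
    obtain ⟨N, hN0, hcase⟩ := dichotN G hM0
    rcases hcase with h | h
    · exact ⟨N, fun z hz => mem_TN.mpr (lt_of_le_of_lt (le_max_left M R) (mem_TN.mp (h z hz)))⟩
    · exfalso
      have hcl : TN R ⊆ ⇑G '' ((univ : Set (AddCircle (1:ℝ))) ×ˢ Icc 0 N) := by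
        intro u hu
        obtain ⟨w, hw0, hwfu⟩ := hupt u hu
        refine ⟨w, ⟨mem_univ _, le_of_lt hw0, ?_⟩, hwfu⟩
        by_contra hcon
        push_neg at hcon
        have : G w ∈ TS (-(max M R)) := h w (mem_TN.mpr hcon)
        have h1 := mem_TS.mp this
        have h2 := mem_TN.mp hu
        rw [hGcoe, hwfu] at h1
        have := le_max_right M R
        linarith
      obtain ⟨c, hc⟩ := bnd_of_isCompact ((isCompact_univ.prod isCompact_Icc).image G.continuous)
      have hpt : ((0:AddCircle (1:ℝ)), max c R + 1) ∈ TN R :=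
        mem_TN.mpr (by have := le_max_right c R; show R < max c R + 1; linarith)
      have := hc _ (hcl hpt)
      have h2 := abs_le.mp this
      have := le_max_left c R
      have : max c R + 1 ≤ c := h2.2
      linarith [le_max_left c R]
  -- DnQ f
  · intro M
    have hM0 : min M (-R) < 0 := lt_of_le_of_lt (min_le_right M (-R)) (by linarith)
    obtain ⟨N, hN0, hcase⟩ := dichotS G hM0
    rcases hcase with h | h
    · exact ⟨N, fun z hz => mem_TS.mpr (lt_of_lt_of_le (mem_TS.mp (h z hz)) (min_le_left M (-R)))⟩
    · exfalso
      have hcl : TS (-R) ⊆ ⇑G '' ((univ : Set (AddCircle (1:ℝ))) ×ˢ Icc N 0) := by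
        intro u hu
        obtain ⟨w, hw0, hwfu⟩ := hdnt u hu
        refine ⟨w, ⟨mem_univ _, ?_, le_of_lt hw0⟩, hwfu⟩
        by_contra hcon
        push_neg at hcon
        have : G w ∈ TN (-(min M (-R))) := h w (mem_TS.mpr hcon)
        have h1 := mem_TN.mp this
        have h2 := mem_TS.mp hu
        rw [hGcoe, hwfu] at h1
        have := min_le_right M (-R)
        linarith
      obtain ⟨c, hc⟩ := bnd_of_isCompact ((isCompact_univ.prod isCompact_Icc).image G.continuous)
      have hpt : ((0:AddCircle (1:ℝ)), -(max c R + 1)) ∈ TS (-R) :=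
        mem_TS.mpr (by have := le_max_right c R; show -(max c R + 1) < -R; linarith)
      have habs := abs_le.mp (hc _ (hcl hpt))
      have h1 : -c ≤ -(max c R + 1) := habs.1
      have := le_max_left c R
      linarith
  -- UpQ f.symm
  · intro M
    have hM0 : 0 < max M R := lt_of_lt_of_le hR0 (le_max_right M R)
    obtain ⟨N, hN0, hcase⟩ := dichotN G.symm hM0
    rcases hcase with h | h
    · exact ⟨N, fun z hz => mem_TN.mpr (lt_of_le_of_lt (le_max_left M R) (mem_TN.mp (h z hz)))⟩
    · exfalso
      have hpt : ((0:AddCircle (1:ℝ)), max N R + 1) ∈ TN N :=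
        mem_TN.mpr (by have := le_max_left N R; show N < max N R + 1; linarith)
      have hptR : ((0:AddCircle (1:ℝ)), max N R + 1) ∈ TN R :=
        mem_TN.mpr (by have := le_max_right N R; show R < max N R + 1; linarith)
      have hlow := mem_TS.mp (h _ hpt)
      obtain ⟨w, hw0, hwfu⟩ := hupt _ hptR
      have hsymm : f.symm ((0:AddCircle (1:ℝ)), max N R + 1) = w := by
        rw [← hwfu, Equiv.symm_apply_apply]
      rw [hGscoe, hsymm] at hlow
      have := le_max_right M R
      linarith
  -- DnQ f.symm
  · intro M
    have hM0 : min M (-R) < 0 := lt_of_le_of_lt (min_le_right M (-R)) (by linarith)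
    obtain ⟨N, hN0, hcase⟩ := dichotS G.symm hM0
    rcases hcase with h | h
    · exact ⟨N, fun z hz => mem_TS.mpr (lt_of_lt_of_le (mem_TS.mp (h z hz)) (min_le_left M (-R)))⟩
    · exfalso
      have hpt : ((0:AddCircle (1:ℝ)), -(max (-N) R + 1)) ∈ TS N := by
        refine mem_TS.mpr ?_
        have := le_max_left (-N) R
        show -(max (-N) R + 1) < N
        linarith
      have hptR : ((0:AddCircle (1:ℝ)), -(max (-N) R + 1)) ∈ TS (-R) := by
        refine mem_TS.mpr ?_
        have := le_max_right (-N) R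
        show -(max (-N) R + 1) < -R
        linarith
      have hhigh := mem_TN.mp (h _ hpt)
      obtain ⟨w, hw0, hwfu⟩ := hdnt _ hptR
      have hsymm : f.symm ((0:AddCircle (1:ℝ)), -(max (-N) R + 1)) = w := by
        rw [← hwfu, Equiv.symm_apply_apply]
      rw [hGscoe, hsymm] at hhigh
      have := min_le_right M (-R)
      linarith



/-- Basic facts about a Jordan curve. -/
lemma jordan_facts {γ : Set OpenAnn} (hJ : IsJordanCurve γ) :
    IsCompact γ ∧ IsClosed γ ∧ IsPreconnected γ ∧ γ.Nonempty := by
  obtain ⟨e, hec, -, hγr⟩ := hJ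
  have hcomp : IsCompact γ := hγr ▸ isCompact_range hec
  have hpre : IsPreconnected γ := by
    rw [hγr, ← image_univ]
    exact isPreconnected_univ.image e hec.continuousOn
  exact ⟨hcomp, hcomp.isClosed, hpre, hγr ▸ ⟨e 0, mem_range_self 0⟩⟩

/-- **Master lemma** (case 1 geometry): with `γ'` inside `US`, the maximal invariant set of
the closed region between the curves is preconnected. -/
lemma key (g : Equiv.Perm OpenAnn) (hgc : Continuous ⇑g) (hgc' : Continuous ⇑g.symm)
    (hup : UpQ ⇑g) (hdn : DnQ ⇑g) (hup' : UpQ ⇑g.symm) (hdn' : DnQ ⇑g.symm)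
    (γ UN US γ' UN' US' : Set OpenAnn)
    (he : IsEssential γ UN US) (he' : IsEssential γ' UN' US')
    (hd : Disjoint γ γ')
    (hfree : (⇑g '' γ) ∩ γ = ∅) (hfree' : (⇑g '' γ') ∩ γ' = ∅)
    (hattr : ⇑g '' γ ⊆ US) (hrep : ⇑g.symm '' γ' ⊆ US')
    (hsub : γ' ⊆ US) :
    IsPreconnected (⋂ n : ℤ, ⇑(g ^ n) '' closure (US ∩ UN')) := by
  classical
  set G : OpenAnn ≃ₜ OpenAnn := ⟨g, hgc, hgc'⟩ with hGdef
  obtain ⟨hJ, hUNcomp', hUScomp', hUNa, hUSb, hneNS, hclass⟩ := he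
  obtain ⟨hJ', hUN'comp', hUS'comp', hUN'a, hUS'b, hneNS', hclass'⟩ := he'
  obtain ⟨hγcomp, hγcl, hγpre, hγn⟩ := jordan_facts hJ
  obtain ⟨hγ'comp, hγ'cl, hγ'pre, hγ'n⟩ := jordan_facts hJ'
  have hbndγ : Bnd γ := bnd_of_isCompact hγcomp
  have hbndγ' : Bnd γ' := bnd_of_isCompact hγ'comp
  have hUNcomp : IsCompIn γ UN := hUNcomp'
  have hUScomp : IsCompIn γ US := hUScomp'
  have hUN'comp : IsCompIn γ' UN' := hUN'comp'
  have hUS'comp : IsCompIn γ' US' := hUS'comp'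
  have hγγ' : γ ∩ γ' = ∅ := disjoint_iff_inter_eq_empty.mp hd
  have hUNpre : IsPreconnected UN := hUNcomp.preconnected
  have hUSpre : IsPreconnected US := hUScomp.preconnected
  have hUN'pre : IsPreconnected UN' := hUN'comp.preconnected
  have hUS'pre : IsPreconnected US' := hUS'comp.preconnected
  have hUNopen : IsOpen UN := hUNcomp.isOpen hγcl
  have hUSopen : IsOpen US := hUScomp.isOpen hγcl
  have hUN'open : IsOpen UN' := hUN'comp.isOpen hγ'cl
  have hUS'open : IsOpen US' := hUS'comp.isOpen hγ'cl
  -- disjointness of the two components of each complement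
  have h1 : UN ∩ US = ∅ := by
    rcases hUNcomp.eq_or_disjoint hUScomp with h | h
    · exact absurd h hneNS
    · exact h
  have h1' : UN' ∩ US' = ∅ := by
    rcases hUN'comp.eq_or_disjoint hUS'comp with h | h
    · exact absurd h hneNS'
    · exact h
  have h2 : γ' ∩ UN = ∅ := by
    rw [eq_empty_iff_forall_notMem]
    rintro z ⟨hz1, hz2⟩
    exact absurd (h1 ▸ (⟨hz2, hsub hz1⟩ : z ∈ UN ∩ US)) (notMem_empty z)
  -- γ' is below γ : UN ⊆ UN', γ ⊆ UN', US' ⊆ US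
  have hUNγ'c : UN ⊆ γ'ᶜ := fun z hz hz' =>
    absurd (h2 ▸ (⟨hz', hz⟩ : z ∈ γ' ∩ UN)) (notMem_empty z)
  have h3 : UN ⊆ UN' := subset_unbAbove_comp hbndγ' hUNpre hUNγ'c hUNa hUN'comp hUN'a
  have h4 : frontier UN ⊆ γ := hUNcomp.frontier_subset hγcl
  have hUNne : UN.Nonempty := unbAbove_nonempty hUNa
  have hUSne : US.Nonempty := unbBelow_nonempty hUSb
  have hUN'ne : UN'.Nonempty := unbAbove_nonempty hUN'a
  have hUS'ne : US'.Nonempty := unbBelow_nonempty hUS'b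
  have hUNnuniv : UN ≠ univ := by
    intro h
    obtain ⟨z, hz⟩ := hUSne
    exact absurd (h1 ▸ (⟨h ▸ mem_univ z, hz⟩ : z ∈ UN ∩ US)) (notMem_empty z)
  have h5 : (frontier UN).Nonempty := frontier_nonempty_of_ne hUNopen hUNne hUNnuniv
  have h6 : closure UN ⊆ UN ∪ γ := hUNcomp.closure_subset hγcl
  have hγγ'c : γ ⊆ γ'ᶜ := fun z hz hz' =>
    absurd (hγγ' ▸ (⟨hz, hz'⟩ : z ∈ γ ∩ γ')) (notMem_empty z)
  have h7 : γ ⊆ UN' := by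
    have hclsub : closure UN ⊆ γ'ᶜ := by
      intro z hz
      rcases h6 hz with h | h
      · exact hUNγ'c h
      · exact hγγ'c h
    have hclUN' : closure UN ⊆ UN' :=
      subset_unbAbove_comp hbndγ' hUNpre.closure hclsub
        (unbAbove_mono subset_closure hUNa) hUN'comp hUN'a
    obtain ⟨x, hx⟩ := h5
    exact preconn_subset_comp hγpre hγγ'c hUN'comp ⟨h4 hx, hclUN' hx.1⟩
  have h8 : γ ∩ US' = ∅ := by
    rw [eq_empty_iff_forall_notMem]
    rintro z ⟨hz1, hz2⟩
    exact absurd (h1' ▸ (⟨h7 hz1, hz2⟩ : z ∈ UN' ∩ US')) (notMem_empty z)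
  have hUS'γc : US' ⊆ γᶜ := fun z hz hz' =>
    absurd (h8 ▸ (⟨hz', hz⟩ : z ∈ γ ∩ US')) (notMem_empty z)
  have h9 : US' ⊆ US := subset_unbBelow_comp hbndγ hUS'pre hUS'γc hUS'b hUScomp hUSb
  have h10 : UN ∩ US' = ∅ := by
    rw [eq_empty_iff_forall_notMem]
    rintro z ⟨hz1, hz2⟩
    exact absurd (h1 ▸ (⟨hz1, h9 hz2⟩ : z ∈ UN ∩ US)) (notMem_empty z)
  -- the compact region B between the curves
  set V : Set OpenAnn := US ∩ UN' with hVdef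
  set A : Set OpenAnn := closure V with hAdef
  set B : Set OpenAnn := (UN ∪ US')ᶜ with hBdef
  have hBcl : IsClosed B := (hUNopen.union hUS'open).isClosed_compl
  have hγB : γ ⊆ B := by
    intro z hz
    rintro (h | h)
    · exact hUNcomp.subset_compl h hz
    · exact absurd (h8 ▸ (⟨hz, h⟩ : z ∈ γ ∩ US')) (notMem_empty z)
  have hγ'B : γ' ⊆ B := by
    intro z hz
    rintro (h | h)
    · exact absurd (h2 ▸ (⟨hz, h⟩ : z ∈ γ' ∩ UN)) (notMem_empty z)
    · exact hUS'comp.subset_compl h hz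
  have hVB : V ⊆ B := by
    rintro z ⟨hz1, hz2⟩
    rintro (h | h)
    · exact absurd (h1 ▸ (⟨h, hz1⟩ : z ∈ UN ∩ US)) (notMem_empty z)
    · exact absurd (h1' ▸ (⟨hz2, h⟩ : z ∈ UN' ∩ US')) (notMem_empty z)
  have hAB : A ⊆ B := closure_minimal hVB hBcl
  have hclUS' : closure US' ⊆ US' ∪ γ' := hUS'comp.closure_subset hγ'cl
  have hγUN : γ ∩ UN = ∅ := by
    rw [eq_empty_iff_forall_notMem]
    rintro z ⟨hz1, hz2⟩
    exact hUNcomp.subset_compl hz2 hz1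
  have hγ'US' : γ' ∩ US' = ∅ := by
    rw [eq_empty_iff_forall_notMem]
    rintro z ⟨hz1, hz2⟩
    exact hUS'comp.subset_compl hz2 hz1
  have hBpre : IsPreconnected B :=
    preconnected_between hγcl hγpre hγn hγ'cl hγ'pre hγ'n hUNopen hUS'open h6 hclUS'
      h10 hγUN h8 h2 hγ'US' hγγ'
  -- B is compact
  have hBbnd : Bnd B := by
    obtain ⟨cγ, hcγ⟩ := hbndγ
    obtain ⟨cγ', hcγ'⟩ := hbndγ'
    set c := max cγ cγ' + 1 with hcdef
    have hTNc : TN c ⊆ UN := by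
      apply TN_subset_comp hUNcomp hUNa
      intro z hz
      have := abs_le.mp (hcγ z hz)
      have := le_max_left cγ cγ'
      simp only [hcdef]
      linarith [this]
    have hTSc : TS (-c) ⊆ US' := by
      apply TS_subset_comp hUS'comp hUS'b
      intro z hz
      have h := abs_le.mp (hcγ' z hz)
      have := le_max_right cγ cγ'
      simp only [hcdef]
      linarith [h.1]
    refine ⟨c, fun z hz => abs_le.mpr ⟨?_, ?_⟩⟩
    · by_contra hcon
      push_neg at hcon
      exact hz (Or.inr (hTSc (mem_TS.mpr (by linarith))))
    · by_contra hcon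
      push_neg at hcon
      exact hz (Or.inl (hTNc (mem_TN.mpr (by linarith))))
  have hBcomp : IsCompact B := isCompact_of_bnd_closed hBbnd hBcl
  -- dynamics
  have hsymm_img : ∀ S : Set OpenAnn, ⇑g.symm '' S = ⇑g ⁻¹' S := fun S => by
    rw [Equiv.image_eq_preimage_symm, Equiv.symm_symm]
  -- g⁻¹ preserves UN
  have hgsUN : ⇑g.symm '' UN ⊆ UN := by
    apply subset_unbAbove_comp hbndγ (hUNpre.image _ hgc'.continuousOn) ?_
      (hup'.unbAbove hUNa) hUNcomp hUNa
    rintro - ⟨u, hu, rfl⟩ hzγ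
    have : g (g.symm u) ∈ ⇑g '' γ := mem_image_of_mem _ hzγ
    rw [Equiv.apply_symm_apply] at this
    exact absurd (h1 ▸ (⟨hu, hattr this⟩ : (u : OpenAnn) ∈ UN ∩ US)) (notMem_empty u)
  -- g preserves UN'
  have hgUN' : ⇑g '' UN' ⊆ UN' := by
    apply subset_unbAbove_comp hbndγ' (hUN'pre.image _ hgc.continuousOn) ?_
      (hup.unbAbove hUN'a) hUN'comp hUN'a
    rintro - ⟨u, hu, rfl⟩ hzγ'
    have : g.symm (g u) ∈ ⇑g.symm '' γ' := mem_image_of_mem _ hzγ'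
    rw [Equiv.symm_apply_apply] at this
    exact absurd (h1' ▸ (⟨hu, hrep this⟩ : (u : OpenAnn) ∈ UN' ∩ US')) (notMem_empty u)
  -- g sends γ' into UN'
  have hgγ' : ⇑g '' γ' ⊆ UN' := by
    have hYγ'c : ⇑g '' γ' ⊆ γ'ᶜ := by
      rintro - ⟨u, hu, rfl⟩ hz
      have hmem : g u ∈ (⇑g '' γ') ∩ γ' := ⟨mem_image_of_mem _ hu, hz⟩
      rw [hfree'] at hmem
      exact hmem
    rcases ((⇑g '' γ') ∩ UN').eq_empty_or_nonempty with hint | ⟨y, hy⟩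
    · exfalso
      -- then g⁻¹ maps UN' into UN', so g(UN') = UN', making ∂UN' invariant: contradiction
      have hgsUN' : ⇑g.symm '' UN' ⊆ UN' := by
        apply subset_unbAbove_comp hbndγ' (hUN'pre.image _ hgc'.continuousOn) ?_
          (hup'.unbAbove hUN'a) hUN'comp hUN'a
        rintro - ⟨u, hu, rfl⟩ hzγ'
        have him : g (g.symm u) ∈ ⇑g '' γ' := mem_image_of_mem _ hzγ'
        rw [Equiv.apply_symm_apply] at him
        exact absurd (hint ▸ (⟨him, hu⟩ : (u:OpenAnn) ∈ (⇑g '' γ') ∩ UN')) (notMem_empty u)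
      have hUN'sub : UN' ⊆ ⇑g '' UN' := by
        intro u hu
        exact ⟨g.symm u, hgsUN' (mem_image_of_mem _ hu), Equiv.apply_symm_apply g u⟩
      have himeq : ⇑g '' UN' = UN' := Subset.antisymm hgUN' hUN'sub
      have hfr_eq : frontier UN' = closure UN' \ UN' := by
        rw [frontier, hUN'open.interior_eq]
      have hclo : ⇑g '' closure UN' = closure UN' := by
        have hh : ⇑g '' closure UN' = closure (⇑g '' UN') := G.image_closure UN'
        rw [hh, himeq]
      have hfr : ⇑g '' frontier UN' = frontier UN' := by
        rw [hfr_eq, image_diff g.injective, hclo, himeq]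
      have hUN'nuniv : UN' ≠ univ := by
        intro h
        obtain ⟨z, hz⟩ := hUS'ne
        exact absurd (h1' ▸ (⟨h ▸ mem_univ z, hz⟩ : z ∈ UN' ∩ US')) (notMem_empty z)
      obtain ⟨x, hx⟩ := frontier_nonempty_of_ne hUN'open hUN'ne hUN'nuniv
      have hxγ' : x ∈ γ' := hUN'comp.frontier_subset hγ'cl hx
      have hgx : g x ∈ frontier UN' := hfr ▸ mem_image_of_mem _ hx
      have hgxγ' : g x ∈ γ' := hUN'comp.frontier_subset hγ'cl hgx
      have hmem : g x ∈ (⇑g '' γ') ∩ γ' := ⟨mem_image_of_mem _ hxγ', hgxγ'⟩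
      rw [hfree'] at hmem
      exact hmem
    · exact preconn_subset_comp (hγ'pre.image _ hgc.continuousOn) hYγ'c hUN'comp ⟨hy.1, hy.2⟩
  -- g⁻¹ preserves US'
  have hgsUS' : ⇑g.symm '' US' ⊆ US' := by
    apply subset_unbBelow_comp hbndγ' (hUS'pre.image _ hgc'.continuousOn) ?_
      (hdn'.unbBelow hUS'b) hUS'comp hUS'b
    rintro - ⟨u, hu, rfl⟩ hzγ'
    have him : g (g.symm u) ∈ ⇑g '' γ' := mem_image_of_mem _ hzγ'
    rw [Equiv.apply_symm_apply] at him
    exact absurd (h1' ▸ (⟨hgγ' him, hu⟩ : (u:OpenAnn) ∈ UN' ∩ US')) (notMem_empty u)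
  -- g preserves B
  have hgB : ∀ z ∈ B, g z ∈ B := by
    intro z hz
    rintro (h | h)
    · have : g.symm (g z) ∈ ⇑g.symm '' UN := mem_image_of_mem _ h
      rw [Equiv.symm_apply_apply] at this
      exact hz (Or.inl (hgsUN this))
    · have : g.symm (g z) ∈ ⇑g.symm '' US' := mem_image_of_mem _ h
      rw [Equiv.symm_apply_apply] at this
      exact hz (Or.inr (hgsUS' this))
  -- g sends γ into V
  have hgγV : ⇑g '' γ ⊆ V := by
    intro z hz
    exact ⟨hattr hz, hgUN' (image_mono h7 hz)⟩
  -- g⁻¹ sends γ into UN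
  have hgsγ : ⇑g.symm '' γ ⊆ UN := by
    have hWγc : ⇑g.symm '' γ ⊆ γᶜ := by
      rintro - ⟨u, hu, rfl⟩ hz
      have him : g (g.symm u) ∈ ⇑g '' γ := mem_image_of_mem _ hz
      rw [Equiv.apply_symm_apply] at him
      exact absurd (hfree ▸ (⟨him, hu⟩ : (u:OpenAnn) ∈ (⇑g '' γ) ∩ γ)) (notMem_empty u)
    have hfrsub : ⇑g.symm '' frontier UN ⊆ UN := by
      rintro - ⟨u, hu, rfl⟩
      have h6' : ⇑g.symm '' closure UN ⊆ UN ∪ γ := by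
        have hh : ⇑g.symm '' closure UN = closure (⇑g.symm '' UN) := G.symm.image_closure UN
        rw [hh]
        exact (closure_mono hgsUN).trans h6
      rcases h6' (mem_image_of_mem _ hu.1) with h | h
      · exact h
      · exact absurd h (hWγc (mem_image_of_mem _ (h4 hu)))
    obtain ⟨x, hx⟩ := h5
    exact preconn_subset_comp (hγpre.image _ hgc'.continuousOn) hWγc hUNcomp
      ⟨mem_image_of_mem _ (h4 hx), hfrsub (mem_image_of_mem _ hx)⟩
  -- bubbles of γ pull back into UN
  have hbubγ : ∀ C, IsCompIn γ C → C ≠ UN → C ≠ US → ∀ z : OpenAnn, g z ∈ C → z ∈ UN := by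
    intro C hC hC1 hC2
    have hCbnd : Bnd C := by
      apply bnd_of_not_unb
      · intro hu
        rcases hclass C hC (Or.inl hu) with h | h
        · exact hC1 h
        · exact hC2 h
      · intro hu
        rcases hclass C hC (Or.inr hu) with h | h
        · exact hC1 h
        · exact hC2 h
    set W : Set OpenAnn := ⇑g ⁻¹' C with hWdef
    have hWopen : IsOpen W := (hC.isOpen hγcl).preimage hgc
    have hWbnd : Bnd W := by
      have h1w : W = ⇑g.symm '' C := (hsymm_img C).symm
      have h2w : ⇑g.symm '' C ⊆ ⇑g.symm '' closure C := image_mono subset_closure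
      have h3w : IsCompact (⇑g.symm '' closure C) :=
        (isCompact_of_bnd_closed hCbnd.closure isClosed_closure).image hgc'
      exact Bnd.mono (h1w ▸ h2w) (bnd_of_isCompact h3w)
    have hWfr : frontier W ⊆ UN := by
      have hh : ⇑g ⁻¹' frontier C = frontier W := G.preimage_frontier C
      rw [← hh]
      intro x hx
      have hxγ : g x ∈ γ := hC.frontier_subset hγcl hx
      have : x ∈ ⇑g.symm '' γ := by
        rw [hsymm_img]
        exact hxγ
      exact hgsγ this
    set D : Set OpenAnn := UNᶜ with hDdef
    have hDpre : IsPreconnected D := preconnected_compl_comp hγcl hγpre hγn hUNcomp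
    have hDsub : D ⊆ W ∪ (closure W)ᶜ := by
      intro z hz
      by_cases hzc : z ∈ closure W
      · left
        have hzfr : z ∉ frontier W := fun h => hz (hWfr h)
        rw [frontier, hWopen.interior_eq] at hzfr
        by_contra hzw
        exact hzfr ⟨hzc, hzw⟩
      · exact Or.inr hzc
    have hdisjW : Disjoint W (closure W)ᶜ := by
      rw [disjoint_left]
      exact fun z hz hz' => hz' (subset_closure hz)
    rcases hDpre.subset_or_subset hWopen isClosed_closure.isOpen_compl hdisjW hDsub with h | h
    · exfalso
      obtain ⟨cw, hcw⟩ := hWbnd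
      obtain ⟨z, hzUS, hz2⟩ := unbBelow_iff.mp hUSb (-(cw + 1))
      have hzD : z ∈ D := fun hzUN =>
        absurd (h1 ▸ (⟨hzUN, hzUS⟩ : z ∈ UN ∩ US)) (notMem_empty z)
      have := abs_le.mp (hcw z (h hzD))
      linarith [this.1]
    · intro z hzW
      by_contra hzUN
      exact (h hzUN) (subset_closure hzW)
  -- bubbles of γ' pull back into US'
  have hbubγ' : ∀ C, IsCompIn γ' C → C ≠ UN' → C ≠ US' → ∀ z : OpenAnn, g z ∈ C → z ∈ US' := by
    intro C hC hC1 hC2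
    have hCbnd : Bnd C := by
      apply bnd_of_not_unb
      · intro hu
        rcases hclass' C hC (Or.inl hu) with h | h
        · exact hC1 h
        · exact hC2 h
      · intro hu
        rcases hclass' C hC (Or.inr hu) with h | h
        · exact hC1 h
        · exact hC2 h
    set W : Set OpenAnn := ⇑g ⁻¹' C with hWdef
    have hWopen : IsOpen W := (hC.isOpen hγ'cl).preimage hgc
    have hWbnd : Bnd W := by
      have h1w : W = ⇑g.symm '' C := (hsymm_img C).symm
      have h2w : ⇑g.symm '' C ⊆ ⇑g.symm '' closure C := image_mono subset_closure
      have h3w : IsCompact (⇑g.symm '' closure C) :=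
        (isCompact_of_bnd_closed hCbnd.closure isClosed_closure).image hgc'
      exact Bnd.mono (h1w ▸ h2w) (bnd_of_isCompact h3w)
    have hWfr : frontier W ⊆ US' := by
      have hh : ⇑g ⁻¹' frontier C = frontier W := G.preimage_frontier C
      rw [← hh]
      intro x hx
      have hxγ' : g x ∈ γ' := hC.frontier_subset hγ'cl hx
      have : x ∈ ⇑g.symm '' γ' := by
        rw [hsymm_img]
        exact hxγ'
      exact hrep this
    set D : Set OpenAnn := US'ᶜ with hDdef
    have hDpre : IsPreconnected D := preconnected_compl_comp hγ'cl hγ'pre hγ'n hUS'comp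
    have hDsub : D ⊆ W ∪ (closure W)ᶜ := by
      intro z hz
      by_cases hzc : z ∈ closure W
      · left
        have hzfr : z ∉ frontier W := fun h => hz (hWfr h)
        rw [frontier, hWopen.interior_eq] at hzfr
        by_contra hzw
        exact hzfr ⟨hzc, hzw⟩
      · exact Or.inr hzc
    have hdisjW : Disjoint W (closure W)ᶜ := by
      rw [disjoint_left]
      exact fun z hz hz' => hz' (subset_closure hz)
    rcases hDpre.subset_or_subset hWopen isClosed_closure.isOpen_compl hdisjW hDsub with h | h
    · exfalso
      obtain ⟨cw, hcw⟩ := hWbnd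
      obtain ⟨z, hzUN', hz2⟩ := unbAbove_iff.mp hUN'a (cw + 1)
      have hzD : z ∈ D := fun hzUS' =>
        absurd (h1' ▸ (⟨hzUN', hzUS'⟩ : z ∈ UN' ∩ US')) (notMem_empty z)
      have := abs_le.mp (hcw z (h hzD))
      linarith [this.2]
    · intro z hzW
      by_contra hzUS'
      exact (h hzUS') (subset_closure hzW)
  -- powers of g
  have hcont_pow : ∀ n : ℕ, Continuous ⇑(g ^ n) := by
    intro n
    induction n with
    | zero => simpa using continuous_id
    | succ n ih =>
      have : ⇑(g ^ (n+1)) = ⇑(g ^ n) ∘ ⇑g := by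
        rw [pow_succ]
        rfl
      rw [this]
      exact ih.comp hgc
  set L : ℕ → Set OpenAnn := fun n => ⇑(g ^ n) '' B with hLdef
  have hL0 : L 0 = B := by simp [hLdef]
  have himg_comp : ∀ n : ℕ, L (n+1) = ⇑(g ^ n) '' (⇑g '' B) := by
    intro n
    simp only [hLdef]
    rw [pow_succ]
    rw [← image_comp]
    rfl
  have hgBim : ⇑g '' B ⊆ B := by
    rintro - ⟨b, hb, rfl⟩
    exact hgB b hb
  have hLdec : ∀ n, L (n+1) ⊆ L n := by
    intro n
    rw [himg_comp n]
    exact image_mono hgBim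
  have hLcomp : ∀ n, IsCompact (L n) := fun n => hBcomp.image (hcont_pow n)
  have hLpre : ∀ n, IsPreconnected (L n) := fun n => hBpre.image _ (hcont_pow n).continuousOn
  set Λ : Set OpenAnn := ⋂ n, L n with hΛdef
  have hΛpre : IsPreconnected Λ := preconnected_iInter_of_anti hLcomp hLpre hLdec
  have hΛB : Λ ⊆ B := hL0 ▸ iInter_subset L 0
  -- Λ is invariant
  have himg_comp' : ∀ n : ℕ, L (n+1) = ⇑g '' (L n) := by
    intro n
    simp only [hLdef]
    rw [pow_succ']
    rw [← image_comp]
    rfl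
  have hstep : ∀ z ∈ Λ, g.symm z ∈ Λ := by
    intro z hz
    rw [mem_iInter] at hz ⊢
    intro n
    have := hz (n+1)
    rw [himg_comp' n] at this
    obtain ⟨u, hu, huz⟩ := this
    have : u = g.symm z := by rw [← huz, Equiv.symm_apply_apply]
    rwa [← this]
  have hstep_fwd : ∀ z ∈ Λ, g z ∈ Λ := by
    intro z hz
    rw [mem_iInter] at hz ⊢
    intro n
    apply hLdec n
    rw [himg_comp' n]
    exact mem_image_of_mem _ (hz n)
  -- Λ lies in V
  have hΛV : Λ ⊆ V := by
    intro z hz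
    have hzB : z ∈ B := hΛB hz
    have hwΛ : g.symm z ∈ Λ := hstep z hz
    have hwB : g.symm z ∈ B := hΛB hwΛ
    have hgw : g (g.symm z) = z := Equiv.apply_symm_apply g z
    have hzγ : z ∉ γ := by
      intro hzγ
      have : g.symm z ∈ ⇑g.symm '' γ := mem_image_of_mem _ hzγ
      exact hwB (Or.inl (hgsγ this))
    have hzγ' : z ∉ γ' := by
      intro hzγ'
      have : g.symm z ∈ ⇑g.symm '' γ' := mem_image_of_mem _ hzγ'
      exact hwB (Or.inr (hrep this))
    have hzUS : z ∈ US := by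
      have hzγc : z ∈ γᶜ := hzγ
      set C := connectedComponentIn γᶜ z with hCdef
      have hC : IsCompIn γ C := isCompIn_of_mem hzγc
      have hzC : z ∈ C := mem_connectedComponentIn hzγc
      by_cases hCUS : C = US
      · exact hCUS ▸ hzC
      by_cases hCUN : C = UN
      · exact absurd (Or.inl (hCUN ▸ hzC)) hzB
      · exfalso
        have : g.symm z ∈ UN := hbubγ C hC hCUN hCUS (g.symm z) (by rw [hgw]; exact hzC)
        exact hwB (Or.inl this)
    have hzUN' : z ∈ UN' := by
      have hzγ'c : z ∈ γ'ᶜ := hzγ'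
      set C := connectedComponentIn γ'ᶜ z with hCdef
      have hC : IsCompIn γ' C := isCompIn_of_mem hzγ'c
      have hzC : z ∈ C := mem_connectedComponentIn hzγ'c
      by_cases hCUN' : C = UN'
      · exact hCUN' ▸ hzC
      by_cases hCUS' : C = US'
      · exact absurd (Or.inr (hCUS' ▸ hzC)) hzB
      · exfalso
        have : g.symm z ∈ US' := hbubγ' C hC hCUN' hCUS' (g.symm z) (by rw [hgw]; exact hzC)
        exact hwB (Or.inr this)
    exact ⟨hzUS, hzUN'⟩
  have hΛA : Λ ⊆ A := fun z hz => subset_closure (hΛV hz)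
  have hΛsubg : Λ ⊆ ⇑g '' Λ := by
    intro z hz
    exact ⟨g.symm z, hstep z hz, Equiv.apply_symm_apply g z⟩
  have hΛsubginv : Λ ⊆ ⇑(g⁻¹) '' Λ := by
    intro z hz
    refine ⟨g z, hstep_fwd z hz, ?_⟩
    have hinv : (g⁻¹ : Equiv.Perm OpenAnn) = g.symm := Equiv.Perm.inv_def g
    rw [hinv]
    exact Equiv.symm_apply_apply g z
  have himul : ∀ (σ τ : Equiv.Perm OpenAnn) (S : Set OpenAnn),
      ⇑(σ * τ) '' S = ⇑σ '' (⇑τ '' S) := by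
    intro σ τ S
    rw [← image_comp]
    rfl
  -- the maximal invariant set equals Λ
  have hfinal : (⋂ n : ℤ, ⇑(g ^ n) '' A) = Λ := by
    apply Subset.antisymm
    · intro z hz
      rw [mem_iInter] at hz ⊢
      intro n
      have hzn := hz (n : ℤ)
      rw [zpow_natCast] at hzn
      simp only [hLdef]
      exact image_mono hAB hzn
    · intro z hz
      rw [mem_iInter]
      intro n
      have hinv : ∀ m : ℤ, Λ ⊆ ⇑(g ^ m) '' Λ := by
        intro m
        induction m using Int.induction_on with
        | zero =>
          rw [zpow_zero]
          intro w hw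
          simpa using hw
        | succ k ih =>
          have heq : (g : Equiv.Perm OpenAnn) ^ ((k : ℤ) + 1) = g ^ (k : ℤ) * g :=
            zpow_add_one g k
          rw [heq, himul]
          exact fun w hw => image_mono hΛsubg (ih hw)
        | pred k ih =>
          have heq : (g : Equiv.Perm OpenAnn) ^ (-(k : ℤ) - 1) = g ^ (-(k : ℤ)) * g⁻¹ :=
            zpow_sub_one g _
          rw [heq, himul]
          exact fun w hw => image_mono hΛsubginv (ih hw)
      exact image_mono hΛA (hinv n hz)
  rw [hfinal]
  exact hΛpre



lemma free_symm (g : Equiv.Perm OpenAnn) {γ : Set OpenAnn} (h : (⇑g '' γ) ∩ γ = ∅) :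
    (⇑g.symm '' γ) ∩ γ = ∅ := by
  rw [eq_empty_iff_forall_notMem]
  rintro z ⟨⟨u, hu, rfl⟩, hz⟩
  have hmem : g (g.symm u) ∈ (⇑g '' γ) ∩ γ :=
    ⟨mem_image_of_mem _ hz, by rw [Equiv.apply_symm_apply]; exact hu⟩
  rw [h] at hmem
  exact hmem

lemma theta_symm (f : Equiv.Perm OpenAnn) (E : Set OpenAnn) :
    (⋂ n : ℤ, ⇑(f.symm ^ n) '' E) = ⋂ n : ℤ, ⇑(f ^ n) '' E := by
  have hpow : ∀ n : ℤ, f.symm ^ n = f ^ (-n) := by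
    intro n
    rw [← Equiv.Perm.inv_def, inv_zpow, ← zpow_neg]
  ext z
  simp only [mem_iInter]
  constructor
  · intro h n
    have := h (-n)
    rwa [hpow, neg_neg] at this
  · intro h n
    rw [hpow]
    exact h (-n)

/-- In case 2 (with `γ'` inside `UN`), the curve `γ` lies in `US'`. -/
lemma gamma_subset_US' {γ UN US γ' UN' US' : Set OpenAnn}
    (he : IsEssential γ UN US) (he' : IsEssential γ' UN' US')
    (hd : Disjoint γ γ') (hsub : γ' ⊆ UN) : γ ⊆ US' := by
  obtain ⟨hJ, hUNcomp', hUScomp', hUNa, hUSb, hneNS, -⟩ := he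
  obtain ⟨hJ', -, hUS'comp', -, hUS'b, -, -⟩ := he'
  obtain ⟨hγcomp, hγcl, hγpre, hγn⟩ := jordan_facts hJ
  obtain ⟨hγ'comp, hγ'cl, hγ'pre, hγ'n⟩ := jordan_facts hJ'
  have hbndγ' : Bnd γ' := bnd_of_isCompact hγ'comp
  have hUNcomp : IsCompIn γ UN := hUNcomp'
  have hUScomp : IsCompIn γ US := hUScomp'
  have hUS'comp : IsCompIn γ' US' := hUS'comp'
  have hγγ' : γ ∩ γ' = ∅ := disjoint_iff_inter_eq_empty.mp hd
  have h1 : UN ∩ US = ∅ := by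
    rcases hUNcomp.eq_or_disjoint hUScomp with h | h
    · exact absurd h hneNS
    · exact h
  have hUSγ'c : US ⊆ γ'ᶜ := by
    intro z hz hz'
    exact absurd (h1 ▸ (⟨hsub hz', hz⟩ : z ∈ UN ∩ US)) (notMem_empty z)
  have hclUS : closure US ⊆ US ∪ γ := hUScomp.closure_subset hγcl
  have hγγ'c : γ ⊆ γ'ᶜ := fun z hz hz' =>
    absurd (hγγ' ▸ (⟨hz, hz'⟩ : z ∈ γ ∩ γ')) (notMem_empty z)
  have hclsub : closure US ⊆ γ'ᶜ := by
    intro z hz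
    rcases hclUS hz with h | h
    · exact hUSγ'c h
    · exact hγγ'c h
  have hclUS' : closure US ⊆ US' :=
    subset_unbBelow_comp hbndγ' hUScomp.preconnected.closure hclsub
      (unbBelow_mono subset_closure hUSb) hUS'comp hUS'b
  have hUSopen : IsOpen US := hUScomp.isOpen hγcl
  have hUSnuniv : US ≠ univ := by
    intro h
    obtain ⟨z, hz⟩ := unbAbove_nonempty hUNa
    exact absurd (h1 ▸ (⟨hz, h ▸ mem_univ z⟩ : z ∈ UN ∩ US)) (notMem_empty z)
  obtain ⟨x, hx⟩ := frontier_nonempty_of_ne hUSopen (unbBelow_nonempty hUSb) hUSnuniv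
  have hxγ : x ∈ γ := hUScomp.frontier_subset hγcl hx
  exact preconn_subset_comp hγpre hγγ'c hUS'comp ⟨hxγ, hclUS' hx.1⟩


end AnnAux

/-- **Lemma 5.1.** If `γ` and `γ'` are disjoint `f`-free essential Jordan curves, `γ` attracting
and `γ'` repulsing, then the maximal invariant set of the closed annulus delimited by `γ` and
`γ'` is a connected set. -/
theorem maximal_invariant_set_connected_of_attracting_repulsing
    (f : Equiv.Perm OpenAnn) (hfc : Continuous f) (hfc' : Continuous f.symm)
    (hfI : IsotopicToIdA f)
    (γ UN US γ' UN' US' : Set OpenAnn)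
    (he : IsEssential γ UN US) (he' : IsEssential γ' UN' US')
    (hd : Disjoint γ γ')
    (hfree : (f '' γ) ∩ γ = ∅) (hfree' : (f '' γ') ∩ γ' = ∅)
    (hattr : f '' γ ⊆ US) (hrep : f.symm '' γ' ⊆ US')
    (A : Set OpenAnn)
    (hA : (γ' ⊆ US ∧ A = closure (US ∩ UN')) ∨ (γ' ⊆ UN ∧ A = closure (UN ∩ US'))) :
    IsPreconnected (Theta f A) := by
  obtain ⟨hupf, hdnf, hupfs, hdnfs⟩ := AnnAux.ends_quant f hfc hfc' hfI
  rcases hA with ⟨hsub, rfl⟩ | ⟨hsub, rfl⟩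
  · exact AnnAux.key f hfc hfc' hupf hdnf hupfs hdnfs γ UN US γ' UN' US'
      he he' hd hfree hfree' hattr hrep hsub
  · have hgc' : Continuous ⇑f.symm.symm := by rw [Equiv.symm_symm]; exact hfc
    have hup' : AnnAux.UpQ ⇑f.symm.symm := by rw [Equiv.symm_symm]; exact hupf
    have hdn' : AnnAux.DnQ ⇑f.symm.symm := by rw [Equiv.symm_symm]; exact hdnf
    have hfree2 : (⇑f.symm '' γ') ∩ γ' = ∅ := AnnAux.free_symm f hfree'
    have hfree2' : (⇑f.symm '' γ) ∩ γ = ∅ := AnnAux.free_symm f hfree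
    have hrep2 : ⇑f.symm.symm '' γ ⊆ US := by rw [Equiv.symm_symm]; exact hattr
    have hsub2 : γ ⊆ US' := AnnAux.gamma_subset_US' he he' hd hsub
    have hkey := AnnAux.key f.symm hfc' hgc' hupfs hdnfs hup' hdn' γ' UN' US' γ UN US
      he' he hd.symm hfree2 hfree2' hrep hrep2 hsub2
    have hswap : Theta f (closure (UN ∩ US')) = ⋂ n : ℤ, ⇑(f.symm ^ n) '' closure (US' ∩ UN) := by
      rw [inter_comm UN US']
      exact (AnnAux.theta_symm f (closure (US' ∩ UN))).symm
    rw [hswap]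
    exact hkey
end
end

section
/- Assume hypotheses (H₁), (H₂), (H₃) hold for f̃ and the horizontal lines Γ₀, Γ₁, Γ₂. Then for each i ∈ {0,1}, ρ_{Ã_i}(f̃) ⊆ Conv(ρ_{Θ(Ã_i)}(f̃)), the convex hull of ρ_{Θ(Ã_i)}(f̃). In particular, ρ_{Ã₀}(f̃) ⊆ (0,+∞) and ρ_{Ã₁}(f̃) ⊆ (−∞,0). -/
open Set Function Topology

noncomputable section

/-- `g` is isotopic to the identity (in particular orientation preserving). -/
def IsotopicToIdP (g : ℝ × ℝ → ℝ × ℝ) : Prop :=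
  ∃ H : ℝ × (ℝ × ℝ) → ℝ × ℝ, Continuous H ∧ (∀ z, H (0, z) = z) ∧ (∀ z, H (1, z) = g z) ∧
    ∀ t : ℝ, IsHomeomorph fun z => H (t, z)

/-- The closed horizontal band `ℝ × [b, a]`. -/
def BandAB (a b : ℝ) : Set (ℝ × ℝ) := {p | b ≤ p.2 ∧ p.2 ≤ a}

/-- The horizontal line `Γ = ℝ × {c}`. -/
def Horiz (c : ℝ) : Set (ℝ × ℝ) := {p | p.2 = c}

/-- The maximal `f̃`-invariant subset `Θ(Ẽ) = ⋂_{n ∈ ℤ} f̃ⁿ(Ẽ)`. -/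
def ThetaZ (ftil : Equiv.Perm (ℝ × ℝ)) (E : Set (ℝ × ℝ)) : Set (ℝ × ℝ) :=
  ⋂ n : ℤ, (ftil ^ n) '' E

/-- The rotation set `ρ_{K̃}(f̃)` of a set `K̃ ⊆ ℝ²`. -/
def rhoB (ftil : Equiv.Perm (ℝ × ℝ)) (K : Set (ℝ × ℝ)) : Set EReal :=
  ⋂ (m : ℕ), ⋂ (_ : 1 ≤ m), closure (⋃ (n : ℕ), ⋃ (_ : m ≤ n),
    {x : EReal | ∃ zt ∈ K, (ftil ^ n) zt ∈ K ∧
      x = (((((ftil ^ n) zt).1 - zt.1) / n : ℝ) : EReal)})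

/-- The unstable set `Λ⁻` of the band `ℝ × [b, a]`. -/
def LamM (ftil : Equiv.Perm (ℝ × ℝ)) (a b : ℝ) : Set (ℝ × ℝ) :=
  ⋂ n : ℕ, ((ftil ^ n) '' {p : ℝ × ℝ | p.2 ≤ a} ∩ {p : ℝ × ℝ | b ≤ p.2})

/-- The stable set `Λ⁺` of the band `ℝ × [b, a]`. -/
def LamP (ftil : Equiv.Perm (ℝ × ℝ)) (a b : ℝ) : Set (ℝ × ℝ) :=
  ⋂ n : ℕ, ({p : ℝ × ℝ | p.2 ≤ a} ∩ (ftil ^ n) ⁻¹' {p : ℝ × ℝ | b ≤ p.2})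

/-- The convex hull of a subset of `ℝ̄ = EReal`. -/
def erealHull (S : Set EReal) : Set EReal := ⋃ a ∈ S, ⋃ b ∈ S, Icc a b

namespace PropAux

section Aux
variable (f : Equiv.Perm (ℝ × ℝ))



lemma contPowN (hc : Continuous f) : ∀ n : ℕ, Continuous (f ^ n : Equiv.Perm (ℝ×ℝ)) := by
  intro n
  induction n with
  | zero => simpa [Equiv.Perm.coe_one] using continuous_id
  | succ n ih =>
      have h : ((f ^ (n+1) : Equiv.Perm (ℝ×ℝ)) : ℝ×ℝ → ℝ×ℝ)
          = ((f ^ n : Equiv.Perm (ℝ×ℝ)) : ℝ×ℝ → ℝ×ℝ) ∘ f := by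
        ext z
        · simp [pow_succ, Equiv.Perm.mul_apply]
        · simp [pow_succ, Equiv.Perm.mul_apply]
      rw [h]; exact ih.comp hc

lemma invCoe : ((f⁻¹ : Equiv.Perm (ℝ×ℝ)) : ℝ×ℝ → ℝ×ℝ) = f.symm := by
  rfl

lemma contPowZ (hc : Continuous f) (hc' : Continuous f.symm) :
    ∀ i : ℤ, Continuous (f ^ i : Equiv.Perm (ℝ×ℝ)) := by
  intro i
  cases i with
  | ofNat n => rw [Int.ofNat_eq_coe, zpow_natCast]; exact contPowN f hc n
  | negSucc n =>
      rw [zpow_negSucc, ← inv_pow]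
      have : Continuous (f⁻¹ : Equiv.Perm (ℝ×ℝ)) := by rw [invCoe]; exact hc'
      exact contPowN _ this (n+1)

lemma powCompZN (i : ℤ) (j : ℕ) (z : ℝ×ℝ) (h : 0 ≤ (j:ℤ) + i) :
    (f ^ i) ((f ^ j) z) = (f ^ (((j:ℤ) + i).toNat)) z := by
  have : (f ^ i) ((f ^ j) z) = (f ^ (i + (j:ℤ))) z := by
    rw [zpow_add]
    simp [Equiv.Perm.mul_apply, zpow_natCast]
  rw [this]
  have h2 : (i + (j:ℤ)) = (((j:ℤ) + i).toNat : ℤ) := by omega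
  rw [h2, zpow_natCast]






def CommT (g : Equiv.Perm (ℝ × ℝ)) : Prop :=
  ∀ (m : ℤ) (z : ℝ×ℝ), g (z.1 + m, z.2) = ((g z).1 + m, (g z).2)

lemma commT_of_comm (hcomm : ∀ z : ℝ × ℝ, f (deckT z) = deckT (f z)) : CommT f := by
  have h1 : ∀ z : ℝ×ℝ, f (z.1 + 1, z.2) = ((f z).1 + 1, (f z).2) := by
    intro z; exact hcomm z
  intro m
  induction m using Int.induction_on with
  | zero => simp
  | succ k ih =>
      intro z
      have : ((z.1 + (k:ℤ)) + 1 : ℝ) = z.1 + ((k:ℤ)+1 : ℤ) := by push_cast; ring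
      calc f (z.1 + ((k:ℤ)+1 : ℤ), z.2) = f ((z.1 + (k:ℤ)) + 1, z.2) := by rw [this]
        _ = ((f (z.1 + (k:ℤ), z.2)).1 + 1, (f (z.1 + (k:ℤ), z.2)).2) := h1 (z.1 + (k:ℤ), z.2)
        _ = ((f z).1 + ((k:ℤ)+1:ℤ), (f z).2) := by rw [ih z]; push_cast; ring_nf
  | pred k ih =>
      intro z
      have key := h1 (z.1 + (-(k:ℤ) - 1 : ℤ), z.2)
      have e1 : ((z.1 + (-(k:ℤ) - 1 : ℤ)) + 1 : ℝ) = z.1 + (-(k:ℤ) : ℤ) := by push_cast; ring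
      rw [e1] at key
      rw [ih z] at key
      have hcomp := Prod.ext_iff.mp key
      have hfst : (f (z.1 + (-(k:ℤ) - 1 : ℤ), z.2)).1 = (f z).1 + ((-(k:ℤ) - 1 : ℤ):ℝ) := by
        have := hcomp.1
        simp only at this
        push_cast at this ⊢
        linarith
      have hsnd : (f (z.1 + (-(k:ℤ) - 1 : ℤ), z.2)).2 = (f z).2 := hcomp.2.symm
      exact Prod.ext hfst hsnd

lemma commT_symm (hf : CommT f) : CommT f.symm := by
  intro m z
  have := hf m (f.symm z)
  have h2 : f (f.symm z) = z := f.apply_symm_apply z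
  rw [h2] at this
  have : f.symm (z.1 + m, z.2) = f.symm (f ((f.symm z).1 + m, (f.symm z).2)) := by
    rw [this]
  rw [f.symm_apply_apply] at this
  rw [this]

lemma commT_mul (g h : Equiv.Perm (ℝ×ℝ)) (hg : CommT g) (hh : CommT h) : CommT (g * h) := by
  intro m z
  simp only [Equiv.Perm.mul_apply]
  rw [hh m z, hg m (h z)]

lemma commT_one : CommT 1 := by intro m z; simp

lemma commT_powN (hf : CommT f) : ∀ n : ℕ, CommT (f ^ n) := by
  intro n
  induction n with
  | zero => simpa using commT_one
  | succ n ih => rw [pow_succ]; exact commT_mul _ _ ih hf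

lemma commT_powZ (hf : CommT f) : ∀ i : ℤ, CommT (f ^ i) := by
  intro i
  cases i with
  | ofNat n => rw [Int.ofNat_eq_coe, zpow_natCast]; exact commT_powN f hf n
  | negSucc n =>
      rw [zpow_negSucc, ← inv_pow]
      have : CommT f⁻¹ := commT_symm f hf
      exact commT_powN _ this (n+1)

lemma symm_zpow (i : ℤ) : (((f ^ i).symm : Equiv.Perm (ℝ×ℝ)) : ℝ×ℝ → ℝ×ℝ) = (f ^ (-i) : Equiv.Perm (ℝ×ℝ)) := by
  have h : (f ^ (-i) : Equiv.Perm (ℝ×ℝ)) = (f ^ i)⁻¹ := zpow_neg f i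
  rw [h]; rfl

lemma mem_theta_iff (E : Set (ℝ×ℝ)) (z : ℝ×ℝ) :
    z ∈ ThetaZ f E ↔ ∀ i : ℤ, (f ^ i) z ∈ E := by
  constructor
  · intro hz i
    have := Set.mem_iInter.mp hz (-i)
    rw [Equiv.image_eq_preimage_symm] at this
    have he := symm_zpow f (-i)
    rw [neg_neg] at he
    rwa [Set.mem_preimage, he] at this
  · intro h
    apply Set.mem_iInter.mpr
    intro i
    rw [Equiv.image_eq_preimage_symm]
    rw [Set.mem_preimage, symm_zpow f i]
    exact h (-i)

lemma theta_mapsto (E : Set (ℝ×ℝ)) (z : ℝ×ℝ) (hz : z ∈ ThetaZ f E) (i : ℤ) :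
    (f ^ i) z ∈ ThetaZ f E := by
  rw [mem_theta_iff] at hz ⊢
  intro j
  have : (f ^ j) ((f ^ i) z) = (f ^ (j + i)) z := by
    rw [zpow_add]; simp [Equiv.Perm.mul_apply]
  rw [this]; exact hz _





lemma upperHalf_preconn (c : ℝ) : IsPreconnected {q : ℝ×ℝ | c ≤ q.2} := by
  apply Convex.isPreconnected
  intro x hx y hy s t hs ht hst
  simp only [Set.mem_setOf_eq] at hx hy ⊢
  have : (s • x + t • y).2 = s * x.2 + t * y.2 := by
    simp [Prod.smul_snd, smul_eq_mul]
  rw [this]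
  have h1 : s * c ≤ s * x.2 := mul_le_mul_of_nonneg_left hx hs
  have h2 : t * c ≤ t * y.2 := mul_le_mul_of_nonneg_left hy ht
  have h3 : s * c + t * c = c := by
    calc s * c + t * c = (s + t) * c := by ring
      _ = c := by rw [hst, one_mul]
  linarith

lemma lemA (hc : Continuous f) (hc' : Continuous f.symm) (c : ℝ)
    (hline : ∀ p : ℝ×ℝ, p.2 = c → (f p).2 < c)
    (p : ℝ×ℝ) (hp : p.2 ≤ c) (hfp : c ≤ (f p).2) :
    ∀ q : ℝ×ℝ, c ≤ q.2 → (f.symm q).2 < c := by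
  by_contra hcon
  push_neg at hcon
  obtain ⟨q, hq, hq2⟩ := hcon
  set P : Set (ℝ×ℝ) := {w | c ≤ w.2} with hP
  set U : Set (ℝ×ℝ) := (f.symm : ℝ×ℝ → ℝ×ℝ) ⁻¹' {w | w.2 < c} with hU
  set V : Set (ℝ×ℝ) := (f.symm : ℝ×ℝ → ℝ×ℝ) ⁻¹' {w | c < w.2} with hV
  have hUo : IsOpen U := (isOpen_lt continuous_snd continuous_const).preimage hc'
  have hVo : IsOpen V := (isOpen_lt continuous_const continuous_snd).preimage hc'
  have hne : ∀ w ∈ P, (f.symm w).2 ≠ c := by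
    intro w hw hwc
    have := hline (f.symm w) hwc
    rw [f.apply_symm_apply] at this
    exact absurd hw (by simp only [hP, Set.mem_setOf_eq]; linarith)
  have hcover : P ⊆ U ∪ V := by
    intro w hw
    rcases lt_trichotomy ((f.symm w).2) c with h | h | h
    · exact Or.inl h
    · exact absurd h (hne w hw)
    · exact Or.inr h
  have hPU : (P ∩ U).Nonempty := by
    refine ⟨f p, ?_, ?_⟩
    · exact hfp
    · have hpc : p.2 < c := by
        rcases lt_or_eq_of_le hp with h | h
        · exact h
        · exact absurd (hline p h) (by linarith)
      simp only [hU, Set.mem_preimage, f.symm_apply_apply]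
      exact hpc
  have hPV : (P ∩ V).Nonempty := by
    refine ⟨q, hq, ?_⟩
    have : (f.symm q).2 ≠ c := hne q hq
    simp only [hV, Set.mem_preimage, Set.mem_setOf_eq]
    rcases lt_or_eq_of_le hq2 with h | h
    · exact h
    · exact absurd h.symm this
  obtain ⟨w, _, hwU, hwV⟩ := upperHalf_preconn c U V hUo hVo hcover hPU hPV
  simp only [hU, hV, Set.mem_preimage, Set.mem_setOf_eq] at hwU hwV
  linarith

lemma good_of_theta (hc : Continuous f) (hc' : Continuous f.symm) (b : ℝ)
    (hline : ∀ p : ℝ×ℝ, p.2 = b → (f p).2 < b)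
    (z : ℝ×ℝ) (hzb : b ≤ z.2) (hfzb : b ≤ (f z).2) :
    ∀ p : ℝ×ℝ, p.2 ≤ b → (f p).2 < b := by
  by_contra hcon
  push_neg at hcon
  obtain ⟨p, hp, hfp⟩ := hcon
  have H := lemA f hc hc' b hline p hp hfp (f z) hfzb
  rw [f.symm_apply_apply] at H
  linarith

lemma good_top (hc : Continuous f) (hc' : Continuous f.symm) (a b : ℝ) (hba : b < a)
    (hlinea : ∀ p : ℝ×ℝ, p.2 = a → (f p).2 < a)
    (hgoodb : ∀ p : ℝ×ℝ, p.2 ≤ b → (f p).2 < b)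
    (hcm : CommT f) :
    ∀ p : ℝ×ℝ, p.2 ≤ a → (f p).2 < a := by
  by_contra hcon
  push_neg at hcon
  obtain ⟨p, hp, hfp⟩ := hcon
  have H := lemA f hc hc' a hlinea p hp hfp
  -- image bound on fundamental domain
  have hK : IsCompact ((Set.Icc (0:ℝ) 1) ×ˢ (Set.Icc b a)) := isCompact_Icc.prod isCompact_Icc
  have hKne : ((Set.Icc (0:ℝ) 1) ×ˢ (Set.Icc b a)).Nonempty :=
    ⟨(0, b), by simp [Set.mem_prod, hba.le]⟩
  obtain ⟨w0, hw0, hB⟩ := hK.exists_isMaxOn hKne ((continuous_snd.comp hc).continuousOn)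
  rw [isMaxOn_iff] at hB
  set B := (f w0).2 with hBdef
  set q : ℝ×ℝ := (0, max a B + 1) with hqdef
  have hqa : a ≤ q.2 := by
    simp only [hqdef]
    have := le_max_left a B
    linarith
  set w := f.symm q with hwdef
  have hw2a : w.2 < a := H q hqa
  have hw2b : b < w.2 := by
    by_contra hb2
    push_neg at hb2
    have := hgoodb w hb2
    rw [hwdef, f.apply_symm_apply] at this
    linarith
  set m : ℤ := ⌊w.1⌋ with hmdef
  set u : ℝ×ℝ := (w.1 + (-m : ℤ), w.2) with hudef
  have hu : u ∈ (Set.Icc (0:ℝ) 1) ×ˢ (Set.Icc b a) := by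
    constructor
    · simp only [hudef]
      constructor
      · push_cast
        have h1 : (0:ℝ) ≤ w.1 - ⌊w.1⌋ := by
          have := Int.floor_le w.1
          linarith
        push_cast at h1 ⊢
        linarith
      · have h2 : w.1 - ⌊w.1⌋ < 1 := by
          have := Int.lt_floor_add_one w.1
          linarith
        push_cast
        linarith
    · exact ⟨le_of_lt hw2b, le_of_lt hw2a⟩
  have hfu : (f u).2 = q.2 := by
    have := hcm (-m) w
    rw [hudef]
    rw [this]
    simp only [hwdef, f.apply_symm_apply]
  have := hB u hu
  simp only [Function.comp] at this
  rw [hfu] at this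
  simp only [hqdef] at this
  have := le_max_right a B
  simp only [hBdef] at *
  linarith



def psiF (f : Equiv.Perm (ℝ × ℝ)) (n : ℕ) (z : ℝ×ℝ) : ℝ := ((f^n) z).1 - z.1


lemma pow_apply_succ (j : ℕ) (z : ℝ×ℝ) : (f^(j+1)) z = f ((f^j) z) := by
  rw [pow_succ']
  simp [Equiv.Perm.mul_apply]

lemma cocycle (m n : ℕ) (z : ℝ×ℝ) : psiF f (m+n) z = psiF f n z + psiF f m ((f^n) z) := by
  unfold psiF
  have : (f^(m+n)) z = (f^m) ((f^n) z) := by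
    rw [pow_add]
    simp [Equiv.Perm.mul_apply]
  rw [this]
  ring

lemma psiF_periodic (hcm : CommT f) (n : ℕ) (m : ℤ) (z : ℝ×ℝ) :
    psiF f n (z.1 + m, z.2) = psiF f n z := by
  unfold psiF
  have hp : CommT (f ^ n) := by
    induction n with
    | zero => intro m z; simp
    | succ n ih =>
        intro m' z'
        rw [pow_apply_succ, pow_apply_succ, ih m' z', hcm m' ((f^n) z')]
  rw [hp m z]
  simp

lemma trap_up (a : ℝ) (hga : ∀ p : ℝ×ℝ, p.2 ≤ a → (f p).2 < a) (z : ℝ×ℝ) (hz : z.2 ≤ a) :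
    ∀ j : ℕ, ((f^j) z).2 ≤ a := by
  intro j
  induction j with
  | zero => simpa using hz
  | succ j ih => rw [pow_apply_succ]; exact le_of_lt (hga _ ih)

lemma low_persist (b : ℝ) (hgb : ∀ p : ℝ×ℝ, p.2 ≤ b → (f p).2 < b) (z : ℝ×ℝ) (j : ℕ)
    (h : ((f^j) z).2 < b) : ∀ k : ℕ, ((f^(j+k)) z).2 < b := by
  intro k
  induction k with
  | zero => simpa using h
  | succ k ih =>
      have : j + (k+1) = (j+k) + 1 := by ring
      rw [this, pow_apply_succ]
      exact hgb _ (le_of_lt ih)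

lemma band_segment (a b : ℝ)
    (hga : ∀ p : ℝ×ℝ, p.2 ≤ a → (f p).2 < a) (hgb : ∀ p : ℝ×ℝ, p.2 ≤ b → (f p).2 < b)
    (z : ℝ×ℝ) (n : ℕ) (hz : z ∈ BandAB a b) (hfz : b ≤ ((f^n) z).2) :
    ∀ j : ℕ, j ≤ n → (f^j) z ∈ BandAB a b := by
  intro j hj
  constructor
  · by_contra hlow
    push_neg at hlow
    obtain ⟨k, hk⟩ := Nat.le.dest hj
    have := low_persist f b hgb z j hlow k
    rw [hk] at this
    linarith
  · exact trap_up f a hga z hz.2 j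

lemma exists_step_bound (hc : Continuous f) (hcm : CommT f) (a b : ℝ) (hba : b ≤ a) :
    ∃ M : ℝ, 0 ≤ M ∧ ∀ z ∈ BandAB a b, |(f z).1 - z.1| ≤ M := by
  have hK : IsCompact ((Set.Icc (0:ℝ) 1) ×ˢ (Set.Icc b a)) := isCompact_Icc.prod isCompact_Icc
  have hKne : ((Set.Icc (0:ℝ) 1) ×ˢ (Set.Icc b a)).Nonempty := ⟨(0, b), by simp [Set.mem_prod, hba]⟩
  have hcont : ContinuousOn (fun w : ℝ×ℝ => |(f w).1 - w.1|) ((Set.Icc (0:ℝ) 1) ×ˢ (Set.Icc b a)) :=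
    (((continuous_fst.comp hc).sub continuous_fst).abs).continuousOn
  obtain ⟨w0, hw0, hB⟩ := hK.exists_isMaxOn hKne hcont
  rw [isMaxOn_iff] at hB
  refine ⟨|(f w0).1 - w0.1|, abs_nonneg _, ?_⟩
  intro z hz
  set m : ℤ := ⌊z.1⌋ with hmdef
  set u : ℝ×ℝ := (z.1 + (-m : ℤ), z.2) with hudef
  have hu : u ∈ (Set.Icc (0:ℝ) 1) ×ˢ (Set.Icc b a) := by
    constructor
    · simp only [hudef]
      constructor
      · have h1 : (0:ℝ) ≤ z.1 - ⌊z.1⌋ := by have := Int.floor_le z.1; linarith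
        push_cast at h1 ⊢; linarith
      · have h2 : z.1 - ⌊z.1⌋ < 1 := by have := Int.lt_floor_add_one z.1; linarith
        push_cast; linarith
    · exact ⟨hz.1, hz.2⟩
  have hval : |(f u).1 - u.1| = |(f z).1 - z.1| := by
    rw [hudef, hcm (-m) z]
    simp only
    congr 1
    push_cast
    ring
  have := hB u hu
  rw [hval] at this
  exact this

lemma seg_bound (M : ℝ) (a b : ℝ) (hM : ∀ z ∈ BandAB a b, |(f z).1 - z.1| ≤ M)
    (w : ℝ×ℝ) (m : ℕ) (hseg : ∀ j : ℕ, j ≤ m → (f^j) w ∈ BandAB a b) :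
    |psiF f m w| ≤ m * M := by
  induction m with
  | zero => simp [psiF]
  | succ m ih =>
      have hco : psiF f (1 + m) w = psiF f m w + psiF f 1 ((f^m) w) := cocycle f 1 m w
      rw [show m + 1 = 1 + m by ring, hco]
      have h1 : |psiF f m w| ≤ m * M := ih (fun j hj => hseg j (le_trans hj (Nat.le_succ m)))
      have h2 : |psiF f 1 ((f^m) w)| ≤ M := by
        have hmem := hseg m (Nat.le_succ m)
        have := hM ((f^m) w) hmem
        unfold psiF
        rw [pow_one]
        exact this
      calc |psiF f m w + psiF f 1 ((f^m) w)| ≤ |psiF f m w| + |psiF f 1 ((f^m) w)| := abs_add_le _ _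
        _ ≤ m * M + M := by linarith
        _ = ((1+m : ℕ) : ℝ) * M := by push_cast; ring

lemma band_closed (a b : ℝ) : IsClosed (BandAB a b) := by
  have h : BandAB a b = Prod.snd ⁻¹' (Set.Icc b a) := rfl
  rw [h]; exact isClosed_Icc.preimage continuous_snd

lemma band_Tinv (a b : ℝ) (m : ℤ) (z : ℝ×ℝ) (hz : z ∈ BandAB a b) :
    ((z.1 + (m:ℝ), z.2) : ℝ×ℝ) ∈ BandAB a b := hz

lemma theta_closed (hc : Continuous f) (hc' : Continuous f.symm) {E : Set (ℝ×ℝ)}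
    (hE : IsClosed E) : IsClosed (ThetaZ f E) := by
  apply isClosed_iInter
  intro i
  rw [Equiv.image_eq_preimage_symm, symm_zpow f i]
  exact hE.preimage (contPowZ f hc hc' (-i))

lemma theta_subset (E : Set (ℝ×ℝ)) : ThetaZ f E ⊆ E := by
  intro z hz
  have := (mem_theta_iff f E z).mp hz 0
  simpa using this

lemma theta_mapsN (E : Set (ℝ×ℝ)) (z : ℝ×ℝ) (hz : z ∈ ThetaZ f E) (n : ℕ) :
    (f^n) z ∈ ThetaZ f E := by
  have h := theta_mapsto f E z hz (n:ℤ)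
  have h2 : (f ^ (n:ℤ)) = f ^ n := zpow_natCast f n
  rwa [h2] at h

lemma theta_Tinv (hcm : CommT f) (a b : ℝ) (m : ℤ) (z : ℝ×ℝ)
    (hz : z ∈ ThetaZ f (BandAB a b)) : ((z.1 + (m:ℝ), z.2) : ℝ×ℝ) ∈ ThetaZ f (BandAB a b) := by
  rw [mem_theta_iff] at hz ⊢
  intro i
  rw [commT_powZ f hcm i m z]
  exact hz i

def fundK (a b : ℝ) : Set (ℝ×ℝ) := (Set.Icc (0:ℝ) 1) ×ˢ (Set.Icc b a)

lemma fundK_compact (a b : ℝ) : IsCompact (fundK a b) := isCompact_Icc.prod isCompact_Icc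

lemma normalize_mem (a b : ℝ) (z : ℝ×ℝ) (hz : z ∈ BandAB a b) :
    ((z.1 + ((-⌊z.1⌋ : ℤ):ℝ), z.2) : ℝ×ℝ) ∈ fundK a b := by
  constructor
  · constructor
    · have h1 : (0:ℝ) ≤ z.1 - ⌊z.1⌋ := by have := Int.floor_le z.1; linarith
      push_cast at h1 ⊢; linarith
    · have h2 : z.1 - ⌊z.1⌋ < 1 := by have := Int.lt_floor_add_one z.1; linarith
      push_cast; linarith
  · exact ⟨hz.1, hz.2⟩

lemma dist_translate (c : ℝ) (p q : ℝ×ℝ) :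
    dist ((p.1 + c, p.2) : ℝ×ℝ) ((q.1 + c, q.2) : ℝ×ℝ) = dist p q := by
  rw [Prod.dist_eq, Prod.dist_eq]
  simp only [Real.dist_eq]
  congr 2
  ring_nf

lemma exists_theta_maximizer (hc : Continuous f) (hcm : CommT f) (a b : ℝ)
    (hTh : (ThetaZ f (BandAB a b)).Nonempty)
    (hc'' : Continuous f.symm)
    (g : ℝ×ℝ → ℝ) (hgcont : Continuous g)
    (hgper : ∀ (m : ℤ) (z : ℝ×ℝ), g (z.1 + (m:ℝ), z.2) = g z) :
    ∃ w ∈ ThetaZ f (BandAB a b), ∀ u ∈ ThetaZ f (BandAB a b), g u ≤ g w := by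
  set Th := ThetaZ f (BandAB a b) with hThdef
  set Thc := Th ∩ fundK a b with hThcdef
  have hThclosed : IsClosed Th := theta_closed f hc hc'' (band_closed a b)
  have hThc_cpt : IsCompact Thc := (fundK_compact a b).inter_left hThclosed
  have hnorm : ∀ u ∈ Th, ((u.1 + ((-⌊u.1⌋ : ℤ):ℝ), u.2) : ℝ×ℝ) ∈ Thc := by
    intro u hu
    exact ⟨theta_Tinv f hcm a b (-⌊u.1⌋) u hu,
      normalize_mem a b u (theta_subset f _ hu)⟩
  have hThc_ne : Thc.Nonempty := by
    obtain ⟨z, hz⟩ := hTh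
    exact ⟨_, hnorm z hz⟩
  obtain ⟨w, hw, hmax⟩ := hThc_cpt.exists_isMaxOn hThc_ne hgcont.continuousOn
  rw [isMaxOn_iff] at hmax
  refine ⟨w, hw.1, ?_⟩
  intro u hu
  have := hmax _ (hnorm u hu)
  rwa [hgper (-⌊u.1⌋) u] at this

lemma pow_apply_add (i k : ℕ) (z : ℝ×ℝ) : (f^i) ((f^k) z) = (f^(i+k)) z := by
  rw [pow_add]
  simp [Equiv.Perm.mul_apply]

lemma approach (hc : Continuous f) (hc' : Continuous f.symm) (hcm : CommT f) (a b : ℝ)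
    (δ : ℝ) (hδ : 0 < δ) :
    ∃ N : ℕ, ∀ w : ℝ×ℝ, (∀ j : ℕ, j ≤ 2*N → (f^j) w ∈ BandAB a b) →
      ∃ θ ∈ ThetaZ f (BandAB a b), dist ((f^N) w) θ ≤ δ := by
  by_contra hcon
  push_neg at hcon
  choose w hw1 hw2 using hcon
  set v : ℕ → ℝ×ℝ := fun N => (f^N) (w N) with hvdef
  set u : ℕ → ℝ×ℝ := fun N => ((v N).1 + ((-⌊(v N).1⌋ : ℤ):ℝ), (v N).2) with hudef
  have hvBand : ∀ N, v N ∈ BandAB a b := fun N => hw1 N N (by omega)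
  have huK : ∀ N, u N ∈ fundK a b := fun N => normalize_mem a b (v N) (hvBand N)
  have hu_orbit : ∀ (N : ℕ) (i : ℤ), |i| ≤ N → (f^i : Equiv.Perm (ℝ×ℝ)) (u N) ∈ BandAB a b := by
    intro N i hi
    have h1 : (f^i : Equiv.Perm (ℝ×ℝ)) (u N)
        = (((f^i : Equiv.Perm (ℝ×ℝ)) (v N)).1 + ((-⌊(v N).1⌋ : ℤ):ℝ),
           ((f^i : Equiv.Perm (ℝ×ℝ)) (v N)).2) := commT_powZ f hcm i (-⌊(v N).1⌋) (v N)
    have h0 : (0:ℤ) ≤ (N:ℤ) + i := by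
      have := abs_le.mp hi; omega
    have h2 : (f^i : Equiv.Perm (ℝ×ℝ)) (v N) = (f^(((N:ℤ) + i).toNat)) (w N) :=
      powCompZN f i N (w N) h0
    have h3 : ((N:ℤ) + i).toNat ≤ 2*N := by
      have := abs_le.mp hi; omega
    have h4 : (f^i : Equiv.Perm (ℝ×ℝ)) (v N) ∈ BandAB a b := by
      rw [h2]; exact hw1 N _ h3
    rw [h1]
    exact band_Tinv a b _ _ h4
  have hu_far : ∀ (N : ℕ) (θ : ℝ×ℝ), θ ∈ ThetaZ f (BandAB a b) → δ < dist (u N) θ := by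
    intro N θ hθ
    set c : ℝ := ((-⌊(v N).1⌋ : ℤ):ℝ) with hcdef
    set θ' : ℝ×ℝ := (θ.1 + (((⌊(v N).1⌋:ℤ)):ℝ), θ.2) with hθ'def
    have hθ'Th : θ' ∈ ThetaZ f (BandAB a b) := theta_Tinv f hcm a b _ θ hθ
    have key := hw2 N θ' hθ'Th
    have hdist : dist (u N) θ = dist (v N) θ' := by
      rw [Prod.dist_eq, Prod.dist_eq]
      have h1 : dist (u N).1 θ.1 = dist (v N).1 θ'.1 := by
        rw [Real.dist_eq, Real.dist_eq]
        congr 1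
        simp only [hudef, hθ'def]
        push_cast
        ring
      have h2 : dist (u N).2 θ.2 = dist (v N).2 θ'.2 := rfl
      rw [h1, h2]
    rw [hdist]
    exact key
  obtain ⟨ul, hulK, φ, hφmono, hconv⟩ := (fundK_compact a b).tendsto_subseq huK
  have hulTh : ul ∈ ThetaZ f (BandAB a b) := by
    rw [mem_theta_iff]
    intro i
    have htend : Filter.Tendsto (fun N => (f^i : Equiv.Perm (ℝ×ℝ)) (u (φ N)))
        Filter.atTop (𝓝 ((f^i : Equiv.Perm (ℝ×ℝ)) ul)) :=
      ((contPowZ f hc hc' i).tendsto ul).comp hconv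
    refine (band_closed a b).mem_of_tendsto htend ?_
    refine Filter.eventually_atTop.mpr ⟨i.natAbs, fun N hN => ?_⟩
    apply hu_orbit (φ N) i
    have h5 : N ≤ φ N := hφmono.le_apply
    have h6 : i.natAbs ≤ φ N := le_trans hN h5
    rw [Int.abs_eq_natAbs]
    exact_mod_cast h6
  have htend0 : Filter.Tendsto (fun N => dist (u (φ N)) ul) Filter.atTop (𝓝 0) :=
    tendsto_iff_dist_tendsto_zero.mp hconv
  have hev : ∀ᶠ N in Filter.atTop, dist (u (φ N)) ul < δ := by
    have h := (Metric.tendsto_nhds.mp htend0) δ hδ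
    refine h.mono ?_
    intro N hN
    have h7 : |dist (u (φ N)) ul| < δ := by rwa [Real.dist_0_eq_abs] at hN
    calc dist (u (φ N)) ul ≤ |dist (u (φ N)) ul| := le_abs_self _
      _ < δ := h7
  obtain ⟨N, hN⟩ := hev.exists
  exact absurd (hu_far (φ N) ul hulTh) (by linarith)

lemma deep_bound (hc : Continuous f) (hc' : Continuous f.symm) (hcm : CommT f) (a b : ℝ)
    (s : ℝ) (r : ℕ) (βr : ℝ)
    (hβr : ∀ u ∈ ThetaZ f (BandAB a b), s * psiF f r u ≤ βr)
    (ε : ℝ) (hε : 0 < ε) :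
    ∃ N : ℕ, ∀ (z : ℝ×ℝ) (n j : ℕ), N ≤ j → j + N ≤ n →
      (∀ k : ℕ, k ≤ n → (f^k) z ∈ BandAB a b) →
      s * psiF f r ((f^j) z) ≤ βr + ε := by
  set g : ℝ×ℝ → ℝ := fun w => s * psiF f r w with hgdef
  have hgcont : Continuous g := by
    apply continuous_const.mul
    exact (continuous_fst.comp (contPowN f hc r)).sub continuous_fst
  set K' : Set (ℝ×ℝ) := (Set.Icc (-1:ℝ) 2) ×ˢ (Set.Icc (b-1) (a+1)) with hK'def
  have hK'c : IsCompact K' := isCompact_Icc.prod isCompact_Icc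
  have huc := hK'c.uniformContinuousOn_of_continuous hgcont.continuousOn
  rw [Metric.uniformContinuousOn_iff] at huc
  obtain ⟨δ0, hδ0, hδ0p⟩ := huc ε hε
  set δ : ℝ := min δ0 1 / 2 with hδdef
  have hmin : 0 < min δ0 1 := lt_min hδ0 one_pos
  have hδpos : 0 < δ := by rw [hδdef]; linarith
  obtain ⟨N, hN⟩ := approach f hc hc' hcm a b δ hδpos
  refine ⟨N, ?_⟩
  intro z n j hNj hjn hseg
  obtain ⟨k, hk⟩ := Nat.le.dest hNj
  set w := (f^k) z with hwdef
  have horb : ∀ i : ℕ, i ≤ 2*N → (f^i) w ∈ BandAB a b := by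
    intro i hi
    rw [hwdef, pow_apply_add]
    exact hseg (i+k) (by omega)
  obtain ⟨θ, hθTh, hθd⟩ := hN w horb
  have hfNw : (f^N) w = (f^j) z := by
    rw [hwdef, pow_apply_add, hk]
  rw [hfNw] at hθd
  set w' := (f^j) z with hw'def
  have hw'B : w' ∈ BandAB a b := hseg j (by omega)
  set m : ℤ := ⌊w'.1⌋ with hmdef
  set w'' : ℝ×ℝ := (w'.1 + ((-m:ℤ):ℝ), w'.2) with hw''def
  set θ'' : ℝ×ℝ := (θ.1 + ((-m:ℤ):ℝ), θ.2) with hθ''def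
  have hw''K : w'' ∈ fundK a b := normalize_mem a b w' hw'B
  have hθ''Th : θ'' ∈ ThetaZ f (BandAB a b) := theta_Tinv f hcm a b (-m) θ hθTh
  have hdist : dist w'' θ'' = dist w' θ := dist_translate ((-m:ℤ):ℝ) w' θ
  have hdd : dist w'' θ'' ≤ δ := by rw [hdist]; exact hθd
  have hδhalf : δ ≤ 1/2 := by
    rw [hδdef]
    have := min_le_right δ0 1
    linarith
  have hd1 : dist w''.1 θ''.1 ≤ δ := by
    calc dist w''.1 θ''.1 ≤ dist w'' θ'' := by rw [Prod.dist_eq]; exact le_max_left _ _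
      _ ≤ δ := hdd
  obtain ⟨hw1, hw2⟩ := hw''K
  rw [Set.mem_Icc] at hw1 hw2
  have hw''K' : w'' ∈ K' := by
    rw [hK'def, Set.mem_prod, Set.mem_Icc, Set.mem_Icc]
    exact ⟨⟨by linarith [hw1.1], by linarith [hw1.2]⟩, ⟨by linarith [hw2.1], by linarith [hw2.2]⟩⟩
  have hθ''K' : θ'' ∈ K' := by
    have hθB : θ'' ∈ BandAB a b := theta_subset f _ hθ''Th
    have habs : |w''.1 - θ''.1| ≤ δ := by rw [← Real.dist_eq]; exact hd1
    have h1 := abs_le.mp habs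
    rw [hK'def, Set.mem_prod, Set.mem_Icc, Set.mem_Icc]
    refine ⟨⟨?_, ?_⟩, ?_, ?_⟩
    · linarith [hw1.1, hδhalf]
    · linarith [hw1.2, hδhalf]
    · linarith [hθB.1]
    · linarith [hθB.2]
  have hlt : dist w'' θ'' < δ0 := by
    have := min_le_left δ0 1
    calc dist w'' θ'' ≤ δ := hdd
      _ < min δ0 1 := by rw [hδdef]; linarith
      _ ≤ δ0 := this
  have hgd := hδ0p w'' hw''K' θ'' hθ''K' hlt
  rw [Real.dist_eq] at hgd
  have hper : g w'' = g w' := by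
    simp only [hgdef]
    congr 1
    exact psiF_periodic f hcm r (-m) w'
  have hθval : g θ'' ≤ βr := hβr θ'' hθ''Th
  have hfin : g w'' - g θ'' < ε :=
    lt_of_le_of_lt (le_abs_self _) hgd
  show g w' ≤ βr + ε
  rw [← hper]
  linarith

set_option maxHeartbeats 1000000 in
lemma key (hc : Continuous f) (hc' : Continuous f.symm) (hcm : CommT f)
    (a b : ℝ) (hba : b ≤ a)
    (hga : ∀ p : ℝ×ℝ, p.2 ≤ a → (f p).2 < a) (hgb : ∀ p : ℝ×ℝ, p.2 ≤ b → (f p).2 < b)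
    (hTh : (ThetaZ f (BandAB a b)).Nonempty)
    (s : ℝ) (hs : |s| = 1) :
    ∃ γ : ℝ,
      (∀ m : ℕ, 1 ≤ m → ∀ ε : ℝ, 0 < ε → ∃ n : ℕ, m ≤ n ∧ 1 ≤ n ∧
        ∃ w, w ∈ ThetaZ f (BandAB a b) ∧
        γ ≤ s * (psiF f n w / n) ∧ s * (psiF f n w / n) < γ + ε) ∧
      (∀ ε : ℝ, 0 < ε → ∃ N : ℕ, 1 ≤ N ∧ ∀ n : ℕ, N ≤ n → ∀ z ∈ BandAB a b,
        (f^n) z ∈ BandAB a b → s * (psiF f n z / n) ≤ γ + ε) := by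
  have habs : ∀ x : ℝ, |s * x| = |x| := by
    intro x; rw [abs_mul, hs, one_mul]
  have hThseg : ∀ w ∈ ThetaZ f (BandAB a b), ∀ j : ℕ, (f^j) w ∈ BandAB a b := by
    intro w hw j
    exact theta_subset f _ (theta_mapsN f _ w hw j)
  obtain ⟨M, hM0, hM⟩ := exists_step_bound f hc hcm a b hba
  -- maximizers
  have hmax : ∀ n : ℕ, ∃ w ∈ ThetaZ f (BandAB a b), ∀ u ∈ ThetaZ f (BandAB a b),
      s * psiF f n u ≤ s * psiF f n w := by
    intro n
    apply exists_theta_maximizer f hc hcm a b hTh hc'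
    · exact continuous_const.mul (((continuous_fst.comp (contPowN f hc n)).sub continuous_fst))
    · intro m z
      rw [psiF_periodic f hcm n m z]
  choose W hWTh hWmax using hmax
  set β : ℕ → ℝ := fun n => s * psiF f n (W n) with hβdef
  have hβbound : ∀ n : ℕ, |β n| ≤ n * M := by
    intro n
    rw [hβdef]
    simp only
    rw [habs]
    exact seg_bound f M a b hM (W n) n (fun j _ => hThseg (W n) (hWTh n) j)
  have hβ0 : β 0 = 0 := by
    simp only [hβdef, psiF, pow_zero]
    simp
  have hβsub : ∀ m n : ℕ, β (m+n) ≤ β m + β n := by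
    intro m n
    have hco := cocycle f m n (W (m+n))
    have h1 : s * psiF f n (W (m+n)) ≤ β n := hWmax n (W (m+n)) (hWTh (m+n))
    have h2 : s * psiF f m ((f^n) (W (m+n))) ≤ β m :=
      hWmax m _ (theta_mapsN f _ _ (hWTh (m+n)) n)
    have : β (m+n) = s * psiF f n (W (m+n)) + s * psiF f m ((f^n) (W (m+n))) := by
      rw [hβdef]; simp only; rw [hco]; ring
    linarith
  have hβmul : ∀ (k r : ℕ), β (k*r) ≤ k * β r := by
    intro k r
    induction k with
    | zero => simp [hβ0]
    | succ k ih =>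
        have : (k+1)*r = k*r + r := by ring
        rw [this]
        have h1 := hβsub (k*r) r
        rw [Nat.cast_add, Nat.cast_one]
        linarith
  set Bs : Set ℝ := {x | ∃ n : ℕ, 1 ≤ n ∧ x = β n / n} with hBsdef
  have hBne : Bs.Nonempty := ⟨β 1 / ((1:ℕ):ℝ), 1, le_refl 1, rfl⟩
  have hBbdd : BddBelow Bs := by
    refine ⟨-M, ?_⟩
    rintro x ⟨n, hn1, rfl⟩
    have hb := hβbound n
    have hn0 : (0:ℝ) < n := by exact_mod_cast hn1
    rw [le_div_iff₀ hn0]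
    have := (abs_le.mp hb).1
    linarith
  set γ : ℝ := sInf Bs with hγdef
  have hγle : ∀ n : ℕ, 1 ≤ n → γ ≤ β n / n := by
    intro n hn
    exact csInf_le hBbdd ⟨n, hn, rfl⟩
  have hγapprox : ∀ ε : ℝ, 0 < ε → ∃ r : ℕ, 1 ≤ r ∧ β r / r < γ + ε := by
    intro ε hε
    have hlt : sInf Bs < γ + ε := by rw [← hγdef]; linarith
    obtain ⟨x, hxB, hxlt⟩ := exists_lt_of_csInf_lt hBne hlt
    obtain ⟨r, hr1, rfl⟩ := hxB
    exact ⟨r, hr1, hxlt⟩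
  refine ⟨γ, ?_, ?_⟩
  · -- bullet 1
    intro m hm ε hε
    obtain ⟨r, hr1, hrlt⟩ := hγapprox ε hε
    have hn1 : 1 ≤ m*r := Nat.mul_pos hm hr1
    have hn0 : (0:ℝ) < ((m*r : ℕ):ℝ) := by exact_mod_cast hn1
    have hm' : m ≤ m * r := Nat.le_mul_of_pos_right m hr1
    have hval : s * (psiF f (m*r) (W (m*r)) / ((m*r:ℕ):ℝ)) = β (m*r) / ((m*r:ℕ):ℝ) := by
      rw [hβdef]; ring
    refine ⟨m*r, hm', hn1, W (m*r), hWTh (m*r), ?_, ?_⟩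
    · rw [hval]; exact hγle _ hn1
    · rw [hval]
      have hm0 : (0:ℝ) < m := by exact_mod_cast hm
      have hr0 : (0:ℝ) < r := by exact_mod_cast hr1
      rw [div_lt_iff₀ hn0]
      have h3 : β r < (γ + ε) * r := by rwa [div_lt_iff₀ hr0] at hrlt
      have h4 : (m:ℝ) * β r < (m:ℝ) * ((γ+ε) * r) := by
        exact mul_lt_mul_of_pos_left h3 hm0
      have h5 : β (m*r) ≤ (m:ℝ) * β r := hβmul m r
      rw [Nat.cast_mul]
      nlinarith
  · -- bullet 2
    intro ε hε
    have hε' : 0 < ε/3 := by linarith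
    obtain ⟨r, hr1, hrlt⟩ := hγapprox (ε/3) hε'
    have hr0 : (0:ℝ) < r := by exact_mod_cast hr1
    have hβrle : β r ≤ (r:ℝ) * (γ + ε/3) := by
      rw [div_lt_iff₀ hr0] at hrlt
      linarith
    obtain ⟨N, hdeep⟩ := deep_bound f hc hc' hcm a b s r (β r)
      (fun u hu => hWmax r u hu) (ε/3) hε'
    set C : ℝ := ((2*N + r : ℕ):ℝ) * (M + |γ + ε/3|) with hCdef
    have hC0 : 0 ≤ C := by
      apply mul_nonneg
      · positivity
      · positivity
    set N₁ : ℕ := max (2*N + 1) (⌈C / (ε/3)⌉₊ + 1) with hN₁def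
    refine ⟨N₁, le_trans (by omega) (le_max_left _ _), ?_⟩
    intro n hn z hz hfz
    have hn2N : 2*N + 1 ≤ n := le_trans (le_max_left _ _) hn
    have hnC : (⌈C / (ε/3)⌉₊ + 1 : ℕ) ≤ n := le_trans (le_max_right _ _) hn
    have hn1 : 1 ≤ n := by omega
    have hn0 : (0:ℝ) < (n:ℝ) := by exact_mod_cast hn1
    have hseg : ∀ k : ℕ, k ≤ n → (f^k) z ∈ BandAB a b :=
      band_segment f a b hga hgb z n hz hfz.1
    set q : ℕ := (n - 2*N) / r with hqdef
    set t : ℕ := (n - 2*N) % r with htdef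
    have hqt : q*r + t = n - 2*N := by
      rw [hqdef, htdef, Nat.mul_comm]
      exact Nat.div_add_mod _ _
    have htr : t < r := Nat.mod_lt _ hr1
    have hneq : n = 2*N + (q*r + t) := by omega
    have hblock : ∀ i : ℕ, i ≤ q → s * psiF f (i*r) ((f^N) z) ≤ (i:ℝ) * (β r + ε/3) := by
      intro i
      induction i with
      | zero => intro _; simp [psiF, pow_zero]
      | succ i ih =>
          intro hi
          have hi' : i ≤ q := by omega
          have hih := ih hi'
          have hco := cocycle f r (i*r) ((f^N) z)
          have hre : (i+1)*r = r + i*r := by ring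
          have hpt : (f^(i*r)) ((f^N) z) = (f^(i*r + N)) z := pow_apply_add f (i*r) N z
          have hmul : i*r ≤ q*r := Nat.mul_le_mul_right r hi'
          have hdb : s * psiF f r ((f^(i*r + N)) z) ≤ β r + ε/3 := by
            apply hdeep z n (i*r + N) (by omega) (by omega) hseg
          have heq : s * psiF f ((i+1)*r) ((f^N) z)
              = s * psiF f (i*r) ((f^N) z) + s * psiF f r ((f^(i*r + N)) z) := by
            rw [hre, hco, hpt]; ring
          rw [heq, Nat.cast_add, Nat.cast_one]
          linarith
    have hd1 : n = (q*r + (N + t)) + N := by omega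
    have hco1 : psiF f n z = psiF f N z + psiF f (q*r + (N+t)) ((f^N) z) := by
      conv_lhs => rw [hd1]
      exact cocycle f (q*r + (N+t)) N z
    have hco2 : psiF f (q*r + (N+t)) ((f^N) z)
        = psiF f (q*r) ((f^N) z) + psiF f (N+t) ((f^(q*r)) ((f^N) z)) := by
      have h := cocycle f (N+t) (q*r) ((f^N) z)
      rw [show (N+t) + q*r = q*r + (N+t) by ring] at h
      exact h
    have hpt2 : (f^(q*r)) ((f^N) z) = (f^(q*r + N)) z := pow_apply_add f (q*r) N z
    have hbd1 : |psiF f N z| ≤ (N:ℝ) * M := by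
      apply seg_bound f M a b hM z N
      intro j hj; exact hseg j (by omega)
    have hbd2 : |psiF f (N+t) ((f^(q*r + N)) z)| ≤ ((N+t:ℕ):ℝ) * M := by
      apply seg_bound f M a b hM
      intro j hj
      rw [pow_apply_add]
      exact hseg _ (by omega)
    have hmid : s * psiF f (q*r) ((f^N) z) ≤ (q:ℝ) * (β r + ε/3) := hblock q (le_refl q)
    have htot : s * psiF f n z
        ≤ (N:ℝ)*M + (q:ℝ) * (β r + ε/3) + ((N+t:ℕ):ℝ)*M := by
      have e : s * psiF f n z = s * psiF f N z + s * psiF f (q*r) ((f^N) z)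
          + s * psiF f (N+t) ((f^(q*r + N)) z) := by
        rw [hco1, hco2, hpt2]; ring
      rw [e]
      have b1 : s * psiF f N z ≤ (N:ℝ)*M :=
        le_trans (le_abs_self _) (by rw [habs]; exact hbd1)
      have b3 : s * psiF f (N+t) ((f^(q*r+N)) z) ≤ ((N+t:ℕ):ℝ)*M :=
        le_trans (le_abs_self _) (by rw [habs]; exact hbd2)
      linarith
    -- real arithmetic
    have hQ0 : (0:ℝ) ≤ q := Nat.cast_nonneg q
    have hT0 : (0:ℝ) ≤ t := Nat.cast_nonneg t
    have hN0 : (0:ℝ) ≤ N := Nat.cast_nonneg N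
    have hTR : (t:ℝ) ≤ r := by exact_mod_cast htr.le
    have hR1 : (1:ℝ) ≤ r := by exact_mod_cast hr1
    have hcast : (n:ℝ) = 2*(N:ℝ) + (q:ℝ)*(r:ℝ) + (t:ℝ) := by
      have := congrArg (fun x : ℕ => (x:ℝ)) hneq
      push_cast at this
      linarith
    have hQβ : (q:ℝ) * β r ≤ (q:ℝ) * ((r:ℝ)*(γ+ε/3)) := mul_le_mul_of_nonneg_left hβrle hQ0
    have habs1 : -((2*(N:ℝ)+(t:ℝ))*(γ+ε/3)) ≤ (2*(N:ℝ)+(t:ℝ))*|γ+ε/3| := by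
      have h1 : -(γ+ε/3) ≤ |γ+ε/3| := neg_le_abs _
      have h2 := mul_le_mul_of_nonneg_left h1 (by linarith : (0:ℝ) ≤ 2*(N:ℝ)+(t:ℝ))
      linarith [h2]
    have habs2 : (2*(N:ℝ)+(t:ℝ))*|γ+ε/3| ≤ (2*(N:ℝ)+(r:ℝ))*|γ+ε/3| :=
      mul_le_mul_of_nonneg_right (by linarith) (abs_nonneg _)
    have hQR : (q:ℝ)*(r:ℝ) ≤ (n:ℝ) := by linarith [hcast, hN0, hT0]
    have hQ1 : (q:ℝ) ≤ (q:ℝ)*(r:ℝ) := by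
      have h6 : (0:ℝ) ≤ (q:ℝ) * ((r:ℝ) - 1) := mul_nonneg hQ0 (by linarith)
      linarith [h6]
    have hQε : (q:ℝ)*(ε/3) ≤ (n:ℝ)*(ε/3) := by
      have h7 : (q:ℝ) ≤ (n:ℝ) := le_trans hQ1 hQR
      exact mul_le_mul_of_nonneg_right h7 (le_of_lt hε')
    have hCn : C ≤ (n:ℝ) * (ε/3) := by
      have h1 : C / (ε/3) ≤ (⌈C / (ε/3)⌉₊ : ℝ) := Nat.le_ceil _
      have h2 : ((⌈C / (ε/3)⌉₊ : ℕ):ℝ) + 1 ≤ (n:ℝ) := by exact_mod_cast hnC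
      have h3 : C / (ε/3) ≤ (n:ℝ) := by linarith
      calc C = (C / (ε/3)) * (ε/3) := by field_simp
        _ ≤ (n:ℝ) * (ε/3) := mul_le_mul_of_nonneg_right h3 (le_of_lt hε')
    have hCexp : C = (2*(N:ℝ)+(r:ℝ)) * (M + |γ+ε/3|) := by
      rw [hCdef]; push_cast; ring
    have hfinal : s * psiF f n z ≤ (n:ℝ) * (γ + ε) := by
      have edge : (N:ℝ)*M + ((N+t:ℕ):ℝ)*M ≤ (2*(N:ℝ)+(r:ℝ))*M := by
        have hc3 : ((N+t:ℕ):ℝ) = (N:ℝ) + (t:ℝ) := by exact_mod_cast Nat.cast_add N t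
        rw [hc3]
        nlinarith
      -- q(βr+ε/3) ≤ qr(γ+ε/3) + qε/3
      have m1 : (q:ℝ)*(β r + ε/3) ≤ (q:ℝ)*(r:ℝ)*(γ+ε/3) + (q:ℝ)*(ε/3) := by
        have := hQβ
        nlinarith
      have m2 : (q:ℝ)*(r:ℝ)*(γ+ε/3) ≤ (n:ℝ)*(γ+ε/3) + (2*(N:ℝ)+(r:ℝ))*|γ+ε/3| := by
        have e1 : (q:ℝ)*(r:ℝ)*(γ+ε/3) = (n:ℝ)*(γ+ε/3) - (2*(N:ℝ)+(t:ℝ))*(γ+ε/3) := by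
          rw [hcast]; ring
        rw [e1]
        linarith [habs1, habs2]
      have : s * psiF f n z ≤ (n:ℝ)*(γ+ε/3) + (n:ℝ)*(ε/3) + C := by
        rw [hCexp]
        linarith [htot, edge, m1, m2, hQε]
      calc s * psiF f n z ≤ (n:ℝ)*(γ+ε/3) + (n:ℝ)*(ε/3) + C := this
        _ ≤ (n:ℝ)*(γ+ε/3) + (n:ℝ)*(ε/3) + (n:ℝ)*(ε/3) := by linarith [hCn]
        _ = (n:ℝ) * (γ + ε) := by ring
    have : s * (psiF f n z / (n:ℝ)) = (s * psiF f n z) / (n:ℝ) := by ring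
    rw [this, div_le_iff₀ hn0]
    linarith [hfinal]

lemma mem_rhoB_of_approx (K : Set (ℝ×ℝ)) (γ : ℝ)
    (h : ∀ m : ℕ, 1 ≤ m → ∀ ε : ℝ, 0 < ε → ∃ n : ℕ, m ≤ n ∧ ∃ w : ℝ×ℝ,
      w ∈ K ∧ (f^n) w ∈ K ∧ |(((f^n) w).1 - w.1)/(n:ℝ) - γ| < ε) :
    (γ : EReal) ∈ rhoB f K := by
  rw [rhoB]
  refine Set.mem_iInter.mpr fun m => Set.mem_iInter.mpr fun hm => ?_
  set T : Set ℝ := {x : ℝ | ∃ n : ℕ, m ≤ n ∧ ∃ w : ℝ×ℝ, w ∈ K ∧ (f^n) w ∈ K ∧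
      x = (((f^n) w).1 - w.1)/(n:ℝ)} with hT
  have hγT : γ ∈ closure T := by
    rw [Metric.mem_closure_iff]
    intro ε hε
    obtain ⟨n, hmn, w, hwK, hfwK, hlt⟩ := h m hm ε hε
    refine ⟨(((f^n) w).1 - w.1)/(n:ℝ), ⟨n, hmn, w, hwK, hfwK, rfl⟩, ?_⟩
    rw [Real.dist_eq, abs_sub_comm]
    exact hlt
  have hmaps : Set.MapsTo (fun x : ℝ => (x : EReal)) T
      (⋃ (n : ℕ), ⋃ (_ : m ≤ n), {x : EReal | ∃ zt ∈ K, (f ^ n) zt ∈ K ∧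
        x = (((((f ^ n) zt).1 - zt.1) / n : ℝ) : EReal)}) := by
    rintro x ⟨n, hmn, w, hwK, hfwK, rfl⟩
    refine Set.mem_iUnion.mpr ⟨n, Set.mem_iUnion.mpr ⟨hmn, ?_⟩⟩
    exact ⟨w, hwK, hfwK, rfl⟩
  exact map_mem_closure continuous_coe_real_ereal hγT hmaps

lemma rhoB_subset_Icc (K : Set (ℝ×ℝ)) (αv βv : ℝ)
    (hup : ∀ ε : ℝ, 0 < ε → ∃ N : ℕ, 1 ≤ N ∧ ∀ n : ℕ, N ≤ n → ∀ z, z ∈ K → (f^n) z ∈ K →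
      (((f^n) z).1 - z.1)/(n:ℝ) ≤ βv + ε)
    (hlo : ∀ ε : ℝ, 0 < ε → ∃ N : ℕ, 1 ≤ N ∧ ∀ n : ℕ, N ≤ n → ∀ z, z ∈ K → (f^n) z ∈ K →
      αv - ε ≤ (((f^n) z).1 - z.1)/(n:ℝ)) :
    rhoB f K ⊆ Set.Icc (αv : EReal) (βv : EReal) := by
  intro v hv
  rw [rhoB] at hv
  have hband : ∀ ε : ℝ, 0 < ε → ((αv - ε : ℝ):EReal) ≤ v ∧ v ≤ ((βv + ε : ℝ):EReal) := by
    intro ε hε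
    obtain ⟨N₁, hN₁1, hup'⟩ := hup ε hε
    obtain ⟨N₂, hN₂1, hlo'⟩ := hlo ε hε
    set m := max N₁ N₂ with hmdef
    have hm1 : 1 ≤ m := le_trans hN₁1 (le_max_left _ _)
    have hv' := Set.mem_iInter.mp (Set.mem_iInter.mp hv m) hm1
    have hsub : (⋃ (n : ℕ), ⋃ (_ : m ≤ n), {x : EReal | ∃ zt ∈ K, (f ^ n) zt ∈ K ∧
        x = (((((f ^ n) zt).1 - zt.1) / n : ℝ) : EReal)})
        ⊆ Set.Icc ((αv - ε : ℝ):EReal) ((βv + ε : ℝ):EReal) := by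
      rintro x hx
      obtain ⟨n, hn⟩ := Set.mem_iUnion.mp hx
      obtain ⟨hmn, hx2⟩ := Set.mem_iUnion.mp hn
      obtain ⟨z, hzK, hfzK, rfl⟩ := hx2
      constructor
      · exact EReal.coe_le_coe_iff.mpr (hlo' n (le_trans (le_max_right _ _) hmn) z hzK hfzK)
      · exact EReal.coe_le_coe_iff.mpr (hup' n (le_trans (le_max_left _ _) hmn) z hzK hfzK)
    exact (closure_minimal hsub isClosed_Icc) hv'
  constructor
  · by_contra hcon
    push_neg at hcon
    obtain ⟨x, hx1, hx2⟩ := EReal.lt_iff_exists_real_btwn.mp hcon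
    have hε : 0 < αv - x := by
      have := EReal.coe_lt_coe_iff.mp hx2
      linarith
    have h := (hband (αv - x) hε).1
    rw [show αv - (αv - x) = x by ring] at h
    exact absurd (lt_of_le_of_lt h hx1) (lt_irrefl _)
  · by_contra hcon
    push_neg at hcon
    obtain ⟨x, hx1, hx2⟩ := EReal.lt_iff_exists_real_btwn.mp hcon
    have hε : 0 < x - βv := by
      have := EReal.coe_lt_coe_iff.mp hx1
      linarith
    have h := (hband (x - βv) hε).2
    rw [show βv + (x - βv) = x by ring] at h
    exact absurd (lt_of_lt_of_le hx2 h) (lt_irrefl _)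

lemma band_result (hc : Continuous f) (hc' : Continuous f.symm) (hcm : CommT f)
    (a b : ℝ) (hba : b ≤ a)
    (hga : ∀ p : ℝ×ℝ, p.2 ≤ a → (f p).2 < a) (hgb : ∀ p : ℝ×ℝ, p.2 ≤ b → (f p).2 < b)
    (hTh : (ThetaZ f (BandAB a b)).Nonempty) :
    ∃ αv βv : ℝ, ((αv : EReal) ∈ rhoB f (ThetaZ f (BandAB a b))) ∧
      ((βv : EReal) ∈ rhoB f (ThetaZ f (BandAB a b))) ∧
      rhoB f (BandAB a b) ⊆ Set.Icc (αv:EReal) (βv:EReal) := by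
  obtain ⟨γp, hp1, hp2⟩ := key f hc hc' hcm a b hba hga hgb hTh 1 (by norm_num)
  obtain ⟨γm, hm1, hm2⟩ := key f hc hc' hcm a b hba hga hgb hTh (-1) (by norm_num)
  refine ⟨-γm, γp, ?_, ?_, ?_⟩
  · apply mem_rhoB_of_approx
    intro m hm ε hε
    obtain ⟨n, hmn, hn1, w, hwTh, hge, hlt⟩ := hm1 m hm ε hε
    refine ⟨n, hmn, w, hwTh, theta_mapsN f _ w hwTh n, ?_⟩
    have hψ : psiF f n w = ((f^n) w).1 - w.1 := rfl
    rw [← hψ, abs_lt]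
    constructor <;> nlinarith [hge, hlt]
  · apply mem_rhoB_of_approx
    intro m hm ε hε
    obtain ⟨n, hmn, hn1, w, hwTh, hge, hlt⟩ := hp1 m hm ε hε
    refine ⟨n, hmn, w, hwTh, theta_mapsN f _ w hwTh n, ?_⟩
    have hψ : psiF f n w = ((f^n) w).1 - w.1 := rfl
    rw [← hψ, abs_lt]
    constructor <;> nlinarith [hge, hlt]
  · apply rhoB_subset_Icc
    · intro ε hε
      obtain ⟨N, hN1, hb⟩ := hp2 ε hε
      refine ⟨N, hN1, fun n hn z hz hfz => ?_⟩
      have h := hb n hn z hz hfz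
      have hψ : psiF f n z = ((f^n) z).1 - z.1 := rfl
      rw [← hψ]
      nlinarith [h]
    · intro ε hε
      obtain ⟨N, hN1, hb⟩ := hm2 ε hε
      refine ⟨N, hN1, fun n hn z hz hfz => ?_⟩
      have h := hb n hn z hz hfz
      have hψ : psiF f n z = ((f^n) z).1 - z.1 := rfl
      rw [← hψ]
      nlinarith [h]

end Aux

end PropAux

open PropAux

/-- **Proposition 6.7.** Under (H₁)–(H₃), `ρ_{Ã_i}(f̃) ⊆ Conv(ρ_{Θ(Ã_i)}(f̃))` for
`i ∈ {0,1}`; in particular `ρ_{Ã₀}(f̃) ⊆ (0,+∞)` and `ρ_{Ã₁}(f̃) ⊆ (−∞,0)`. -/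
theorem rotation_set_of_band_in_hull
    (ftil : Equiv.Perm (ℝ × ℝ)) (hftc : Continuous ftil) (hftc' : Continuous ftil.symm)
    (hfI : IsotopicToIdP ftil)
    (hcomm : ∀ z : ℝ × ℝ, ftil (deckT z) = deckT (ftil z))
    (c0 c1 c2 : ℝ) (h01 : c1 < c0) (h12 : c2 < c1)
    (hH1 : ∀ c ∈ ({c0, c1, c2} : Set ℝ), ∀ p : ℝ × ℝ, p.2 = c → (ftil p).2 < c)
    (hH2 : ∀ n : ℕ, 1 ≤ n → ∃ p : ℝ × ℝ, p.2 = c0 ∧ ((ftil ^ n) p).2 = c2)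
    (hTh0 : (ThetaZ ftil (BandAB c0 c1)).Nonempty)
    (hTh1 : (ThetaZ ftil (BandAB c1 c2)).Nonempty)
    (hr0 : rhoB ftil (ThetaZ ftil (BandAB c0 c1)) ⊆ Ioo (0 : EReal) ⊤)
    (hr1 : rhoB ftil (ThetaZ ftil (BandAB c1 c2)) ⊆ Ioo ⊥ (0 : EReal)) :
    rhoB ftil (BandAB c0 c1) ⊆ erealHull (rhoB ftil (ThetaZ ftil (BandAB c0 c1))) ∧
    rhoB ftil (BandAB c1 c2) ⊆ erealHull (rhoB ftil (ThetaZ ftil (BandAB c1 c2))) ∧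
    rhoB ftil (BandAB c0 c1) ⊆ Ioo (0 : EReal) ⊤ ∧
    rhoB ftil (BandAB c1 c2) ⊆ Ioo ⊥ (0 : EReal) := by
  have hcm : CommT ftil := commT_of_comm ftil hcomm
  have hl0 : ∀ p : ℝ×ℝ, p.2 = c0 → (ftil p).2 < c0 := hH1 c0 (by simp)
  have hl1 : ∀ p : ℝ×ℝ, p.2 = c1 → (ftil p).2 < c1 := hH1 c1 (by simp)
  have hl2 : ∀ p : ℝ×ℝ, p.2 = c2 → (ftil p).2 < c2 := hH1 c2 (by simp)
  obtain ⟨z0, hz0⟩ := hTh0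
  obtain ⟨z1, hz1⟩ := hTh1
  have hz0B : z0 ∈ BandAB c0 c1 := theta_subset ftil _ hz0
  have hfz0 : ftil z0 ∈ BandAB c0 c1 := by
    have h := theta_mapsN ftil _ z0 hz0 1
    rw [pow_one] at h
    exact theta_subset ftil _ h
  have hz1B : z1 ∈ BandAB c1 c2 := theta_subset ftil _ hz1
  have hfz1 : ftil z1 ∈ BandAB c1 c2 := by
    have h := theta_mapsN ftil _ z1 hz1 1
    rw [pow_one] at h
    exact theta_subset ftil _ h
  have hg1 : ∀ p : ℝ×ℝ, p.2 ≤ c1 → (ftil p).2 < c1 :=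
    good_of_theta ftil hftc hftc' c1 hl1 z0 hz0B.1 hfz0.1
  have hg2 : ∀ p : ℝ×ℝ, p.2 ≤ c2 → (ftil p).2 < c2 :=
    good_of_theta ftil hftc hftc' c2 hl2 z1 hz1B.1 hfz1.1
  have hg0 : ∀ p : ℝ×ℝ, p.2 ≤ c0 → (ftil p).2 < c0 :=
    good_top ftil hftc hftc' c0 c1 h01 hl0 hg1 hcm
  obtain ⟨α0, β0, hα0, hβ0, hsub0⟩ :=
    band_result ftil hftc hftc' hcm c0 c1 h01.le hg0 hg1 ⟨z0, hz0⟩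
  obtain ⟨α1, β1, hα1, hβ1, hsub1⟩ :=
    band_result ftil hftc hftc' hcm c1 c2 h12.le hg1 hg2 ⟨z1, hz1⟩
  refine ⟨?_, ?_, ?_, ?_⟩
  · intro v hv
    exact Set.mem_iUnion₂.mpr ⟨_, hα0, Set.mem_iUnion₂.mpr ⟨_, hβ0, hsub0 hv⟩⟩
  · intro v hv
    exact Set.mem_iUnion₂.mpr ⟨_, hα1, Set.mem_iUnion₂.mpr ⟨_, hβ1, hsub1 hv⟩⟩
  · intro v hv
    have h := hsub0 hv
    have h0 : (0:EReal) < (α0:EReal) := (hr0 hα0).1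
    exact ⟨lt_of_lt_of_le h0 h.1, lt_of_le_of_lt h.2 (EReal.coe_lt_top β0)⟩
  · intro v hv
    have h := hsub1 hv
    have h0 : (β1:EReal) < (0:EReal) := (hr1 hβ1).2
    exact ⟨lt_of_lt_of_le (EReal.bot_lt_coe α1) h.1, lt_of_le_of_lt h.2 h0⟩
end
end

section
/- Assume hypotheses (H₁), (H₂), (H₃) hold for f̃ and the horizontal lines Γ₀, Γ₁, Γ₂. Then for every real number M > 0 there exists n₀ ∈ ℕ such that for every compact set K̃ ⊆ Ã₀ with diam(p₁(K̃)) ≤ M and for every integer n with |n| ≥ n₀, one has f̃ⁿ(K̃) ∩ K̃ = ∅. -/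
open Set Function Topology

noncomputable section

def auxD (ftil : Equiv.Perm (ℝ × ℝ)) (n : ℕ) (z : ℝ × ℝ) : ℝ := ((ftil ^ n) z).1 - z.1

section AuxC
open Filter
variable (ftil : Equiv.Perm (ℝ × ℝ))

lemma aux_deckT_apply (z : ℝ × ℝ) : deckT z = (z.1 + 1, z.2) := rfl

lemma aux_deckT_symm (z : ℝ × ℝ) : deckT.symm z = (z.1 - 1, z.2) := rfl

lemma aux_step_up (hcomm : ∀ z : ℝ × ℝ, ftil (deckT z) = deckT (ftil z)) (t : ℝ) (z : ℝ × ℝ)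
    (h : ftil (z.1 + t, z.2) = ((ftil z).1 + t, (ftil z).2)) :
    ftil (z.1 + (t+1), z.2) = ((ftil z).1 + (t+1), (ftil z).2) := by
  have e1 : ((z.1 + (t+1) : ℝ), z.2) = deckT (z.1 + t, z.2) := by
    rw [aux_deckT_apply]; simp; ring
  rw [e1, hcomm, h, aux_deckT_apply]; simp; ring

lemma aux_step_down (hcomm : ∀ z : ℝ × ℝ, ftil (deckT z) = deckT (ftil z)) (t : ℝ) (z : ℝ × ℝ)
    (h : ftil (z.1 + t, z.2) = ((ftil z).1 + t, (ftil z).2)) :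
    ftil (z.1 + (t-1), z.2) = ((ftil z).1 + (t-1), (ftil z).2) := by
  have e1 : deckT ((z.1 + (t-1) : ℝ), z.2) = (z.1 + t, z.2) := by
    rw [aux_deckT_apply]; simp; ring
  have h2 := hcomm ((z.1 + (t-1) : ℝ), z.2)
  rw [e1, h] at h2
  have h3 : ftil ((z.1 + (t-1) : ℝ), z.2) = deckT.symm ((ftil z).1 + t, (ftil z).2) := by
    apply deckT.injective; rw [Equiv.apply_symm_apply, ← h2]
  rw [h3, aux_deckT_symm]
  simp; ring

lemma aux_commT (hcomm : ∀ z : ℝ × ℝ, ftil (deckT z) = deckT (ftil z)) :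
    ∀ (k : ℤ) (z : ℝ × ℝ), ftil (z.1 + k, z.2) = ((ftil z).1 + k, (ftil z).2) := by
  intro k
  induction k using Int.induction_on with
  | zero => intro z; simp
  | succ k ih =>
    intro z
    have := aux_step_up ftil hcomm (k : ℝ) z (ih z)
    convert this using 3 <;> push_cast <;> ring
  | pred k ih =>
    intro z
    have := aux_step_down ftil hcomm (-(k:ℝ)) z (by push_cast at ih ⊢; exact ih z)
    convert this using 3 <;> push_cast <;> ring

lemma aux_commT_symm (hcomm : ∀ z : ℝ × ℝ, ftil (deckT z) = deckT (ftil z)) :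
    ∀ (k : ℤ) (z : ℝ × ℝ), ftil.symm (z.1 + k, z.2) = ((ftil.symm z).1 + k, (ftil.symm z).2) := by
  intro k z
  apply ftil.injective
  rw [Equiv.apply_symm_apply, aux_commT ftil hcomm k (ftil.symm z), Equiv.apply_symm_apply]

lemma aux_commTn (hcomm : ∀ z : ℝ × ℝ, ftil (deckT z) = deckT (ftil z)) :
    ∀ (n : ℤ) (k : ℤ) (z : ℝ × ℝ),
      (ftil ^ n) (z.1 + k, z.2) = (((ftil ^ n) z).1 + k, ((ftil ^ n) z).2) := by
  intro n
  induction n using Int.induction_on with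
  | zero => intro k z; simp
  | succ n ih =>
    intro k z
    have e : ftil ^ ((n:ℤ)+1) = ftil * ftil ^ (n:ℤ) := by
      rw [← zpow_one_add, add_comm]
    rw [e]
    simp only [Equiv.Perm.coe_mul, Function.comp_apply]
    rw [ih k z, aux_commT ftil hcomm k]
  | pred n ih =>
    intro k z
    have e : ftil ^ (-(n:ℤ)-1) = ftil⁻¹ * ftil ^ (-(n:ℤ)) := by
      rw [← zpow_neg_one, ← zpow_add]; ring_nf
    rw [e]
    simp only [Equiv.Perm.coe_mul, Function.comp_apply]
    rw [ih k z]
    have : (ftil⁻¹ : Equiv.Perm (ℝ×ℝ)) = ftil.symm := rfl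
    rw [this, aux_commT_symm ftil hcomm k]

lemma aux_contPow (hftc : Continuous ftil) (hftc' : Continuous ftil.symm) :
    ∀ n : ℤ, Continuous ⇑(ftil ^ n) := by
  intro n
  induction n using Int.induction_on with
  | zero => simp only [zpow_zero]; exact continuous_id.congr (fun x => rfl)
  | succ n ih =>
    have e : ftil ^ ((n:ℤ)+1) = ftil * ftil ^ (n:ℤ) := by rw [← zpow_one_add, add_comm]
    rw [e, Equiv.Perm.coe_mul]; exact hftc.comp ih
  | pred n ih =>
    have e : ftil ^ (-(n:ℤ)-1) = ftil⁻¹ * ftil ^ (-(n:ℤ)) := by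
      rw [← zpow_neg_one, ← zpow_add]; ring_nf
    rw [e, Equiv.Perm.coe_mul]
    have : (ftil⁻¹ : Equiv.Perm (ℝ×ℝ)) = ftil.symm := rfl
    rw [this]
    exact hftc'.comp ih

lemma aux_mem_ThetaZ_iff (E : Set (ℝ × ℝ)) (z : ℝ × ℝ) :
    z ∈ ThetaZ ftil E ↔ ∀ n : ℤ, (ftil ^ n) z ∈ E := by
  simp only [ThetaZ, mem_iInter]
  constructor
  · intro h n
    have h2 := h (-n)
    rw [Equiv.image_eq_preimage_symm] at h2
    have e : ((ftil ^ (-n)).symm : Equiv.Perm (ℝ×ℝ)) = ftil ^ n := by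
      have : ((ftil ^ (-n)).symm : Equiv.Perm (ℝ×ℝ)) = (ftil ^ (-n))⁻¹ := rfl
      rw [this, ← zpow_neg, neg_neg]
    rwa [mem_preimage, e] at h2
  · intro h n
    rw [Equiv.image_eq_preimage_symm, mem_preimage]
    have e : ((ftil ^ n).symm : Equiv.Perm (ℝ×ℝ)) = ftil ^ (-n) := by
      have : ((ftil ^ n).symm : Equiv.Perm (ℝ×ℝ)) = (ftil ^ n)⁻¹ := rfl
      rw [this, ← zpow_neg]
    rw [e]; exact h (-n)

lemma aux_Theta_inv (E : Set (ℝ × ℝ)) (z : ℝ × ℝ) (hz : z ∈ ThetaZ ftil E) (k : ℤ) :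
    (ftil ^ k) z ∈ ThetaZ ftil E := by
  rw [aux_mem_ThetaZ_iff] at hz ⊢
  intro n
  have e : (ftil ^ n) ((ftil ^ k) z) = (ftil ^ (n + k)) z := by
    rw [zpow_add, Equiv.Perm.coe_mul]; rfl
  rw [e]; exact hz (n+k)

lemma aux_line_bounds (hftc : Continuous ftil)
    (hcommT : ∀ (k : ℤ) (z : ℝ × ℝ), ftil (z.1 + k, z.2) = ((ftil z).1 + k, (ftil z).2))
    (c : ℝ) (hline : ∀ p : ℝ×ℝ, p.2 = c → (ftil p).2 < c) :
    ∃ mc Mc : ℝ, Mc < c ∧ ∀ x : ℝ, mc ≤ (ftil (x, c)).2 ∧ (ftil (x, c)).2 ≤ Mc := by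
  set φ : ℝ → ℝ := fun x => (ftil (x, c)).2 with hφ
  have hφc : Continuous φ :=
    continuous_snd.comp (hftc.comp (continuous_id.prodMk continuous_const))
  have hper : ∀ (x : ℝ) (k : ℤ), φ (x + k) = φ x := by
    intro x k
    have := hcommT k (x, c)
    simp only [hφ]
    rw [this]
  have hred : ∀ x : ℝ, ∃ y ∈ Icc (0:ℝ) 1, φ x = φ y := by
    intro x
    refine ⟨Int.fract x, ⟨Int.fract_nonneg x, le_of_lt (Int.fract_lt_one x)⟩, ?_⟩
    have hx : x = Int.fract x + (⌊x⌋ : ℤ) := by rw [Int.fract]; ring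
    conv_lhs => rw [hx]
    rw [hper]
  obtain ⟨xM, _, hxM⟩ := (isCompact_Icc (a := (0:ℝ)) (b := 1)).exists_isMaxOn
    (nonempty_Icc.mpr zero_le_one) hφc.continuousOn
  obtain ⟨xm, _, hxm⟩ := (isCompact_Icc (a := (0:ℝ)) (b := 1)).exists_isMinOn
    (nonempty_Icc.mpr zero_le_one) hφc.continuousOn
  refine ⟨φ xm, φ xM, hline (xM, c) rfl, ?_⟩
  intro x
  obtain ⟨y, hy, hxy⟩ := hred x
  show φ xm ≤ φ x ∧ φ x ≤ φ xM
  rw [hxy]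
  exact ⟨hxm hy, hxM hy⟩

lemma aux_slab_upper (hftc' : Continuous ftil.symm)
    (hcommS : ∀ (k : ℤ) (z : ℝ × ℝ), ftil.symm (z.1 + k, z.2) = ((ftil.symm z).1 + k, (ftil.symm z).2))
    (c b B : ℝ) (h : ∀ p : ℝ×ℝ, c ≤ p.2 → b ≤ (ftil p).2 ∧ (ftil p).2 ≤ B) : False := by
  set Kc : Set (ℝ×ℝ) := ftil.symm '' (Icc ((0:ℝ),b) (1,B)) with hKc
  have hKcomp : IsCompact Kc := (isCompact_Icc).image hftc'
  obtain ⟨hi, hhi⟩ := (hKcomp.image continuous_snd).bddAbove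
  set R : ℝ := max 1 (hi - c + 1) with hR
  set p : ℝ×ℝ := ((0:ℝ), c + R) with hp
  have hpc : c ≤ p.2 := by
    have : (1:ℝ) ≤ R := le_max_left _ _
    simp only [hp]; linarith
  obtain ⟨hb1, hb2⟩ := h p hpc
  set q : ℝ×ℝ := ftil p with hq
  set k : ℤ := ⌊q.1⌋ with hk
  have hq'mem : ((q.1 + (-k : ℤ) : ℝ), q.2) ∈ Icc ((0:ℝ),b) (1,B) := by
    constructor
    · constructor
      · simp only [Int.cast_neg]
        have := Int.fract_nonneg q.1
        rw [Int.fract] at this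
        push_cast
        linarith
      · exact hb1
    · constructor
      · simp only [Int.cast_neg]
        have := Int.fract_lt_one q.1
        rw [Int.fract] at this
        push_cast
        linarith
      · exact hb2
  have e : ftil.symm ((q.1 + (-k : ℤ) : ℝ), q.2) = ((ftil.symm q).1 + (-k : ℤ), (ftil.symm q).2) :=
    hcommS (-k) q
  have hsymmq : ftil.symm q = p := ftil.symm_apply_apply p
  have hmem : ((ftil.symm q).1 + ((-k : ℤ) : ℝ), (ftil.symm q).2) ∈ Kc := by
    rw [← e]; exact ⟨_, hq'mem, rfl⟩
  have : ((ftil.symm q).1 + ((-k : ℤ) : ℝ), (ftil.symm q).2).2 ≤ hi :=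
    hhi ⟨_, hmem, rfl⟩
  rw [hsymmq] at this
  have h1 : hi - c + 1 ≤ R := le_max_right _ _
  simp only [hp] at this
  linarith

lemma aux_slab_lower (hftc' : Continuous ftil.symm)
    (hcommS : ∀ (k : ℤ) (z : ℝ × ℝ), ftil.symm (z.1 + k, z.2) = ((ftil.symm z).1 + k, (ftil.symm z).2))
    (c b B : ℝ) (h : ∀ p : ℝ×ℝ, p.2 ≤ c → b ≤ (ftil p).2 ∧ (ftil p).2 ≤ B) : False := by
  set Kc : Set (ℝ×ℝ) := ftil.symm '' (Icc ((0:ℝ),b) (1,B)) with hKc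
  have hKcomp : IsCompact Kc := (isCompact_Icc).image hftc'
  obtain ⟨lo, hlo⟩ := (hKcomp.image continuous_snd).bddBelow
  set R : ℝ := max 1 (c - lo + 1) with hR
  set p : ℝ×ℝ := ((0:ℝ), c - R) with hp
  have hpc : p.2 ≤ c := by
    have : (1:ℝ) ≤ R := le_max_left _ _
    simp only [hp]; linarith
  obtain ⟨hb1, hb2⟩ := h p hpc
  set q : ℝ×ℝ := ftil p with hq
  set k : ℤ := ⌊q.1⌋ with hk
  have hq'mem : ((q.1 + (-k : ℤ) : ℝ), q.2) ∈ Icc ((0:ℝ),b) (1,B) := by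
    constructor
    · constructor
      · simp only [Int.cast_neg]
        have := Int.fract_nonneg q.1
        rw [Int.fract] at this
        push_cast
        linarith
      · exact hb1
    · constructor
      · simp only [Int.cast_neg]
        have := Int.fract_lt_one q.1
        rw [Int.fract] at this
        push_cast
        linarith
      · exact hb2
  have e : ftil.symm ((q.1 + (-k : ℤ) : ℝ), q.2) = ((ftil.symm q).1 + (-k : ℤ), (ftil.symm q).2) :=
    hcommS (-k) q
  have hsymmq : ftil.symm q = p := ftil.symm_apply_apply p
  have hmem : ((ftil.symm q).1 + ((-k : ℤ) : ℝ), (ftil.symm q).2) ∈ Kc := by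
    rw [← e]; exact ⟨_, hq'mem, rfl⟩
  have : lo ≤ ((ftil.symm q).1 + ((-k : ℤ) : ℝ), (ftil.symm q).2).2 :=
    hlo ⟨_, hmem, rfl⟩
  rw [hsymmq] at this
  have h1 : c - lo + 1 ≤ R := le_max_right _ _
  simp only [hp] at this
  linarith

lemma aux_snd_linear : IsLinearMap ℝ (fun q : ℝ×ℝ => q.2) :=
  ⟨fun _ _ => rfl, fun _ _ => rfl⟩

lemma aux_core (hftc' : Continuous ftil.symm)
    (c : ℝ)
    (hlb : ∃ mc Mc : ℝ, Mc < c ∧ ∀ x : ℝ, mc ≤ (ftil (x, c)).2 ∧ (ftil (x, c)).2 ≤ Mc)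
    (hslabU : ∀ b B : ℝ, (∀ p : ℝ×ℝ, c ≤ p.2 → b ≤ (ftil p).2 ∧ (ftil p).2 ≤ B) → False)
    (hanchor : ∃ D, ∀ p : ℝ×ℝ, c < p.2 → D ≤ (ftil p).2) :
    ∀ p : ℝ×ℝ, p.2 ≤ c → (ftil p).2 < c := by
  obtain ⟨mc, Mc, hMclt, hbounds⟩ := hlb
  obtain ⟨D, hD⟩ := hanchor
  set U' : Set (ℝ×ℝ) := {q | c < (ftil.symm q).2} with hU'
  set L' : Set (ℝ×ℝ) := {q | (ftil.symm q).2 < c} with hL'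
  have hU'open : IsOpen U' := isOpen_lt continuous_const (continuous_snd.comp hftc')
  have hL'open : IsOpen L' := isOpen_lt (continuous_snd.comp hftc') continuous_const
  have hdisj : Disjoint U' L' := by
    rw [Set.disjoint_left]
    intro q h1 h2
    simp only [hU', mem_setOf_eq] at h1
    simp only [hL', mem_setOf_eq] at h2
    linarith
  have honline : ∀ q : ℝ×ℝ, (ftil.symm q).2 = c → mc ≤ q.2 ∧ q.2 ≤ Mc := by
    intro q hqc
    have e : q = ftil ((ftil.symm q).1, c) := by
      conv_lhs => rw [← ftil.apply_symm_apply q]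
      congr 1
      exact Prod.ext rfl hqc
    rw [e]
    exact hbounds _
  set V : Set (ℝ×ℝ) := {q : ℝ×ℝ | Mc < q.2} with hV
  have hVpre : IsPreconnected V := (convex_halfSpace_gt aux_snd_linear Mc).isPreconnected
  have hVsub : V ⊆ U' ∪ L' := by
    intro q hq
    rcases lt_trichotomy (ftil.symm q).2 c with h | h | h
    · exact Or.inr h
    · exact absurd (honline q h).2 (not_le.mpr hq)
    · exact Or.inl h
  rcases hVpre.subset_or_subset hU'open hL'open hdisj hVsub with hVU | hVL
  · -- V ⊆ U' : good case, conclude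
    intro p hp
    by_contra hcon
    push_neg at hcon
    rcases lt_or_eq_of_le hcon with h' | h'
    · have : ftil p ∈ V := by
        simp only [hV, mem_setOf_eq]
        calc Mc < c := hMclt
        _ < (ftil p).2 := h'
      have h2 : c < (ftil.symm (ftil p)).2 := hVU this
      rw [ftil.symm_apply_apply] at h2
      exact absurd hp (not_le.mpr h2)
    · -- (ftil p).2 = c exactly : then p would be on image-line? use honline with symm
      -- q.2 = c > Mc so ftil p ∈ V ⊆ U' gives c < p.2, contra.
      have : ftil p ∈ V := by
        simp only [hV, mem_setOf_eq, ← h']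
        exact hMclt
      have h2 : c < (ftil.symm (ftil p)).2 := hVU this
      rw [ftil.symm_apply_apply] at h2
      exact absurd hp (not_le.mpr h2)
  · -- V ⊆ L' : slab contradiction
    exfalso
    apply hslabU (min mc D) Mc
    intro p hp
    rcases eq_or_lt_of_le hp with h' | h'
    · have e : p = (p.1, c) := Prod.ext rfl h'.symm
      rw [e]
      exact ⟨le_trans (min_le_left _ _) (hbounds p.1).1, (hbounds p.1).2⟩
    · constructor
      · exact le_trans (min_le_right _ _) (hD p h')
      · by_contra hcon
        push_neg at hcon
        have hmem : ftil p ∈ V := hcon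
        have h2 : (ftil.symm (ftil p)).2 < c := hVL hmem
        rw [ftil.symm_apply_apply] at h2
        exact absurd h2 (not_lt.mpr (le_of_lt h'))

lemma aux_anchorD (hftc' : Continuous ftil.symm)
    (c : ℝ)
    (hlb : ∃ mc Mc : ℝ, Mc < c ∧ ∀ x : ℝ, mc ≤ (ftil (x, c)).2 ∧ (ftil (x, c)).2 ≤ Mc)
    (hslabL : ∀ b B : ℝ, (∀ p : ℝ×ℝ, p.2 ≤ c → b ≤ (ftil p).2 ∧ (ftil p).2 ≤ B) → False)
    (hz : ∃ z : ℝ×ℝ, c < z.2 ∧ c ≤ (ftil z).2) :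
    ∃ D, ∀ p : ℝ×ℝ, c < p.2 → D ≤ (ftil p).2 := by
  obtain ⟨mc, Mc, hMclt, hbounds⟩ := hlb
  obtain ⟨z, hz1, hz2⟩ := hz
  set U' : Set (ℝ×ℝ) := {q | c < (ftil.symm q).2} with hU'
  set L' : Set (ℝ×ℝ) := {q | (ftil.symm q).2 < c} with hL'
  have hU'open : IsOpen U' := isOpen_lt continuous_const (continuous_snd.comp hftc')
  have hL'open : IsOpen L' := isOpen_lt (continuous_snd.comp hftc') continuous_const
  have hdisj : Disjoint U' L' := by
    rw [Set.disjoint_left]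
    intro q h1 h2
    simp only [hU', mem_setOf_eq] at h1
    simp only [hL', mem_setOf_eq] at h2
    linarith
  have honline : ∀ q : ℝ×ℝ, (ftil.symm q).2 = c → mc ≤ q.2 ∧ q.2 ≤ Mc := by
    intro q hqc
    have e : q = ftil ((ftil.symm q).1, c) := by
      conv_lhs => rw [← ftil.apply_symm_apply q]
      congr 1
      exact Prod.ext rfl hqc
    rw [e]
    exact hbounds _
  set V : Set (ℝ×ℝ) := {q : ℝ×ℝ | Mc < q.2} with hV
  have hVpre : IsPreconnected V := (convex_halfSpace_gt aux_snd_linear Mc).isPreconnected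
  have hVsub : V ⊆ U' ∪ L' := by
    intro q hq
    rcases lt_trichotomy (ftil.symm q).2 c with h | h | h
    · exact Or.inr h
    · exact absurd (honline q h).2 (not_le.mpr hq)
    · exact Or.inl h
  have hfzU : ftil z ∈ U' := by
    simp only [hU', mem_setOf_eq, ftil.symm_apply_apply]
    exact hz1
  have hfzV : ftil z ∈ V := lt_of_lt_of_le hMclt hz2
  have hVU : V ⊆ U' := by
    rcases hVpre.subset_or_subset hU'open hL'open hdisj hVsub with h | h
    · exact h
    · exact absurd (h hfzV) (Set.disjoint_left.mp hdisj hfzU)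
  set W : Set (ℝ×ℝ) := {q : ℝ×ℝ | q.2 < mc} with hW
  have hWpre : IsPreconnected W := (convex_halfSpace_lt aux_snd_linear mc).isPreconnected
  have hWsub : W ⊆ U' ∪ L' := by
    intro q hq
    rcases lt_trichotomy (ftil.symm q).2 c with h | h | h
    · exact Or.inr h
    · exact absurd (honline q h).1 (not_le.mpr hq)
    · exact Or.inl h
  rcases hWpre.subset_or_subset hU'open hL'open hdisj hWsub with hWU | hWL
  · -- W ⊆ U' : slab-lower contradiction
    exfalso
    apply hslabL mc Mc
    intro p hp
    rcases eq_or_lt_of_le hp with h' | h'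
    · have e : p = (p.1, c) := Prod.ext rfl h'
      rw [e]
      exact hbounds p.1
    · have hpL : ftil p ∈ L' := by
        simp only [hL', mem_setOf_eq, ftil.symm_apply_apply]
        exact h'
      constructor
      · by_contra hcon
        push_neg at hcon
        have : ftil p ∈ W := hcon
        exact absurd hpL (Set.disjoint_left.mp hdisj (hWU this))
      · by_contra hcon
        push_neg at hcon
        have : ftil p ∈ V := hcon
        exact absurd hpL (Set.disjoint_left.mp hdisj (hVU this))
  · -- W ⊆ L' : D := mc works
    refine ⟨mc, fun p hp => ?_⟩
    have hpU : ftil p ∈ U' := by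
      simp only [hU', mem_setOf_eq, ftil.symm_apply_apply]
      exact hp
    by_contra hcon
    push_neg at hcon
    have : ftil p ∈ W := hcon
    exact absurd (hWL this) (Set.disjoint_left.mp hdisj hpU)

lemma aux_rot_bound (Th : Set (ℝ×ℝ))
    (hinv : ∀ z ∈ Th, ∀ n : ℕ, (ftil ^ n) z ∈ Th)
    (hr0 : rhoB ftil Th ⊆ Ioo (0 : EReal) ⊤) :
    ∃ a : ℝ, 0 < a ∧ ∃ m0 : ℕ, 1 ≤ m0 ∧ ∀ n : ℕ, m0 ≤ n → ∀ z ∈ Th,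
      a * n ≤ ((ftil ^ n) z).1 - z.1 := by
  by_contra hcon
  push_neg at hcon
  have hsel : ∀ k : ℕ, ∃ nn : ℕ, k+1 ≤ nn ∧ ∃ z ∈ Th,
      ((ftil ^ nn) z).1 - z.1 < (1/(k+1) : ℝ) * nn := by
    intro k
    exact hcon (1/(k+1)) (by positivity) (k+1) (by omega)
  choose nn hnn z hzTh hlt using hsel
  set r : ℕ → EReal := fun k =>
    (((((ftil ^ (nn k)) (z k)).1 - (z k).1) / (nn k) : ℝ) : EReal) with hr
  set F : Filter EReal := Filter.map r atTop with hF
  haveI : F.NeBot := Filter.map_neBot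
  obtain ⟨l, -, hcl⟩ := isCompact_univ.exists_clusterPt (f := F)
    (le_principal_iff.mpr univ_mem)
  have hratio : ∀ k : ℕ, ((((ftil ^ (nn k)) (z k)).1 - (z k).1) / (nn k) : ℝ) < 1/(k+1) := by
    intro k
    have hnpos' : 0 < nn k := by have := hnn k; omega
    have hnpos : (0:ℝ) < (nn k) := by exact_mod_cast hnpos'
    rw [div_lt_iff₀ hnpos]
    calc ((ftil ^ (nn k)) (z k)).1 - (z k).1 < (1/(k+1) : ℝ) * nn k := hlt k
    _ = 1 / (↑k + 1) * ↑(nn k) := by norm_num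
  have claim1 : ∀ m : ℕ, l ≤ (((1:ℝ)/(m+1) : ℝ) : EReal) := by
    intro m
    have hS : r '' (Ici m) ∈ F := Filter.image_mem_map (mem_atTop m)
    have hsub : r '' (Ici m) ⊆ Iic (((1:ℝ)/(m+1) : ℝ) : EReal) := by
      rintro x ⟨k, hk, rfl⟩
      simp only [hr, mem_Iic]
      rw [EReal.coe_le_coe_iff]
      calc ((((ftil ^ (nn k)) (z k)).1 - (z k).1) / (nn k) : ℝ)
          ≤ (1/(k+1) : ℝ) := le_of_lt (hratio k)
        _ ≤ (1/(m+1) : ℝ) := by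
            apply one_div_le_one_div_of_le (by positivity)
            have : (m:ℝ) ≤ k := by exact_mod_cast hk
            linarith
    have hlc : l ∈ closure (r '' (Ici m)) :=
      mem_closure_iff_clusterPt.mpr (hcl.mono (le_principal_iff.mpr hS))
    exact closure_minimal hsub isClosed_Iic hlc
  have claim2 : l ∈ rhoB ftil Th := by
    simp only [rhoB, mem_iInter]
    intro m hm
    have hS : r '' (Ici m) ∈ F := Filter.image_mem_map (mem_atTop m)
    have hsub : r '' (Ici m) ⊆ ⋃ (n : ℕ), ⋃ (_ : m ≤ n),
        {x : EReal | ∃ zt ∈ Th, (ftil ^ n) zt ∈ Th ∧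
          x = (((((ftil ^ n) zt).1 - zt.1) / n : ℝ) : EReal)} := by
      rintro x ⟨k, hk, rfl⟩
      exact mem_iUnion.mpr ⟨nn k, mem_iUnion.mpr
        ⟨(by have := hnn k; have := mem_Ici.mp hk; omega),
         ⟨z k, hzTh k, hinv (z k) (hzTh k) (nn k), rfl⟩⟩⟩
    have hlc : l ∈ closure (r '' (Ici m)) :=
      mem_closure_iff_clusterPt.mpr (hcl.mono (le_principal_iff.mpr hS))
    exact closure_mono hsub hlc
  have hl0 : (0 : EReal) < l := (hr0 claim2).1
  obtain ⟨x, hx1, hx2⟩ := EReal.lt_iff_exists_real_btwn.mp hl0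
  have hx0 : (0:ℝ) < x := by exact_mod_cast hx1
  obtain ⟨m, hm⟩ := exists_nat_gt (1/x)
  have hmx : ((1:ℝ)/(m+1)) < x := by
    rw [div_lt_iff₀ (by positivity)]
    have h1 : 1/x < (m:ℝ)+1 := by linarith
    have := (div_lt_iff₀ hx0).mp h1
    linarith [this]
  have : l < l := by
    calc l ≤ (((1:ℝ)/(m+1) : ℝ) : EReal) := claim1 m
    _ < (x : EReal) := by exact_mod_cast hmx
    _ < l := hx2
  exact absurd this (lt_irrefl l)

lemma aux_contPowN (hftc : Continuous ftil) (hftc' : Continuous ftil.symm) (j : ℕ) :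
    Continuous ⇑(ftil ^ j) := by
  have := aux_contPow ftil hftc hftc' (j : ℤ)
  rwa [zpow_natCast] at this

lemma aux_commTnN (hcomm : ∀ z : ℝ × ℝ, ftil (deckT z) = deckT (ftil z)) (k : ℤ) (j : ℕ) (z : ℝ × ℝ) :
    (ftil ^ j) (z.1 + k, z.2) = (((ftil ^ j) z).1 + k, ((ftil ^ j) z).2) := by
  have := aux_commTn ftil hcomm (j:ℤ) k z
  rwa [zpow_natCast] at this

lemma aux_d_cont (hftc : Continuous ftil) (hftc' : Continuous ftil.symm) (j : ℕ) :
    Continuous (auxD ftil j) :=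
  (continuous_fst.comp (aux_contPowN ftil hftc hftc' j)).sub continuous_fst

lemma aux_d_add (i j : ℕ) (z : ℝ × ℝ) :
    auxD ftil (i + j) z = auxD ftil i z + auxD ftil j ((ftil ^ i) z) := by
  have e : ftil ^ (i + j) = ftil ^ j * ftil ^ i := by rw [add_comm, pow_add]
  simp only [auxD, e, Equiv.Perm.coe_mul, Function.comp_apply]
  ring

lemma aux_d_translate (hcomm : ∀ z : ℝ × ℝ, ftil (deckT z) = deckT (ftil z)) (k : ℤ) (j : ℕ) (z : ℝ × ℝ) :
    auxD ftil j (z.1 + k, z.2) = auxD ftil j z := by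
  simp only [auxD, aux_commTnN ftil hcomm k j z]
  ring

lemma aux_zpow_nat_apply (j : ℤ) (s : ℕ) (z : ℝ × ℝ) (h : 0 ≤ j + s) :
    (ftil ^ j) ((ftil ^ s) z) = (ftil ^ ((j + s).toNat)) z := by
  have e1 : (ftil ^ ((j + s).toNat) : Equiv.Perm (ℝ×ℝ)) = ftil ^ ((j:ℤ) + s) := by
    rw [← zpow_natCast, Int.toNat_of_nonneg h]
  rw [e1, zpow_add, Equiv.Perm.coe_mul, Function.comp_apply, zpow_natCast]

lemma aux_band_bound (hftc : Continuous ftil) (hftc' : Continuous ftil.symm)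
    (hcomm : ∀ z : ℝ × ℝ, ftil (deckT z) = deckT (ftil z)) (c0 c1 : ℝ) (J : ℕ) :
    ∃ C : ℝ, 0 ≤ C ∧ ∀ j ≤ J, ∀ z ∈ BandAB c0 c1, |auxD ftil j z| ≤ C := by
  have single : ∀ j : ℕ, ∃ C : ℝ, 0 ≤ C ∧ ∀ z ∈ BandAB c0 c1, |auxD ftil j z| ≤ C := by
    intro j
    obtain ⟨C, hC⟩ := (isCompact_Icc (a := ((0:ℝ),c1)) (b := (1,c0))).exists_bound_of_continuousOn
      (aux_d_cont ftil hftc hftc' j).continuousOn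
    refine ⟨max C 0, le_max_right _ _, ?_⟩
    intro z hz
    have hk : ((Int.fract z.1 : ℝ), z.2) ∈ Icc ((0:ℝ),c1) (1,c0) :=
      ⟨⟨Int.fract_nonneg z.1, hz.1⟩, ⟨le_of_lt (Int.fract_lt_one z.1), hz.2⟩⟩
    have heq : ((Int.fract z.1 : ℝ), z.2) = ((z.1 + ((-⌊z.1⌋ : ℤ) : ℝ)), z.2) := by
      rw [Int.fract]; push_cast; ring_nf
    have hb := hC _ hk
    rw [heq, aux_d_translate ftil hcomm (-⌊z.1⌋) j z, Real.norm_eq_abs] at hb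
    exact le_trans hb (le_max_left _ _)
  induction J with
  | zero =>
    obtain ⟨C, hC0, hC⟩ := single 0
    exact ⟨C, hC0, fun j hj z hz => by
      interval_cases j
      exact hC z hz⟩
  | succ J ih =>
    obtain ⟨C, hC0, hC⟩ := ih
    obtain ⟨C', hC'0, hC'⟩ := single (J+1)
    refine ⟨max C C', le_trans hC0 (le_max_left _ _), ?_⟩
    intro j hj z hz
    rcases Nat.lt_or_ge j (J+1) with h | h
    · exact le_trans (hC j (by omega) z hz) (le_max_left _ _)
    · have : j = J+1 := by omega
      subst this
      exact le_trans (hC' z hz) (le_max_right _ _)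

lemma aux_inband
    (c0 c1 : ℝ)
    (inv0 : ∀ p : ℝ×ℝ, p.2 ≤ c0 → (ftil p).2 < c0)
    (inv1 : ∀ p : ℝ×ℝ, p.2 ≤ c1 → (ftil p).2 < c1) :
    ∀ (n : ℕ) (z : ℝ×ℝ), z ∈ BandAB c0 c1 → (ftil ^ n) z ∈ BandAB c0 c1 →
      ∀ j ≤ n, (ftil ^ j) z ∈ BandAB c0 c1 := by
  have up : ∀ (j : ℕ) (z : ℝ×ℝ), z.2 ≤ c0 → ((ftil ^ j) z).2 ≤ c0 := by
    intro j
    induction j with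
    | zero => intro z hz; simpa using hz
    | succ j ih =>
      intro z hz
      have e : (ftil ^ (j+1)) z = (ftil ^ j) (ftil z) := by
        rw [pow_succ]; rfl
      rw [e]
      exact ih (ftil z) (le_of_lt (inv0 z hz))
  have down : ∀ (j : ℕ) (z : ℝ×ℝ), z.2 < c1 → ((ftil ^ j) z).2 < c1 := by
    intro j
    induction j with
    | zero => intro z hz; simpa using hz
    | succ j ih =>
      intro z hz
      have e : (ftil ^ (j+1)) z = (ftil ^ j) (ftil z) := by
        rw [pow_succ]; rfl
      rw [e]
      exact ih (ftil z) (inv1 z (le_of_lt hz))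
  intro n z hz hzn j hj
  constructor
  · -- c1 ≤ snd
    by_contra hcon
    push_neg at hcon
    have e : (ftil ^ n) z = (ftil ^ (n - j)) ((ftil ^ j) z) := by
      rw [← Equiv.Perm.mul_apply, ← pow_add]
      congr 2
      omega
    have := down (n - j) ((ftil ^ j) z) hcon
    rw [← e] at this
    exact absurd hzn.1 (not_le.mpr this)
  · exact up j z hz.2

lemma aux_no_return
    (c0 c1 : ℝ) (a : ℝ) (ha : 0 < a) (m0 N0 : ℕ) (hm0 : 1 ≤ m0) (C : ℝ) (hC0 : 0 ≤ C)
    (hseg : ∀ (n : ℕ) (z : ℝ×ℝ), z ∈ BandAB c0 c1 → (ftil ^ n) z ∈ BandAB c0 c1 →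
      ∀ j ≤ n, (ftil ^ j) z ∈ BandAB c0 c1)
    (hN0 : ∀ z : ℝ×ℝ, (∀ j : ℤ, |j| ≤ (N0:ℤ) → (ftil ^ j) z ∈ BandAB c0 c1) →
      a * m0 / 2 ≤ auxD ftil m0 z)
    (hC : ∀ j ≤ N0 + m0, ∀ z ∈ BandAB c0 c1, |auxD ftil j z| ≤ C)
    (M : ℝ) :
    ∃ n0 : ℕ, ∀ (n : ℕ) (z : ℝ×ℝ), n0 ≤ n → z ∈ BandAB c0 c1 →
      (ftil ^ n) z ∈ BandAB c0 c1 → M < auxD ftil n z := by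
  set e : ℝ := a * m0 / 2 with he
  have he0 : 0 < e := by
    have : (1:ℝ) ≤ (m0:ℝ) := by exact_mod_cast hm0
    rw [he]; positivity
  set t0 : ℕ := ⌈(M + 2*C) / e⌉₊ + 1 with ht0
  refine ⟨2*N0 + m0*(t0+1), ?_⟩
  intro n z hn hzA hznA
  have hmem : ∀ j ≤ n, (ftil ^ j) z ∈ BandAB c0 c1 := hseg n z hzA hznA
  -- blocks
  have blocks : ∀ t : ℕ, 2*N0 + t*m0 ≤ n →
      -C + t * e ≤ auxD ftil (N0 + t*m0) z := by
    intro t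
    induction t with
    | zero =>
      intro h
      have h1 := hC N0 (by omega) z hzA
      simp only [Nat.zero_mul, Nat.add_zero, Nat.cast_zero, zero_mul, add_zero]
      linarith [neg_abs_le (auxD ftil N0 z), h1]
    | succ t ih =>
      intro h
      have hmul : (t+1)*m0 = t*m0 + m0 := by ring
      have h' : 2*N0 + t*m0 ≤ n := by omega
      have ihv := ih h'
      have e1 : N0 + (t+1)*m0 = (N0 + t*m0) + m0 := by ring
      rw [e1, aux_d_add]
      set w : ℝ×ℝ := (ftil ^ (N0 + t*m0)) z with hw
      have hwind : ∀ j : ℤ, |j| ≤ (N0:ℤ) → (ftil ^ j) w ∈ BandAB c0 c1 := by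
        intro j hj
        have hj1 : -(N0:ℤ) ≤ j := neg_le_of_abs_le hj
        have hj2 : j ≤ (N0:ℤ) := le_of_abs_le hj
        have hpos : 0 ≤ j + (N0 + t*m0 : ℕ) := by
          push_cast
          omega
        rw [hw, aux_zpow_nat_apply ftil j (N0 + t*m0) z hpos]
        apply hmem
        have hmul : (t+1)*m0 = t*m0 + m0 := by ring
        omega
      have h2 := hN0 w hwind
      linarith [ihv, h2, (by push_cast; ring : ((t+1 : ℕ) : ℝ) * e = (t:ℝ)*e + e)]
  -- decompose n
  have hm0pos : 0 < m0 := hm0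
  set t : ℕ := (n - 2*N0) / m0 with ht
  set s : ℕ := (n - 2*N0) % m0 with hs
  have hdm : m0 * t + s = n - 2*N0 := Nat.div_add_mod (n - 2*N0) m0
  have e2 : m0 * t = t * m0 := Nat.mul_comm _ _
  have e3 : (t0+1)*m0 = m0*(t0+1) := Nat.mul_comm _ _
  have hslt : s < m0 := Nat.mod_lt _ hm0pos
  have hn2 : 2*N0 ≤ n := by omega
  have hnt : n = (N0 + t*m0) + (N0 + s) := by omega
  have htbig : t0 + 1 ≤ t := by
    have h1 : m0*(t0+1) ≤ n - 2*N0 := by omega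
    rw [ht]
    exact (Nat.le_div_iff_mul_le hm0pos).mpr (by omega)
  have hblocks := blocks t (by omega)
  have htail : |auxD ftil (N0 + s) ((ftil ^ (N0 + t*m0)) z)| ≤ C := by
    apply hC (N0 + s) (by omega)
    apply hmem
    omega
  have hdn : auxD ftil n z = auxD ftil (N0 + t*m0) z + auxD ftil (N0+s) ((ftil ^ (N0 + t*m0)) z) := by
    conv_lhs => rw [hnt]
    exact aux_d_add ftil _ _ z
  have ht0e : (M + 2*C) / e ≤ (⌈(M + 2*C) / e⌉₊ : ℝ) := Nat.le_ceil _
  have htR : ((t0 + 1 : ℕ) : ℝ) ≤ (t : ℝ) := by exact_mod_cast htbig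
  have hte : (M + 2*C) < (t:ℝ) * e := by
    have h1 : ((t0:ℕ):ℝ) ≥ (M + 2*C)/e + 1 := by
      rw [ht0]
      push_cast
      linarith
    have h2 : (t:ℝ) ≥ (M + 2*C)/e + 2 := by
      push_cast at htR
      linarith
    have h3 : ((M + 2*C)/e) * e = M + 2*C := div_mul_cancel₀ _ (ne_of_gt he0)
    nlinarith
  rw [hdn]
  have := neg_abs_le (auxD ftil (N0+s) ((ftil ^ (N0 + t*m0)) z))
  linarith

lemma aux_exists_N0 (hftc : Continuous ftil) (hftc' : Continuous ftil.symm)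
    (hcomm : ∀ z : ℝ × ℝ, ftil (deckT z) = deckT (ftil z)) (c0 c1 : ℝ) (a : ℝ) (ha : 0 < a) (m0 : ℕ) (hm0 : 1 ≤ m0)
    (hdrift : ∀ z ∈ ThetaZ ftil (BandAB c0 c1), a * m0 ≤ auxD ftil m0 z) :
    ∃ N0 : ℕ, ∀ z : ℝ×ℝ, (∀ j : ℤ, |j| ≤ (N0:ℤ) → (ftil ^ j) z ∈ BandAB c0 c1) →
      a * m0 / 2 ≤ auxD ftil m0 z := by
  by_contra hcon
  push_neg at hcon
  have hsel : ∀ N : ℕ, ∃ z : ℝ×ℝ,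
      (∀ j : ℤ, |j| ≤ (N:ℤ) → (ftil ^ j) z ∈ BandAB c0 c1) ∧ auxD ftil m0 z < a * m0 / 2 := by
    intro N
    obtain ⟨z, h1, h2⟩ := hcon N
    exact ⟨z, h1, h2⟩
  choose zz hwin hlt using hsel
  -- normalize first coordinates
  set w : ℕ → ℝ×ℝ := fun N => ((zz N).1 + ((-⌊(zz N).1⌋ : ℤ) : ℝ), (zz N).2) with hwdef
  have hwA : ∀ N, zz N ∈ BandAB c0 c1 := by
    intro N
    have := hwin N 0 (by simp)
    simpa using this
  have hwQ : ∀ N : ℕ, w N ∈ Icc ((0:ℝ),c1) (1,c0) := by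
    intro N
    have h1 : (zz N).1 + ((-⌊(zz N).1⌋ : ℤ) : ℝ) = Int.fract (zz N).1 := by
      rw [Int.fract]; push_cast; ring
    refine ⟨⟨?_, (hwA N).1⟩, ⟨?_, (hwA N).2⟩⟩
    · show (0:ℝ) ≤ (zz N).1 + ((-⌊(zz N).1⌋ : ℤ) : ℝ)
      rw [h1]; exact Int.fract_nonneg _
    · show (zz N).1 + ((-⌊(zz N).1⌋ : ℤ) : ℝ) ≤ 1
      rw [h1]; exact le_of_lt (Int.fract_lt_one _)
  have hwwin : ∀ N : ℕ, ∀ j : ℤ, |j| ≤ (N:ℤ) → (ftil ^ j) (w N) ∈ BandAB c0 c1 := by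
    intro N j hj
    have e := aux_commTn ftil hcomm j (-⌊(zz N).1⌋) (zz N)
    show (ftil ^ j) ((zz N).1 + ((-⌊(zz N).1⌋ : ℤ) : ℝ), (zz N).2) ∈ BandAB c0 c1
    rw [e]
    exact ⟨((hwin N j hj).1 : c1 ≤ _), ((hwin N j hj).2 : _ ≤ c0)⟩
  have hwlt : ∀ N : ℕ, auxD ftil m0 (w N) < a * m0 / 2 := by
    intro N
    show auxD ftil m0 ((zz N).1 + ((-⌊(zz N).1⌋ : ℤ) : ℝ), (zz N).2) < a * m0 / 2
    rw [aux_d_translate ftil hcomm (-⌊(zz N).1⌋) m0 (zz N)]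
    exact hlt N
  obtain ⟨wst, hwstQ, φ, hφ, htend⟩ :=
    (isCompact_Icc (a := ((0:ℝ),c1)) (b := (1,c0))).tendsto_subseq hwQ
  have hAclosed : IsClosed (BandAB c0 c1) := by
    have : BandAB c0 c1 = {p : ℝ×ℝ | c1 ≤ p.2} ∩ {p : ℝ×ℝ | p.2 ≤ c0} := rfl
    rw [this]
    exact (isClosed_le continuous_const continuous_snd).inter
      (isClosed_le continuous_snd continuous_const)
  have hwstTh : wst ∈ ThetaZ ftil (BandAB c0 c1) := by
    rw [aux_mem_ThetaZ_iff]
    intro j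
    have htend2 : Tendsto (fun k => (ftil ^ j) (w (φ k))) atTop (𝓝 ((ftil ^ j) wst)) :=
      ((aux_contPow ftil hftc hftc' j).tendsto wst).comp htend
    apply hAclosed.mem_of_tendsto htend2
    filter_upwards [eventually_ge_atTop (j.natAbs)] with k hk
    apply hwwin (φ k) j
    have h1 : (j.natAbs : ℤ) = |j| := (Int.abs_eq_natAbs j).symm
    have h2 : k ≤ φ k := hφ.le_apply
    calc |j| = (j.natAbs : ℤ) := h1.symm
    _ ≤ (k : ℤ) := by exact_mod_cast hk
    _ ≤ (φ k : ℤ) := by exact_mod_cast h2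
  have hlim : auxD ftil m0 wst ≤ a * m0 / 2 := by
    have htend3 : Tendsto (fun k => auxD ftil m0 (w (φ k))) atTop (𝓝 (auxD ftil m0 wst)) :=
      ((aux_d_cont ftil hftc hftc' m0).tendsto wst).comp htend
    apply le_of_tendsto htend3
    filter_upwards with k
    exact le_of_lt (hwlt (φ k))
  have hdr := hdrift wst hwstTh
  have hm0R : (1:ℝ) ≤ (m0:ℝ) := by exact_mod_cast hm0
  nlinarith

end AuxC

/-- **Lemma 6.8.** Under (H₁)–(H₃), for every `M > 0` there is `n₀` such that every compact
`K̃ ⊆ Ã₀` of horizontal diameter at most `M` is disjoint from its `n`-th iterate whenever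
`|n| ≥ n₀`. -/
theorem iterates_eventually_disjoint
    (ftil : Equiv.Perm (ℝ × ℝ)) (hftc : Continuous ftil) (hftc' : Continuous ftil.symm)
    (hfI : IsotopicToIdP ftil)
    (hcomm : ∀ z : ℝ × ℝ, ftil (deckT z) = deckT (ftil z))
    (c0 c1 c2 : ℝ) (h01 : c1 < c0) (h12 : c2 < c1)
    (hH1 : ∀ c ∈ ({c0, c1, c2} : Set ℝ), ∀ p : ℝ × ℝ, p.2 = c → (ftil p).2 < c)
    (hH2 : ∀ n : ℕ, 1 ≤ n → ∃ p : ℝ × ℝ, p.2 = c0 ∧ ((ftil ^ n) p).2 = c2)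
    (hTh0 : (ThetaZ ftil (BandAB c0 c1)).Nonempty)
    (hTh1 : (ThetaZ ftil (BandAB c1 c2)).Nonempty)
    (hr0 : rhoB ftil (ThetaZ ftil (BandAB c0 c1)) ⊆ Ioo (0 : EReal) ⊤)
    (hr1 : rhoB ftil (ThetaZ ftil (BandAB c1 c2)) ⊆ Ioo ⊥ (0 : EReal)) :
    ∀ M : ℝ, 0 < M → ∃ n0 : ℕ, ∀ K : Set (ℝ × ℝ), IsCompact K → K ⊆ BandAB c0 c1 →
      (∀ u ∈ K, ∀ v ∈ K, |u.1 - v.1| ≤ M) →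
      ∀ n : ℤ, (n0 : ℤ) ≤ |n| → ((ftil ^ n) '' K) ∩ K = ∅ := by
  intro M hM
  have hline0 : ∀ p : ℝ×ℝ, p.2 = c0 → (ftil p).2 < c0 := fun p hp =>
    hH1 c0 (by simp) p hp
  have hline1 : ∀ p : ℝ×ℝ, p.2 = c1 → (ftil p).2 < c1 := fun p hp =>
    hH1 c1 (by simp) p hp
  have hlb0 := aux_line_bounds ftil hftc (aux_commT ftil hcomm) c0 hline0
  have hlb1 := aux_line_bounds ftil hftc (aux_commT ftil hcomm) c1 hline1
  have hslabU : ∀ c b B : ℝ, (∀ p : ℝ×ℝ, c ≤ p.2 → b ≤ (ftil p).2 ∧ (ftil p).2 ≤ B) → False :=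
    fun c b B h => aux_slab_upper ftil hftc' (aux_commT_symm ftil hcomm) c b B h
  have hslabL : ∀ c b B : ℝ, (∀ p : ℝ×ℝ, p.2 ≤ c → b ≤ (ftil p).2 ∧ (ftil p).2 ≤ B) → False :=
    fun c b B h => aux_slab_lower ftil hftc' (aux_commT_symm ftil hcomm) c b B h
  -- anchor point on the invariant set
  obtain ⟨z0, hz0⟩ := hTh0
  have hz0A : z0 ∈ BandAB c0 c1 := by
    have := (aux_mem_ThetaZ_iff ftil _ z0).mp hz0 0
    simpa using this
  have hz1A : ftil z0 ∈ BandAB c0 c1 := by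
    have := (aux_mem_ThetaZ_iff ftil _ z0).mp hz0 1
    rwa [zpow_one] at this
  have hz0gt : c1 < z0.2 := by
    rcases eq_or_lt_of_le hz0A.1 with h | h
    · exact absurd hz1A.1 (not_le.mpr (hline1 z0 h.symm))
    · exact h
  have hanch1 : ∃ z : ℝ×ℝ, c1 < z.2 ∧ c1 ≤ (ftil z).2 := ⟨z0, hz0gt, hz1A.1⟩
  have hDex1 := aux_anchorD ftil hftc' c1 hlb1 (hslabL c1) hanch1
  have inv1 : ∀ p : ℝ×ℝ, p.2 ≤ c1 → (ftil p).2 < c1 :=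
    aux_core ftil hftc' c1 hlb1 (hslabU c1) hDex1
  obtain ⟨D1, hD1⟩ := hDex1
  have hDex0 : ∃ D, ∀ p : ℝ×ℝ, c0 < p.2 → D ≤ (ftil p).2 :=
    ⟨D1, fun p hp => hD1 p (lt_trans h01 hp)⟩
  have inv0 : ∀ p : ℝ×ℝ, p.2 ≤ c0 → (ftil p).2 < c0 :=
    aux_core ftil hftc' c0 hlb0 (hslabU c0) hDex0
  -- uniform positive drift on the invariant set
  have hinvTh : ∀ z ∈ ThetaZ ftil (BandAB c0 c1), ∀ n : ℕ,
      (ftil ^ n) z ∈ ThetaZ ftil (BandAB c0 c1) := by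
    intro z hz n
    have := aux_Theta_inv ftil (BandAB c0 c1) z hz (n : ℤ)
    rwa [zpow_natCast] at this
  obtain ⟨a, ha, m0, hm0, hdrift⟩ := aux_rot_bound ftil (ThetaZ ftil (BandAB c0 c1)) hinvTh hr0
  have hdrift0 : ∀ z ∈ ThetaZ ftil (BandAB c0 c1), a * m0 ≤ auxD ftil m0 z :=
    fun z hz => hdrift m0 (le_refl m0) z hz
  obtain ⟨N0, hN0⟩ := aux_exists_N0 ftil hftc hftc' hcomm c0 c1 a ha m0 hm0 hdrift0
  obtain ⟨C, hC0, hC⟩ := aux_band_bound ftil hftc hftc' hcomm c0 c1 (N0 + m0)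
  have hseg := aux_inband ftil c0 c1 inv0 inv1
  obtain ⟨n0, hn0⟩ := aux_no_return ftil c0 c1 a ha m0 N0 hm0 C hC0 hseg hN0 hC M
  refine ⟨n0, ?_⟩
  intro K _hK hKA hwidth n hn
  rw [Set.eq_empty_iff_forall_notMem]
  rintro q ⟨⟨z, hzK, hfz⟩, hqK⟩
  rcases le_or_gt 0 n with hpos | hneg
  · set n' : ℕ := n.toNat with hn'def
    have hn' : n0 ≤ n' := by
      rw [Int.abs_eq_natAbs] at hn
      omega
    have hcast : (ftil ^ n : Equiv.Perm (ℝ×ℝ)) = ftil ^ n' := by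
      rw [← zpow_natCast, hn'def, Int.toNat_of_nonneg hpos]
    have happ : (ftil ^ n') z = q := by rw [← hcast]; exact hfz
    have hqA : (ftil ^ n') z ∈ BandAB c0 c1 := by rw [happ]; exact hKA hqK
    have h1 := hn0 n' z hn' (hKA hzK) hqA
    have h2 : auxD ftil n' z = q.1 - z.1 := by rw [auxD, happ]
    have h3 := hwidth q hqK z hzK
    rw [h2] at h1
    have h4 := le_abs_self (q.1 - z.1)
    linarith
  · set m' : ℕ := (-n).toNat with hm'def
    have hm' : n0 ≤ m' := by
      rw [Int.abs_eq_natAbs] at hn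
      omega
    have hcast : (ftil ^ (-n) : Equiv.Perm (ℝ×ℝ)) = ftil ^ m' := by
      rw [← zpow_natCast, hm'def, Int.toNat_of_nonneg (by omega)]
    have happ : (ftil ^ m') q = z := by
      rw [← hcast, ← hfz, ← Equiv.Perm.mul_apply, ← zpow_add]
      simp
    have hzA : (ftil ^ m') q ∈ BandAB c0 c1 := by rw [happ]; exact hKA hzK
    have h1 := hn0 m' q hm' (hKA hqK) hzA
    have h2 : auxD ftil m' q = z.1 - q.1 := by rw [auxD, happ]
    have h3 := hwidth z hzK q hqK
    rw [h2] at h1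
    have h4 := le_abs_self (z.1 - q.1)
    linarith
end
end
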